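/- arXiv:1509.02803 — 3 statements merged into one kernel-verified Lean document; each statement's English description precedes it below -/
import Mathlib

section
/- There is an absolute constant c > 0 with the following property. Let a < b, let A and B be bounded self-adjoint operators on a complex Hilbert space whose spectra are contained in [a, b] with A ≠ B, and let f : [a, b] → ℝ be continuous with modulus of continuity ω_f(δ) := sup{|f(x) − f(y)| : x, y ∈ [a, b], |x − y| ≤ δ}. Then ‖f(A) − f(B)‖ ≤ c·log(e·(b − a)/‖A − B‖)·ω_f(‖A − B‖). (Since the spectra of A and B lie in [a, b], one has ‖A − B‖ ≤ b − a, so the logarithmic factor is at least 1.) -/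
namespace OpLogMod
noncomputable section
open Finset Filter
open Finset

/-! ### Hat functions -/

def hat (t : ℝ) : ℝ := max (1 - |t|) 0

lemma hat_nonneg (t : ℝ) : 0 ≤ hat t := le_max_right _ _

lemma hat_le_one (t : ℝ) : hat t ≤ 1 :=
  max_le (by linarith [abs_nonneg t]) zero_le_one

lemma hat_continuous : Continuous hat :=
  (continuous_const.sub continuous_abs).max continuous_const

lemma hat_eq_zero {t : ℝ} (h : 1 ≤ |t|) : hat t = 0 :=
  max_eq_right (by linarith)

lemma abs_lt_one_of_hat_ne_zero {t : ℝ} (h : hat t ≠ 0) : |t| < 1 := by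
  by_contra hc
  exact h (hat_eq_zero (not_lt.mp hc))

lemma hat_add_hat_le (x : ℝ) : hat x + hat (x - 1) ≤ 1 := by
  rcases le_or_gt x 0 with h | h
  · have : hat (x - 1) = 0 := hat_eq_zero (by rw [abs_of_nonpos (by linarith)]; linarith)
    rw [this]; simpa using hat_le_one x
  · rcases le_or_gt 1 x with h1 | h1
    · have : hat x = 0 := hat_eq_zero (by rwa [abs_of_pos h])
      rw [this]; simpa using hat_le_one (x - 1)
    · have e1 : hat x = 1 - x := by
        rw [hat, abs_of_pos h, max_eq_left (by linarith)]
      have e2 : hat (x - 1) = x := by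
        rw [hat, abs_of_nonpos (by linarith), max_eq_left (by linarith)]; ring
      rw [e1, e2]; linarith

lemma hat_sum_eq_one (n : ℕ) (s : ℝ) (h0 : 0 ≤ s) (hn : s ≤ n) :
    ∑ i ∈ range (n + 1), hat (s - i) = 1 := by
  induction n with
  | zero =>
    have : s = 0 := le_antisymm (by exact_mod_cast hn) h0
    simp [this, hat]
  | succ n ih =>
    push_cast at hn
    rw [Finset.sum_range_succ]
    push_cast
    rcases le_or_gt s n with h | h
    · rw [ih h]
      have : hat (s - (n + 1)) = 0 := by
        apply hat_eq_zero
        rw [abs_of_nonpos (by linarith)]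
        linarith
      rw [this]; ring
    · rw [Finset.sum_range_succ]
      push_cast
      have hz : ∑ i ∈ range n, hat (s - i) = 0 := by
        apply Finset.sum_eq_zero
        intro i hi
        have h2 : i + 1 ≤ n := Finset.mem_range.mp hi
        have hi' : (i : ℝ) + 1 ≤ (n : ℝ) := by exact_mod_cast h2
        apply hat_eq_zero
        rw [abs_of_pos (by linarith)]
        linarith
      have e1 : hat (s - n) = 1 - (s - n) := by
        rw [hat, abs_of_pos (by linarith), max_eq_left (by linarith)]
      have e2 : hat (s - (n + 1)) = 1 - ((n + 1) - s) := by
        rw [hat, abs_of_nonpos (by linarith), max_eq_left (by linarith)]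
        ring
      rw [hz, e1, e2]; ring

lemma hat_sum_le_one (n : ℕ) (s : ℝ) : ∑ i ∈ range (n + 1), hat (s - i) ≤ 1 := by
  induction n with
  | zero => simpa using hat_le_one s
  | succ n ih =>
    rcases le_or_gt s n with h | h
    · rw [Finset.sum_range_succ]
      push_cast
      have : hat (s - (n + 1)) = 0 := by
        apply hat_eq_zero
        rw [abs_of_nonpos (by linarith)]
        linarith
      rw [this]
      simpa using ih
    · rw [Finset.sum_range_succ, Finset.sum_range_succ]
      push_cast
      have hz : ∑ i ∈ range n, hat (s - i) = 0 := by
        apply Finset.sum_eq_zero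
        intro i hi
        have h2 : i + 1 ≤ n := Finset.mem_range.mp hi
        have hi' : (i : ℝ) + 1 ≤ (n : ℝ) := by exact_mod_cast h2
        apply hat_eq_zero
        rw [abs_of_pos (by linarith)]
        linarith
      rw [hz]
      have := hat_add_hat_le (s - n)
      have heq : s - n - 1 = s - (n + 1) := by ring
      rw [heq] at this
      linarith

/-! ### Modulus of continuity -/

section Modulus

variable {f : ℝ → ℝ} {a b δ : ℝ}

def modSet (f : ℝ → ℝ) (a b δ : ℝ) : Set ℝ :=
  {d : ℝ | ∃ x ∈ Set.Icc a b, ∃ y ∈ Set.Icc a b, |x - y| ≤ δ ∧ d = |f x - f y|}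

lemma bddAbove_modSet (hf : ContinuousOn f (Set.Icc a b)) : BddAbove (modSet f a b δ) := by
  obtain ⟨C, hC⟩ := isCompact_Icc.exists_bound_of_continuousOn hf
  refine ⟨2 * C, ?_⟩
  rintro d ⟨x, hx, y, hy, -, rfl⟩
  calc |f x - f y| ≤ |f x| + |f y| := by
        simpa [sub_eq_add_neg, abs_neg] using abs_add_le (f x) (-(f y))
    _ ≤ C + C := add_le_add (hC x hx) (hC y hy)
    _ = 2 * C := by ring

lemma zero_mem_modSet (hab : a ≤ b) (hδ : 0 ≤ δ) : (0:ℝ) ∈ modSet f a b δ :=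
  ⟨a, ⟨le_refl a, hab⟩, a, ⟨le_refl a, hab⟩, by simpa using hδ, by simp⟩

lemma modulus_nonneg (hf : ContinuousOn f (Set.Icc a b)) (hab : a ≤ b) (hδ : 0 ≤ δ) :
    0 ≤ sSup (modSet f a b δ) :=
  le_csSup (bddAbove_modSet hf) (zero_mem_modSet hab hδ)

lemma modulus_step (hf : ContinuousOn f (Set.Icc a b)) {p q : ℝ}
    (hp : p ∈ Set.Icc a b) (hq : q ∈ Set.Icc a b) (h : |p - q| ≤ δ) :
    |f p - f q| ≤ sSup (modSet f a b δ) :=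
  le_csSup (bddAbove_modSet hf) ⟨p, hp, q, hq, h, rfl⟩

lemma modulus_chain_aux (hf : ContinuousOn f (Set.Icc a b)) (hδ : 0 ≤ δ) (K : ℕ) :
    ∀ p q : ℝ, p ∈ Set.Icc a b → q ∈ Set.Icc a b → p ≤ q → |p - q| ≤ K * δ →
      |f p - f q| ≤ K * sSup (modSet f a b δ) := by
  induction K with
  | zero =>
    intro p q hp hq hpq h
    have h0 : |p - q| ≤ 0 := by simpa using h
    have hpq' : p = q := by
      rcases abs_le.mp h0 with ⟨h1, h2⟩
      linarith
    simp [hpq']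
  | succ K ih =>
    intro p q hp hq hpq h
    push_cast at h ⊢
    set r := max (q - δ) p with hr
    have hrq : r ≤ q := max_le (by linarith) hpq
    have hpr : p ≤ r := le_max_right _ _
    have hrIcc : r ∈ Set.Icc a b := ⟨le_trans hp.1 hpr, le_trans hrq hq.2⟩
    have habs : q - p ≤ (K + 1) * δ := by
      rcases abs_le.mp h with ⟨h1, _⟩
      linarith
    have h1 : |p - r| ≤ K * δ := by
      rw [abs_of_nonpos (by linarith)]
      rcases max_cases (q - δ) p with ⟨he, _⟩ | ⟨he, _⟩
      · rw [hr, he]; linarith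
      · rw [hr, he]; simpa using by positivity
    have h2 : |r - q| ≤ δ := by
      rw [abs_of_nonpos (by linarith)]
      have : q - δ ≤ r := le_max_left _ _
      linarith
    have o1 := ih p r hp hrIcc hpr h1
    have o2 := modulus_step hf hrIcc hq h2
    calc |f p - f q| ≤ |f p - f r| + |f r - f q| := abs_sub_le _ _ _
      _ ≤ K * sSup (modSet f a b δ) + sSup (modSet f a b δ) := add_le_add o1 o2
      _ = (K + 1) * sSup (modSet f a b δ) := by ring

lemma modulus_chain (hf : ContinuousOn f (Set.Icc a b)) (hδ : 0 ≤ δ) (K : ℕ)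
    {p q : ℝ} (hp : p ∈ Set.Icc a b) (hq : q ∈ Set.Icc a b) (h : |p - q| ≤ K * δ) :
    |f p - f q| ≤ K * sSup (modSet f a b δ) := by
  rcases le_total p q with hpq | hpq
  · exact modulus_chain_aux hf hδ K p q hp hq hpq h
  · rw [abs_sub_comm]
    exact modulus_chain_aux hf hδ K q p hq hp hpq (by rwa [abs_sub_comm])

/-! ### Clamped extension -/

def clamp (a b x : ℝ) : ℝ := max a (min b x)

lemma clamp_mem (hab : a ≤ b) (x : ℝ) : clamp a b x ∈ Set.Icc a b :=
  ⟨le_max_left _ _, max_le hab (min_le_left _ _)⟩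

lemma clamp_eq_self {x : ℝ} (hx : x ∈ Set.Icc a b) : clamp a b x = x := by
  rw [clamp, min_eq_right hx.2, max_eq_right hx.1]

lemma clamp_lipschitz (a b : ℝ) (x y : ℝ) : |clamp a b x - clamp a b y| ≤ |x - y| := by
  rw [clamp, clamp]
  have h1 : ∀ u v : ℝ, |min b u - min b v| ≤ |u - v| := by
    intro u v
    rcases min_cases b u with ⟨e1, i1⟩ | ⟨e1, i1⟩ <;> rcases min_cases b v with ⟨e2, i2⟩ | ⟨e2, i2⟩ <;>
      rw [e1, e2, abs_le] <;>
      constructor <;>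
      linarith [le_abs_self (u - v), neg_abs_le (u - v), abs_nonneg (u - v)]
  have h2 : ∀ u v : ℝ, |max a u - max a v| ≤ |u - v| := by
    intro u v
    rcases max_cases a u with ⟨e1, i1⟩ | ⟨e1, i1⟩ <;> rcases max_cases a v with ⟨e2, i2⟩ | ⟨e2, i2⟩ <;>
      rw [e1, e2, abs_le] <;>
      constructor <;>
      linarith [le_abs_self (u - v), neg_abs_le (u - v), abs_nonneg (u - v)]
  exact le_trans (h2 (min b x) (min b y)) (h1 x y)

lemma clamp_continuous (a b : ℝ) : Continuous (clamp a b) :=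
  continuous_const.max (continuous_const.min continuous_id)

def extf (f : ℝ → ℝ) (a b : ℝ) : ℝ → ℝ := fun x => f (clamp a b x)

lemma extf_continuous (hf : ContinuousOn f (Set.Icc a b)) (hab : a ≤ b) :
    Continuous (extf f a b) :=
  hf.comp_continuous (clamp_continuous a b) (fun x => clamp_mem hab x)

lemma extf_eq {x : ℝ} (hx : x ∈ Set.Icc a b) : extf f a b x = f x := by
  rw [extf, clamp_eq_self hx]

lemma extf_chain (hf : ContinuousOn f (Set.Icc a b)) (hab : a ≤ b) (hδ : 0 ≤ δ) (K : ℕ)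
    (x y : ℝ) (h : |x - y| ≤ K * δ) :
    |extf f a b x - extf f a b y| ≤ K * sSup (modSet f a b δ) :=
  modulus_chain hf hδ K (clamp_mem hab x) (clamp_mem hab y)
    (le_trans (clamp_lipschitz a b x y) h)

end Modulus


section CFCC

variable {H : Type*} [NormedAddCommGroup H] [InnerProductSpace ℂ H] [CompleteSpace H]

/-- Complex-valued continuous functional calculus built from the real one. -/
def cfcC (F : ℝ → ℂ) (T : H →L[ℂ] H) : H →L[ℂ] H :=
  cfc (fun x => (F x).re) T + Complex.I • cfc (fun x => (F x).im) T

lemma cfcC_real (u : ℝ → ℝ) (T : H →L[ℂ] H) :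
    cfcC (fun x => (u x : ℂ)) T = cfc u T := by
  simp [cfcC]

lemma cfcC_congr {F G : ℝ → ℂ} {T : H →L[ℂ] H}
    (h : ∀ x ∈ spectrum ℝ T, F x = G x) : cfcC F T = cfcC G T := by
  unfold cfcC
  rw [cfc_congr (a := T) (f := fun x => (F x).re) (g := fun x => (G x).re)
      (fun x hx => show (F x).re = (G x).re by rw [h x hx]),
    cfc_congr (a := T) (f := fun x => (F x).im) (g := fun x => (G x).im)
      (fun x hx => show (F x).im = (G x).im by rw [h x hx])]

lemma cfcC_one (T : H →L[ℂ] H) (hT : IsSelfAdjoint T) :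
    cfcC (fun _ => (1 : ℂ)) T = 1 := by
  have h1 : cfc (fun _ : ℝ => (1:ℝ)) T = 1 := cfc_const_one ℝ T
  simp [cfcC, h1]

lemma cfcC_mul (F G : ℝ → ℂ) (T : H →L[ℂ] H) (hF : Continuous F) (hG : Continuous G) :
    cfcC (fun x => F x * G x) T = cfcC F T * cfcC G T := by
  have hFre : ContinuousOn (fun x => (F x).re) (spectrum ℝ T) :=
    (Complex.continuous_re.comp hF).continuousOn
  have hFim : ContinuousOn (fun x => (F x).im) (spectrum ℝ T) :=
    (Complex.continuous_im.comp hF).continuousOn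
  have hGre : ContinuousOn (fun x => (G x).re) (spectrum ℝ T) :=
    (Complex.continuous_re.comp hG).continuousOn
  have hGim : ContinuousOn (fun x => (G x).im) (spectrum ℝ T) :=
    (Complex.continuous_im.comp hG).continuousOn
  have e1 : cfc (fun x => (F x * G x).re) T
      = cfc (fun x => (F x).re) T * cfc (fun x => (G x).re) T
        - cfc (fun x => (F x).im) T * cfc (fun x => (G x).im) T := by
    rw [← cfc_mul (a := T) _ _ hFre hGre, ← cfc_mul (a := T) _ _ hFim hGim,
      ← cfc_sub (a := T) (fun x => (F x).re * (G x).re) (fun x => (F x).im * (G x).im) (hFre.mul hGre) (hFim.mul hGim)]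
    exact cfc_congr fun x _ => Complex.mul_re _ _
  have e2 : cfc (fun x => (F x * G x).im) T
      = cfc (fun x => (F x).re) T * cfc (fun x => (G x).im) T
        + cfc (fun x => (F x).im) T * cfc (fun x => (G x).re) T := by
    rw [← cfc_mul (a := T) _ _ hFre hGim, ← cfc_mul (a := T) _ _ hFim hGre,
      ← cfc_add (a := T) (fun x => (F x).re * (G x).im) (fun x => (F x).im * (G x).re) (hFre.mul hGim) (hFim.mul hGre)]
    exact cfc_congr fun x _ => Complex.mul_im _ _
  unfold cfcC
  rw [e1, e2]
  set P1 := cfc (fun x => (F x).re) T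
  set P2 := cfc (fun x => (F x).im) T
  set Q1 := cfc (fun x => (G x).re) T
  set Q2 := cfc (fun x => (G x).im) T
  have h4 : (Complex.I • P2) * (Complex.I • Q2) = -(P2 * Q2) := by
    rw [smul_mul_smul_comm, Complex.I_mul_I, neg_smul, one_smul]
  rw [add_mul, mul_add, mul_add, h4, mul_smul_comm, smul_mul_assoc, smul_add]
  abel

lemma norm_cfcC_le {F : ℝ → ℂ} {T : H →L[ℂ] H} {c : ℝ} (hc : 0 ≤ c)
    (h : ∀ x ∈ spectrum ℝ T, ‖F x‖ ≤ c) :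
    ‖cfcC F T‖ ≤ 2 * c := by
  have h1 : ‖cfc (fun x => (F x).re) T‖ ≤ c :=
    norm_cfc_le hc fun x hx => by
      rw [Real.norm_eq_abs]
      exact (Complex.abs_re_le_norm _).trans (h x hx)
  have h2 : ‖cfc (fun x => (F x).im) T‖ ≤ c :=
    norm_cfc_le hc fun x hx => by
      rw [Real.norm_eq_abs]
      exact (Complex.abs_im_le_norm _).trans (h x hx)
  calc ‖cfcC F T‖ ≤ ‖cfc (fun x => (F x).re) T‖ + ‖Complex.I • cfc (fun x => (F x).im) T‖ :=
        norm_add_le _ _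
    _ = ‖cfc (fun x => (F x).re) T‖ + ‖cfc (fun x => (F x).im) T‖ := by
        rw [norm_smul, Complex.norm_I, one_mul]
    _ ≤ c + c := add_le_add h1 h2
    _ = 2 * c := by ring

/-- The affine function `x ↦ x - ζ` under `cfcC`, differenced between two operators. -/
lemma cfcC_affine_sub (ζ : ℂ) (A B : H →L[ℂ] H) (hA : IsSelfAdjoint A)
    (hB : IsSelfAdjoint B) :
    cfcC (fun x => (x : ℂ) - ζ) B - cfcC (fun x => (x : ℂ) - ζ) A = B - A := by
  have key : ∀ (T : H →L[ℂ] H), IsSelfAdjoint T → cfcC (fun x => (x : ℂ) - ζ) T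
      = T - algebraMap ℝ (H →L[ℂ] H) ζ.re + Complex.I • algebraMap ℝ (H →L[ℂ] H) (-ζ.im) := by
    intro T hT
    unfold cfcC
    have e1 : cfc (fun x : ℝ => ((x : ℂ) - ζ).re) T = T - algebraMap ℝ (H →L[ℂ] H) ζ.re := by
      have he : (fun x : ℝ => ((x : ℂ) - ζ).re) = fun x : ℝ => x - ζ.re := by
        funext x; simp [Complex.sub_re]
      rw [he, cfc_sub (a := T) (fun x : ℝ => x) (fun _ => ζ.re) continuousOn_id
        continuousOn_const, cfc_id' ℝ T, cfc_const ζ.re T]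
    have e2 : cfc (fun x : ℝ => ((x : ℂ) - ζ).im) T = algebraMap ℝ (H →L[ℂ] H) (-ζ.im) := by
      have he : (fun x : ℝ => ((x : ℂ) - ζ).im) = fun _ : ℝ => -ζ.im := by
        funext x; simp [Complex.sub_im]
      rw [he, cfc_const (-ζ.im) T]
    rw [e1, e2]
  rw [key A hA, key B hB]
  abel

end CFCC



section Sep
variable {H : Type*} [NormedAddCommGroup H] [InnerProductSpace ℂ H] [CompleteSpace H]

/-- Separation lemma: if `u` is supported in a ball of radius `R` around `μ` and `v` is
supported outside the ball of radius `S`, then `u(A)·v(B)` is small. -/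
lemma sep_lemma {A B : H →L[ℂ] H} (hA : IsSelfAdjoint A) (hB : IsSelfAdjoint B)
    (u v : ℝ → ℝ) (hu : Continuous u) (hv : Continuous v)
    (μ R S ε Cu Cv : ℝ) (hε : 0 < ε) (hR : 0 ≤ R) (hCu : 0 ≤ Cu) (hCv : 0 ≤ Cv)
    (hRS : R + ε ≤ 3 / 4 * S)
    (husupp : ∀ x, u x ≠ 0 → |x - μ| ≤ R)
    (hvsupp : ∀ x, v x ≠ 0 → S ≤ |x - μ|)
    (hbu : ∀ x, |u x| ≤ Cu) (hbv : ∀ x, |v x| ≤ Cv) :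
    ‖cfc u A * cfc v B‖ ≤ 64 * Cu * Cv * (R + ε) * ‖A - B‖ / ε ^ 2 := by
  have hS : 0 < S := by nlinarith
  set ζ : ℂ := (μ : ℂ) + (ε : ℂ) * Complex.I with hζ
  have hζre : ζ.re = μ := by simp [hζ]
  have hζim : ζ.im = ε := by simp [hζ]
  -- basic absolute value estimates
  have hsubim : ∀ x : ℝ, ((x : ℂ) - ζ).im = -ε := by
    intro x; simp [Complex.sub_im, hζim]
  have hsubre : ∀ x : ℝ, ((x : ℂ) - ζ).re = x - μ := by
    intro x; simp [Complex.sub_re, hζre]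
  have habs_im : ∀ x : ℝ, ε ≤ ‖(x : ℂ) - ζ‖ := by
    intro x
    have h1 := Complex.abs_im_le_norm ((x : ℂ) - ζ)
    rw [hsubim x, abs_neg, abs_of_pos hε] at h1
    exact h1
  have hnz : ∀ x : ℝ, ((x : ℂ) - ζ) ≠ 0 := by
    intro x h0
    have := habs_im x
    rw [h0] at this
    simp at this
    linarith
  have habs_re : ∀ x : ℝ, |x - μ| ≤ ‖(x : ℂ) - ζ‖ := by
    intro x
    have h1 := Complex.abs_re_le_norm ((x : ℂ) - ζ)
    rwa [hsubre x] at h1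
  have habs_up : ∀ x : ℝ, ‖(x : ℂ) - ζ‖ ≤ |x - μ| + ε := by
    intro x
    have hdec : (x : ℂ) - ζ = ((x - μ : ℝ) : ℂ) + ((-ε : ℝ) : ℂ) * Complex.I := by
      rw [hζ]; push_cast; ring
    rw [hdec]
    calc ‖((x - μ : ℝ) : ℂ) + ((-ε : ℝ) : ℂ) * Complex.I‖
        ≤ ‖((x - μ : ℝ) : ℂ)‖ + ‖((-ε : ℝ) : ℂ) * Complex.I‖ :=
          norm_add_le _ _
      _ = |x - μ| + ε := by
          rw [norm_mul, Complex.norm_I, mul_one, Complex.norm_real, Complex.norm_real, Real.norm_eq_abs, Real.norm_eq_abs,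
            abs_neg, abs_of_pos hε]
  -- the functions
  set g : ℝ → ℂ := fun x => ((x : ℂ) - ζ)⁻¹ with hgdef
  set Z : ℝ → ℂ := fun x => (x : ℂ) - ζ with hZdef
  set U : ℕ → ℝ → ℂ := fun n x => ((x : ℂ) - ζ) ^ n * (u x : ℂ) with hUdef
  set V : ℕ → ℝ → ℂ := fun n x => (((x : ℂ) - ζ)⁻¹) ^ n * (v x : ℂ) with hVdef
  have hZcont : Continuous Z := Complex.continuous_ofReal.sub continuous_const
  have hgcont : Continuous g := hZcont.inv₀ hnz
  have hUcont : ∀ n, Continuous (U n) := fun n =>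
    (hZcont.pow n).mul (Complex.continuous_ofReal.comp hu)
  have hVcont : ∀ n, Continuous (V n) := fun n =>
    ((hgcont.pow n)).mul (Complex.continuous_ofReal.comp hv)
  have habs_g : ∀ x, ‖g x‖ ≤ ε⁻¹ := by
    intro x
    rw [hgdef]
    simp only [norm_inv]
    exact inv_anti₀ hε (habs_im x)
  -- operators
  set GA := cfcC g A with hGA
  set GB := cfcC g B with hGB
  have hZG : ∀ (T : H →L[ℂ] H), IsSelfAdjoint T → cfcC Z T * cfcC g T = 1 := by
    intro T hT
    rw [← cfcC_mul Z g T hZcont hgcont]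
    have he : (fun x => Z x * g x) = fun _ => (1 : ℂ) :=
      funext fun x => mul_inv_cancel₀ (hnz x)
    rw [he, cfcC_one T hT]
  have hGZ : ∀ (T : H →L[ℂ] H), IsSelfAdjoint T → cfcC g T * cfcC Z T = 1 := by
    intro T hT
    rw [← cfcC_mul g Z T hgcont hZcont]
    have he : (fun x => g x * Z x) = fun _ => (1 : ℂ) :=
      funext fun x => inv_mul_cancel₀ (hnz x)
    rw [he, cfcC_one T hT]
  have hGdiff : GA - GB = GA * (B - A) * GB := by
    have h1 : GA * (cfcC Z B * GB) = GA := by rw [hZG B hB, mul_one]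
    have h2 : (GA * cfcC Z A) * GB = GB := by rw [hGZ A hA, one_mul]
    calc GA - GB = GA * (cfcC Z B * GB) - (GA * cfcC Z A) * GB := by rw [h1, h2]
      _ = GA * (cfcC Z B - cfcC Z A) * GB := by noncomm_ring
      _ = GA * (B - A) * GB := by rw [show cfcC Z B - cfcC Z A = B - A from
            cfcC_affine_sub ζ A B hA hB]
  have hGAnorm : ‖GA‖ ≤ 2 * ε⁻¹ :=
    norm_cfcC_le (by positivity) fun x _ => habs_g x
  have hGBnorm : ‖GB‖ ≤ 2 * ε⁻¹ :=
    norm_cfcC_le (by positivity) fun x _ => habs_g x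
  have hGdiffnorm : ‖GA - GB‖ ≤ 4 * ‖A - B‖ / ε ^ 2 := by
    rw [hGdiff]
    calc ‖GA * (B - A) * GB‖ ≤ ‖GA * (B - A)‖ * ‖GB‖ := norm_mul_le _ _
      _ ≤ ‖GA‖ * ‖B - A‖ * ‖GB‖ :=
          mul_le_mul_of_nonneg_right (norm_mul_le _ _) (norm_nonneg _)
      _ = ‖GA‖ * ‖A - B‖ * ‖GB‖ := by rw [norm_sub_rev]
      _ ≤ (2 * ε⁻¹) * ‖A - B‖ * (2 * ε⁻¹) := by
          apply mul_le_mul _ hGBnorm (norm_nonneg _) (by positivity)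
          exact mul_le_mul_of_nonneg_right hGAnorm (norm_nonneg _)
      _ = 4 * ‖A - B‖ / ε ^ 2 := by field_simp; ring
  -- norms of U n and V n
  have hUbound : ∀ n x, ‖U n x‖ ≤ Cu * (R + ε) ^ n := by
    intro n x
    by_cases hu0 : u x = 0
    · simp only [hUdef, hu0]
      simp
      positivity
    · have h1 : ‖U n x‖ = ‖(x : ℂ) - ζ‖ ^ n * |u x| := by
        rw [hUdef]
        simp [norm_mul, norm_pow, Complex.norm_real]
      rw [h1]
      have h2 : ‖(x : ℂ) - ζ‖ ≤ R + ε :=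
        (habs_up x).trans (by linarith [husupp x hu0])
      exact mul_le_mul (pow_le_pow_left₀ (norm_nonneg _) h2 n) (hbu x)
        (abs_nonneg _) (by positivity) |>.trans_eq (mul_comm _ _)
  have hVbound : ∀ n x, ‖V n x‖ ≤ Cv * (S⁻¹) ^ n := by
    intro n x
    by_cases hv0 : v x = 0
    · simp only [hVdef, hv0]
      simp
      positivity
    · have h1 : ‖V n x‖ = (‖(x : ℂ) - ζ‖)⁻¹ ^ n * |v x| := by
        rw [hVdef]
        simp [norm_mul, norm_pow, norm_inv, Complex.norm_real]
      rw [h1]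
      have h2 : (‖(x : ℂ) - ζ‖)⁻¹ ≤ S⁻¹ := by
        apply inv_anti₀ hS
        exact (hvsupp x hv0).trans (habs_re x)
      exact mul_le_mul (pow_le_pow_left₀ (by positivity) h2 n) (hbv x)
        (abs_nonneg _) (by positivity) |>.trans_eq (mul_comm _ _)
  have hUnorm : ∀ n, ‖cfcC (U n) A‖ ≤ 2 * (Cu * (R + ε) ^ n) := fun n =>
    norm_cfcC_le (by positivity) fun x _ => hUbound n x
  have hVnorm : ∀ n, ‖cfcC (V n) B‖ ≤ 2 * (Cv * (S⁻¹) ^ n) := fun n =>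
    norm_cfcC_le (by positivity) fun x _ => hVbound n x
  -- the step identity
  have hUstep : ∀ n, cfcC (U n) A = cfcC (U (n + 1)) A * GA := by
    intro n
    rw [hGA, ← cfcC_mul (U (n + 1)) g A (hUcont (n + 1)) hgcont]
    congr 1
    funext x
    show ((x : ℂ) - ζ) ^ n * (u x : ℂ) = ((x : ℂ) - ζ) ^ (n + 1) * (u x : ℂ) * ((x : ℂ) - ζ)⁻¹
    rw [pow_succ, mul_right_comm (((x : ℂ) - ζ) ^ n) ((x : ℂ) - ζ) ((u x : ℂ)),
      mul_inv_cancel_right₀ (hnz x)]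
  have hVstep : ∀ n, cfcC (V (n + 1)) B = GB * cfcC (V n) B := by
    intro n
    rw [hGB, ← cfcC_mul g (V n) B hgcont (hVcont n)]
    congr 1
    funext x
    show (((x : ℂ) - ζ)⁻¹) ^ (n + 1) * (v x : ℂ) = ((x : ℂ) - ζ)⁻¹ * ((((x : ℂ) - ζ)⁻¹) ^ n * (v x : ℂ))
    rw [pow_succ']
    ring
  have hstep : ∀ n, cfcC (U n) A * cfcC (V n) B
      = cfcC (U (n + 1)) A * (GA - GB) * cfcC (V n) B
        + cfcC (U (n + 1)) A * cfcC (V (n + 1)) B := by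
    intro n
    rw [hUstep n, hVstep n]
    noncomm_ring
  -- the main identity
  have hU0 : cfcC (U 0) A = cfc u A := by
    have he : U 0 = fun x => (u x : ℂ) := funext fun x => by
      show ((x : ℂ) - ζ) ^ 0 * (u x : ℂ) = _
      rw [pow_zero, one_mul]
    rw [he, cfcC_real u A]
  have hV0 : cfcC (V 0) B = cfc v B := by
    have he : V 0 = fun x => (v x : ℂ) := funext fun x => by
      show (((x : ℂ) - ζ)⁻¹) ^ 0 * (v x : ℂ) = _
      rw [pow_zero, one_mul]
    rw [he, cfcC_real v B]
  have hmain : ∀ N, cfc u A * cfc v B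
      = (∑ n ∈ range N, cfcC (U (n + 1)) A * (GA - GB) * cfcC (V n) B)
        + cfcC (U N) A * cfcC (V N) B := by
    intro N
    induction N with
    | zero => rw [sum_range_zero, zero_add, hU0, hV0]
    | succ N ih =>
      rw [sum_range_succ, ih, hstep N]
      abel
  -- numeric estimates
  set ρ : ℝ := (R + ε) * S⁻¹ with hρdef
  have hρ0 : 0 ≤ ρ := by positivity
  have hρ34 : ρ ≤ 3 / 4 := by
    rw [hρdef, ← div_eq_mul_inv, div_le_iff₀ hS]
    linarith
  set K : ℝ := 16 * Cu * Cv * (R + ε) * ‖A - B‖ / ε ^ 2 with hK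
  have hK0 : 0 ≤ K := by positivity
  have hterm : ∀ n, ‖cfcC (U (n + 1)) A * (GA - GB) * cfcC (V n) B‖ ≤ K * ρ ^ n := by
    intro n
    calc ‖cfcC (U (n + 1)) A * (GA - GB) * cfcC (V n) B‖
        ≤ ‖cfcC (U (n + 1)) A * (GA - GB)‖ * ‖cfcC (V n) B‖ := norm_mul_le _ _
      _ ≤ ‖cfcC (U (n + 1)) A‖ * ‖GA - GB‖ * ‖cfcC (V n) B‖ := by
          gcongr
          exact norm_mul_le _ _
      _ ≤ (2 * (Cu * (R + ε) ^ (n + 1))) * (4 * ‖A - B‖ / ε ^ 2)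
            * (2 * (Cv * (S⁻¹) ^ n)) := by
          apply mul_le_mul _ (hVnorm n) (norm_nonneg _) (by positivity)
          exact mul_le_mul (hUnorm (n + 1)) hGdiffnorm (norm_nonneg _) (by positivity)
      _ = K * ρ ^ n := by rw [hK, hρdef, mul_pow, pow_succ]; ring
  have htail : ∀ N, ‖cfcC (U N) A * cfcC (V N) B‖ ≤ 4 * (Cu * Cv) * ρ ^ N := by
    intro N
    calc ‖cfcC (U N) A * cfcC (V N) B‖ ≤ ‖cfcC (U N) A‖ * ‖cfcC (V N) B‖ := norm_mul_le _ _
      _ ≤ (2 * (Cu * (R + ε) ^ N)) * (2 * (Cv * (S⁻¹) ^ N)) :=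
          mul_le_mul (hUnorm N) (hVnorm N) (norm_nonneg _) (by positivity)
      _ = 4 * (Cu * Cv) * ρ ^ N := by rw [hρdef, mul_pow]; ring
  have hgeom : ∀ N, ∑ n ∈ range N, ρ ^ n ≤ 4 := by
    intro N
    have hne : ρ ≠ 1 := ne_of_lt (by linarith)
    rw [geom_sum_eq hne]
    rw [div_le_iff_of_neg (by linarith : ρ - 1 < 0)]
    linarith [pow_nonneg hρ0 N]
  have hfinal : ∀ N, ‖cfc u A * cfc v B‖ ≤ K * 4 + 4 * (Cu * Cv) * ρ ^ N := by
    intro N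
    rw [hmain N]
    calc ‖(∑ n ∈ range N, cfcC (U (n + 1)) A * (GA - GB) * cfcC (V n) B)
          + cfcC (U N) A * cfcC (V N) B‖
        ≤ ‖∑ n ∈ range N, cfcC (U (n + 1)) A * (GA - GB) * cfcC (V n) B‖
          + ‖cfcC (U N) A * cfcC (V N) B‖ := norm_add_le _ _
      _ ≤ (∑ n ∈ range N, ‖cfcC (U (n + 1)) A * (GA - GB) * cfcC (V n) B‖)
          + ‖cfcC (U N) A * cfcC (V N) B‖ :=
          add_le_add_left (norm_sum_le _ _) _
      _ ≤ (∑ n ∈ range N, K * ρ ^ n) + 4 * (Cu * Cv) * ρ ^ N :=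
          add_le_add (Finset.sum_le_sum fun n _ => hterm n) (htail N)
      _ = K * (∑ n ∈ range N, ρ ^ n) + 4 * (Cu * Cv) * ρ ^ N := by rw [mul_sum]
      _ ≤ K * 4 + 4 * (Cu * Cv) * ρ ^ N :=
          add_le_add_left (mul_le_mul_of_nonneg_left (hgeom N) hK0) _
  have hlim : Tendsto (fun N : ℕ => K * 4 + 4 * (Cu * Cv) * ρ ^ N) atTop
      (nhds (K * 4 + 4 * (Cu * Cv) * 0)) := by
    apply Tendsto.add tendsto_const_nhds
    exact (tendsto_pow_atTop_nhds_zero_of_lt_one hρ0 (by linarith)).const_mul _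
  have := ge_of_tendsto' hlim hfinal
  calc ‖cfc u A * cfc v B‖ ≤ K * 4 + 4 * (Cu * Cv) * 0 := this
    _ = 64 * Cu * Cv * (R + ε) * ‖A - B‖ / ε ^ 2 := by rw [hK]; ring

end Sep


section Cotlar
variable {H : Type*} [NormedAddCommGroup H] [InnerProductSpace ℂ H] [CompleteSpace H]

local notation "⟪" x ", " y "⟫" => @inner ℂ _ _ x y

/-- Cotlar-type almost orthogonality estimate. -/
lemma cotlar {ι : Type*} {A B : H →L[ℂ] H} (hA : IsSelfAdjoint A) (hB : IsSelfAdjoint B)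
    {a b : ℝ} (hB_spec : spectrum ℝ B ⊆ Set.Icc a b)
    (s : Finset ι) (p q : ι → ℝ → ℝ) (Z : ι → H →L[ℂ] H)
    (hp : ∀ i, Continuous (p i)) (hq : ∀ i, Continuous (q i))
    {c₁ c₂ : ℝ} (hc₁ : 0 ≤ c₁) (hc₂ : 0 ≤ c₂)
    (horth : ∀ i ∈ s, ∀ j ∈ s, i ≠ j → ∀ x : ℝ, p i x * p j x = 0)
    (hqsum : ∀ x ∈ Set.Icc a b, ∑ i ∈ s, q i x ^ 2 ≤ c₁ ^ 2)
    (hW : ∀ i ∈ s, ‖cfc (p i) A * Z i‖ ≤ c₂) :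
    ‖∑ i ∈ s, cfc (p i) A * Z i * cfc (q i) B‖ ≤ c₁ * c₂ := by
  apply ContinuousLinearMap.opNorm_le_bound _ (by positivity)
  intro x
  rw [ContinuousLinearMap.sum_apply]
  set av : ι → H := fun i => cfc (q i) B x with hav
  set uv : ι → H := fun i => (cfc (p i) A * Z i) (av i) with huv
  have happ : ∀ i, (cfc (p i) A * Z i * cfc (q i) B) x = uv i := fun i => rfl
  rw [Finset.sum_congr rfl fun i _ => happ i]
  have hadjA : ∀ (g : ℝ → ℝ), ContinuousLinearMap.adjoint (cfc g A) = cfc g A := by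
    intro g
    have hsa : IsSelfAdjoint (cfc g A) := cfc_predicate g A
    rw [← ContinuousLinearMap.star_eq_adjoint, hsa.star_eq]
  have hadjB : ∀ (g : ℝ → ℝ), ContinuousLinearMap.adjoint (cfc g B) = cfc g B := by
    intro g
    have hsa : IsSelfAdjoint (cfc g B) := cfc_predicate g B
    rw [← ContinuousLinearMap.star_eq_adjoint, hsa.star_eq]
  -- cross terms vanish
  have cross : ∀ i ∈ s, ∀ j ∈ s, i ≠ j → ⟪uv i, uv j⟫ = 0 := by
    intro i hi j hj hij
    have h1 : uv i = cfc (p i) A ((Z i) (av i)) := rfl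
    have h2 : uv j = cfc (p j) A ((Z j) (av j)) := rfl
    rw [h1, h2]
    have step1 : ⟪cfc (p i) A ((Z i) (av i)), cfc (p j) A ((Z j) (av j))⟫
        = ⟪(Z i) (av i), cfc (p i) A (cfc (p j) A ((Z j) (av j)))⟫ := by
      conv_lhs => rw [← hadjA (p i)]
      exact ContinuousLinearMap.adjoint_inner_left _ _ _
    rw [step1]
    have step2 : cfc (p i) A (cfc (p j) A ((Z j) (av j)))
        = (cfc (p i) A * cfc (p j) A) ((Z j) (av j)) := rfl
    rw [step2, ← cfc_mul (a := A) _ _ (hp i).continuousOn (hp j).continuousOn]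
    have hz : (fun x => p i x * p j x) = fun _ : ℝ => (0 : ℝ) :=
      funext fun x => horth i hi j hj hij x
    rw [hz, cfc_const_zero ℝ A]
    simp
  -- norm squared splits
  have hv2 : ‖∑ i ∈ s, uv i‖ ^ 2 = ∑ i ∈ s, ‖uv i‖ ^ 2 := by
    have e1 : (‖∑ i ∈ s, uv i‖ : ℝ) ^ 2 = RCLike.re ⟪∑ i ∈ s, uv i, ∑ j ∈ s, uv j⟫ :=
      (inner_self_eq_norm_sq _).symm
    rw [e1, sum_inner, map_sum]
    apply Finset.sum_congr rfl
    intro i hi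
    rw [inner_sum, Finset.sum_eq_single_of_mem i hi
      (fun j hj hij => cross i hi j hj (Ne.symm hij))]
    exact inner_self_eq_norm_sq _
  -- diagonal bound
  have hdiag : ∀ i ∈ s, ‖uv i‖ ^ 2 ≤ c₂ ^ 2 * ‖av i‖ ^ 2 := by
    intro i hi
    have h1 : ‖uv i‖ ≤ c₂ * ‖av i‖ := by
      calc ‖uv i‖ ≤ ‖cfc (p i) A * Z i‖ * ‖av i‖ := ContinuousLinearMap.le_opNorm _ _
        _ ≤ c₂ * ‖av i‖ := mul_le_mul_of_nonneg_right (hW i hi) (norm_nonneg _)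
    calc ‖uv i‖ ^ 2 ≤ (c₂ * ‖av i‖) ^ 2 := by
          apply pow_le_pow_left₀ (norm_nonneg _) h1
      _ = c₂ ^ 2 * ‖av i‖ ^ 2 := by ring
  -- sum of ‖av i‖²
  have havsum : ∑ i ∈ s, ‖av i‖ ^ 2 ≤ c₁ ^ 2 * ‖x‖ ^ 2 := by
    have h1 : ∀ i ∈ s, (‖av i‖ : ℝ) ^ 2
        = RCLike.re ⟪x, cfc (fun t => q i t * q i t) B x⟫ := by
      intro i hi
      have e1 : (‖av i‖ : ℝ) ^ 2 = RCLike.re ⟪av i, av i⟫ := (inner_self_eq_norm_sq (𝕜 := ℂ) (av i)).symm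
      rw [e1]
      congr 1
      have e2 := ContinuousLinearMap.adjoint_inner_left (cfc (q i) B) ((cfc (q i) B) x) x
      rw [hadjB (q i)] at e2
      have e3 : (cfc (q i) B) ((cfc (q i) B) x) = (cfc (q i) B * cfc (q i) B) x := rfl
      rw [hav, e2, e3, ← cfc_mul (a := B) _ _ (hq i).continuousOn (hq i).continuousOn]
    rw [Finset.sum_congr rfl h1, ← map_sum, ← inner_sum]
    have e4 : (∑ i ∈ s, cfc (fun t => q i t * q i t) B x)
        = (∑ i ∈ s, cfc (fun t => q i t * q i t) B) x := by
      rw [ContinuousLinearMap.sum_apply]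
    rw [e4]
    have e5 : (∑ i ∈ s, cfc (fun t => q i t * q i t) B)
        = cfc (fun t => ∑ i ∈ s, q i t * q i t) B := by
      rw [← cfc_sum (fun i => fun t => q i t * q i t) B s
        (fun i _ => ((hq i).mul (hq i)).continuousOn)]
      congr 1
      funext t
      rw [Finset.sum_apply]
    rw [e5]
    have hnorm : ‖cfc (fun t => ∑ i ∈ s, q i t * q i t) B‖ ≤ c₁ ^ 2 := by
      apply norm_cfc_le (by positivity)
      intro t ht
      have htIcc := hB_spec ht
      rw [Real.norm_eq_abs, abs_of_nonneg (Finset.sum_nonneg fun i _ => mul_self_nonneg _)]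
      calc ∑ i ∈ s, q i t * q i t = ∑ i ∈ s, q i t ^ 2 := by
            apply Finset.sum_congr rfl; intro i _; ring
        _ ≤ c₁ ^ 2 := hqsum t htIcc
    calc RCLike.re ⟪x, cfc (fun t => ∑ i ∈ s, q i t * q i t) B x⟫
        ≤ ‖⟪x, cfc (fun t => ∑ i ∈ s, q i t * q i t) B x⟫‖ :=
          le_trans (le_abs_self _) (RCLike.abs_re_le_norm _)
      _ ≤ ‖x‖ * ‖cfc (fun t => ∑ i ∈ s, q i t * q i t) B x‖ := norm_inner_le_norm _ _
      _ ≤ ‖x‖ * (c₁ ^ 2 * ‖x‖) := by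
          apply mul_le_mul_of_nonneg_left _ (norm_nonneg x)
          calc ‖cfc (fun t => ∑ i ∈ s, q i t * q i t) B x‖
              ≤ ‖cfc (fun t => ∑ i ∈ s, q i t * q i t) B‖ * ‖x‖ :=
                ContinuousLinearMap.le_opNorm _ _
            _ ≤ c₁ ^ 2 * ‖x‖ := mul_le_mul_of_nonneg_right hnorm (norm_nonneg _)
      _ = c₁ ^ 2 * ‖x‖ ^ 2 := by ring
  -- combine
  have hfinal : ‖∑ i ∈ s, uv i‖ ^ 2 ≤ (c₁ * c₂ * ‖x‖) ^ 2 := by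
    rw [hv2]
    calc ∑ i ∈ s, ‖uv i‖ ^ 2 ≤ ∑ i ∈ s, c₂ ^ 2 * ‖av i‖ ^ 2 := Finset.sum_le_sum hdiag
      _ = c₂ ^ 2 * ∑ i ∈ s, ‖av i‖ ^ 2 := by rw [Finset.mul_sum]
      _ ≤ c₂ ^ 2 * (c₁ ^ 2 * ‖x‖ ^ 2) := mul_le_mul_of_nonneg_left havsum (by positivity)
      _ = (c₁ * c₂ * ‖x‖) ^ 2 := by ring
  have h := Real.sqrt_le_sqrt hfinal
  rwa [Real.sqrt_sq (norm_nonneg _), Real.sqrt_sq (by positivity)] at h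

end Cotlar



def φf (a δ' : ℝ) (i : ℕ) : ℝ → ℝ := fun x => hat ((x - a) / δ' - i)

lemma φf_cont (a δ' : ℝ) (i : ℕ) : Continuous (φf a δ' i) :=
  hat_continuous.comp (((continuous_id.sub continuous_const).div_const δ').sub continuous_const)

lemma φf_nonneg (a δ' : ℝ) (i : ℕ) (x : ℝ) : 0 ≤ φf a δ' i x := hat_nonneg _

lemma φf_le_one (a δ' : ℝ) (i : ℕ) (x : ℝ) : φf a δ' i x ≤ 1 := hat_le_one _

lemma φf_supp {a δ' : ℝ} (hδ' : 0 < δ') {i : ℕ} {x : ℝ} (h : φf a δ' i x ≠ 0) :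
    |(x - a) / δ' - i| < 1 :=
  abs_lt_one_of_hat_ne_zero h

lemma φf_close {a δ' : ℝ} (hδ' : 0 < δ') {i j : ℕ} {x : ℝ}
    (hi : φf a δ' i x ≠ 0) (hj : φf a δ' j x ≠ 0) : i ≤ j + 1 ∧ j ≤ i + 1 := by
  have h1 := abs_lt.mp (φf_supp hδ' hi)
  have h2 := abs_lt.mp (φf_supp hδ' hj)
  have hij : (i : ℝ) < j + 2 := by linarith
  have hji : (j : ℝ) < i + 2 := by linarith
  have hij' : i < j + 2 := by exact_mod_cast hij
  have hji' : j < i + 2 := by exact_mod_cast hji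
  omega

lemma φf_sum_le (a δ' : ℝ) (n : ℕ) (s : Finset ℕ) (hs : s ⊆ range (n + 1)) (x : ℝ) :
    ∑ i ∈ s, φf a δ' i x ≤ 1 := by
  calc ∑ i ∈ s, φf a δ' i x ≤ ∑ i ∈ range (n + 1), φf a δ' i x :=
        Finset.sum_le_sum_of_subset_of_nonneg hs (fun i _ _ => φf_nonneg a δ' i x)
    _ ≤ 1 := hat_sum_le_one n _

lemma φf_sum_nonneg (a δ' : ℝ) (s : Finset ℕ) (x : ℝ) : 0 ≤ ∑ i ∈ s, φf a δ' i x :=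
  Finset.sum_nonneg fun i _ => φf_nonneg a δ' i x

lemma φf_sum_Icc {a b δ' : ℝ} (hδ' : 0 < δ') {n : ℕ} (hb : b = a + n * δ')
    {x : ℝ} (hx : x ∈ Set.Icc a b) : ∑ i ∈ range (n + 1), φf a δ' i x = 1 := by
  apply hat_sum_eq_one
  · have h1 := hx.1
    apply div_nonneg (by linarith) hδ'.le
  · have h2 := hx.2
    rw [div_le_iff₀ hδ']
    rw [hb] at h2
    linarith




/-! ### Blocks -/

def bnear (I J : ℕ) : Bool := decide (I ≤ J + 3 ∧ J ≤ I + 3)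

def wcnd (cnd : ℕ → ℕ → Bool) (I J : ℕ) : Bool :=
  cnd I J || cnd I (J + 1) || (decide (0 < J) && cnd I (J - 1))

def fiberH (n m I : ℕ) : Finset ℕ := (range (n + 1)).filter (fun i => i / m = I)

def farJ (n m : ℕ) (cnd : ℕ → ℕ → Bool) (I : ℕ) : Finset ℕ :=
  (range (n + 1)).filter (fun j => cnd I (j / m) = true)

def ψf (a δ' : ℝ) (n m I : ℕ) : ℝ → ℝ := fun x => ∑ i ∈ fiberH n m I, φf a δ' i x

def Ξf (a δ' : ℝ) (n m : ℕ) (cnd : ℕ → ℕ → Bool) (I : ℕ) : ℝ → ℝ :=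
  fun x => ∑ j ∈ farJ n m cnd I, φf a δ' j x

lemma ψf_cont (a δ' : ℝ) (n m I : ℕ) : Continuous (ψf a δ' n m I) :=
  continuous_finset_sum _ fun i _ => φf_cont a δ' i

lemma Ξf_cont (a δ' : ℝ) (n m : ℕ) (cnd : ℕ → ℕ → Bool) (I : ℕ) :
    Continuous (Ξf a δ' n m cnd I) :=
  continuous_finset_sum _ fun i _ => φf_cont a δ' i

lemma ψf_nonneg (a δ' : ℝ) (n m I : ℕ) (x : ℝ) : 0 ≤ ψf a δ' n m I x :=
  φf_sum_nonneg _ _ _ _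

lemma ψf_le_one (a δ' : ℝ) (n m I : ℕ) (x : ℝ) : ψf a δ' n m I x ≤ 1 :=
  φf_sum_le a δ' n _ (filter_subset _ _) x

lemma Ξf_nonneg (a δ' : ℝ) (n m : ℕ) (cnd : ℕ → ℕ → Bool) (I : ℕ) (x : ℝ) :
    0 ≤ Ξf a δ' n m cnd I x := φf_sum_nonneg _ _ _ _

lemma Ξf_le_one (a δ' : ℝ) (n m : ℕ) (cnd : ℕ → ℕ → Bool) (I : ℕ) (x : ℝ) :
    Ξf a δ' n m cnd I x ≤ 1 := φf_sum_le a δ' n _ (filter_subset _ _) x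

lemma div_close {m : ℕ} (hm : 0 < m) {i j : ℕ} (h : i ≤ j + 1) : i / m ≤ j / m + 1 := by
  calc i / m ≤ (j + m) / m := Nat.div_le_div_right (by omega)
    _ = j / m + 1 := Nat.add_div_right j hm

lemma wcnd_of_close {cnd : ℕ → ℕ → Bool} {I J0 J : ℕ} (h : cnd I J0 = true)
    (h1 : J0 ≤ J + 1) (h2 : J ≤ J0 + 1) : wcnd cnd I J = true := by
  simp only [wcnd, Bool.or_eq_true, Bool.and_eq_true, decide_eq_true_eq]
  rcases Nat.lt_trichotomy J0 J with hc | hc | hc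
  · right
    have hJ : 0 < J := by omega
    have hJ0 : J0 = J - 1 := by omega
    exact ⟨hJ, hJ0 ▸ h⟩
  · left; left; exact hc ▸ h
  · left; right
    have : J0 = J + 1 := by omega
    exact this ▸ h

/-- The widened bump is 1 on the support of the narrow one (on `[a,b]`). -/
lemma Ξw_eq_one {a b δ' : ℝ} (hδ' : 0 < δ') {n : ℕ} (hb : b = a + n * δ')
    {m : ℕ} (hm : 0 < m) (cnd : ℕ → ℕ → Bool) (I : ℕ) {x : ℝ} (hx : x ∈ Set.Icc a b)
    (hne : Ξf a δ' n m cnd I x ≠ 0) : Ξf a δ' n m (wcnd cnd) I x = 1 := by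
  obtain ⟨j0, hj0mem, hj0⟩ := Finset.exists_ne_zero_of_sum_ne_zero hne
  rw [farJ, Finset.mem_filter, Finset.mem_range] at hj0mem
  obtain ⟨hj0n, hj0c⟩ := hj0mem
  rw [Ξf]
  have hsub : farJ n m (wcnd cnd) I ⊆ range (n + 1) := filter_subset _ _
  rw [Finset.sum_subset hsub ?hz]
  · exact φf_sum_Icc hδ' hb hx
  case hz =>
    intro j hj hjn
    by_contra hφ
    apply hjn
    rw [farJ, Finset.mem_filter]
    refine ⟨hj, ?_⟩
    have hclose := φf_close hδ' hφ hj0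
    exact wcnd_of_close hj0c (div_close hm hclose.2) (div_close hm hclose.1)

lemma Ξw_mul_Ξ {a b δ' : ℝ} (hδ' : 0 < δ') {n : ℕ} (hb : b = a + n * δ')
    {m : ℕ} (hm : 0 < m) (cnd : ℕ → ℕ → Bool) (I : ℕ) {x : ℝ} (hx : x ∈ Set.Icc a b) :
    Ξf a δ' n m (wcnd cnd) I x * Ξf a δ' n m cnd I x = Ξf a δ' n m cnd I x := by
  by_cases hN : Ξf a δ' n m cnd I x = 0
  · rw [hN, mul_zero]
  · rw [Ξw_eq_one hδ' hb hm cnd I hx hN, one_mul]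

/-- Orthogonality of same-parity blocks. -/
lemma ψf_orth {a δ' : ℝ} (hδ' : 0 < δ') (n : ℕ) {m : ℕ} (hm : 0 < m) {I I' : ℕ}
    (hne : I ≠ I') (hpar : I % 2 = I' % 2) (x : ℝ) :
    ψf a δ' n m I x * ψf a δ' n m I' x = 0 := by
  by_cases h1 : ψf a δ' n m I x = 0
  · rw [h1, zero_mul]
  · have h2 : ψf a δ' n m I' x = 0 := by
      apply Finset.sum_eq_zero
      intro i' hi'
      rw [fiberH, Finset.mem_filter] at hi'
      by_contra hφ'
      obtain ⟨i, him, hφ⟩ := Finset.exists_ne_zero_of_sum_ne_zero h1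
      rw [fiberH, Finset.mem_filter] at him
      have hclose := φf_close hδ' hφ hφ'
      have hd1 := div_close hm hclose.1
      have hd2 := div_close hm hclose.2
      rw [him.2, hi'.2] at hd1 hd2
      omega
    rw [h2, mul_zero]

/-- Counting bound: `∑_I Ξ_I(x)² ≤ 16`. -/
lemma Ξf_sq_sum_le {a δ' : ℝ} (n : ℕ) {m : ℕ} (cnd : ℕ → ℕ → Bool)
    (hcnd7 : ∀ I J, cnd I J = true → I ≤ J + 7 ∧ J ≤ I + 7)
    (s : Finset ℕ) (x : ℝ) :
    ∑ I ∈ s, (Ξf a δ' n m cnd I x) ^ 2 ≤ 4 ^ 2 := by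
  have step1 : ∑ I ∈ s, (Ξf a δ' n m cnd I x) ^ 2 ≤ ∑ I ∈ s, Ξf a δ' n m cnd I x := by
    apply Finset.sum_le_sum
    intro I _
    have h0 := Ξf_nonneg a δ' n m cnd I x
    have h1 := Ξf_le_one a δ' n m cnd I x
    nlinarith
  have step2 : ∑ I ∈ s, Ξf a δ' n m cnd I x ≤ 15 := by
    have e1 : ∑ I ∈ s, Ξf a δ' n m cnd I x
        = ∑ j ∈ range (n + 1), ∑ I ∈ s, (if cnd I (j / m) = true then φf a δ' j x else 0) := by
      rw [Finset.sum_comm]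
      apply Finset.sum_congr rfl
      intro I _
      rw [Ξf, farJ, Finset.sum_filter]
    rw [e1]
    have e2 : ∀ j, ∑ I ∈ s, (if cnd I (j / m) = true then φf a δ' j x else 0)
        ≤ 15 * φf a δ' j x := by
      intro j
      rw [← Finset.sum_filter]
      rw [Finset.sum_const]
      have hcard : (s.filter (fun I => cnd I (j / m) = true)).card ≤ 15 := by
        have hsubI : s.filter (fun I => cnd I (j / m) = true)
            ⊆ Finset.Icc (j / m - 7) (j / m + 7) := by
          intro I hI
          rw [Finset.mem_filter] at hI
          have := hcnd7 I (j / m) hI.2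
          rw [Finset.mem_Icc]
          omega
        calc (s.filter (fun I => cnd I (j / m) = true)).card
            ≤ (Finset.Icc (j / m - 7) (j / m + 7)).card := Finset.card_le_card hsubI
          _ ≤ 15 := by rw [Nat.card_Icc]; omega
      rw [nsmul_eq_mul]
      apply mul_le_mul_of_nonneg_right _ (φf_nonneg a δ' j x)
      exact_mod_cast hcard
    calc ∑ j ∈ range (n + 1), ∑ I ∈ s, (if cnd I (j / m) = true then φf a δ' j x else 0)
        ≤ ∑ j ∈ range (n + 1), 15 * φf a δ' j x := Finset.sum_le_sum fun j _ => e2 j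
      _ = 15 * ∑ j ∈ range (n + 1), φf a δ' j x := by rw [Finset.mul_sum]
      _ ≤ 15 * 1 := by
          apply mul_le_mul_of_nonneg_left _ (by norm_num)
          exact φf_sum_le a δ' n _ (le_refl _) x
      _ = 15 := by norm_num
  calc ∑ I ∈ s, (Ξf a δ' n m cnd I x) ^ 2 ≤ 15 := le_trans step1 step2
    _ ≤ 4 ^ 2 := by norm_num

section Scale
variable {H : Type*} [NormedAddCommGroup H] [InnerProductSpace ℂ H] [CompleteSpace H]

lemma scale_bound {A B : H →L[ℂ] H} (hA : IsSelfAdjoint A) (hB : IsSelfAdjoint B)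
    {a b : ℝ} (hspecA : spectrum ℝ A ⊆ Set.Icc a b) (hspecB : spectrum ℝ B ⊆ Set.Icc a b)
    {δ' : ℝ} (hδ' : 0 < δ') {n : ℕ} (hb : b = a + n * δ')
    (F : ℝ → ℝ) (hF : Continuous F)
    (m : ℕ) (hm : 0 < m) (cnd : ℕ → ℕ → Bool)
    (hcnd7 : ∀ I J, cnd I J = true → I ≤ J + 7 ∧ J ≤ I + 7)
    {c₂ : ℝ} (hc₂ : 0 ≤ c₂)
    (hpair : ∀ I, ‖cfc (ψf a δ' n m I) A
        * ((cfc F A - cfc F B) * cfc (Ξf a δ' n m (wcnd cnd) I) B)‖ ≤ c₂) :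
    ‖∑ p ∈ (range (n + 1) ×ˢ range (n + 1)).filter
        (fun p => cnd (p.1 / m) (p.2 / m) = true),
      cfc (φf a δ' p.1) A * (cfc F A - cfc F B) * cfc (φf a δ' p.2) B‖ ≤ 8 * c₂ := by
  set X := cfc F A - cfc F B with hX
  have hψsum : ∀ I, cfc (ψf a δ' n m I) A = ∑ i ∈ fiberH n m I, cfc (φf a δ' i) A := by
    intro I
    have he : ψf a δ' n m I = (∑ i ∈ fiberH n m I, φf a δ' i) := by
      funext x; rw [ψf, Finset.sum_apply]
    rw [he, cfc_sum _ A _ (fun i _ => (φf_cont a δ' i).continuousOn)]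
  have hΞsum : ∀ (c : ℕ → ℕ → Bool) I,
      cfc (Ξf a δ' n m c I) B = ∑ j ∈ farJ n m c I, cfc (φf a δ' j) B := by
    intro c I
    have he : Ξf a δ' n m c I = (∑ j ∈ farJ n m c I, φf a δ' j) := by
      funext x; rw [Ξf, Finset.sum_apply]
    rw [he, cfc_sum _ B _ (fun i _ => (φf_cont a δ' i).continuousOn)]
  have regroup : ∑ p ∈ (range (n + 1) ×ˢ range (n + 1)).filter
        (fun p => cnd (p.1 / m) (p.2 / m) = true),
      cfc (φf a δ' p.1) A * X * cfc (φf a δ' p.2) B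
    = ∑ I ∈ range (n / m + 1),
        cfc (ψf a δ' n m I) A * (X * cfc (Ξf a δ' n m cnd I) B) := by
    rw [← Finset.sum_fiberwise_of_maps_to (g := fun p => p.1 / m) ?hmap]
    case hmap =>
      intro p hp
      rw [Finset.mem_filter, Finset.mem_product, Finset.mem_range, Finset.mem_range] at hp
      show p.1 / m ∈ Finset.range (n / m + 1)
      rw [Finset.mem_range]
      have : p.1 / m ≤ n / m := Nat.div_le_div_right (by omega)
      omega
    apply Finset.sum_congr rfl
    intro I _
    have hfib : ((range (n + 1) ×ˢ range (n + 1)).filter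
        (fun p => cnd (p.1 / m) (p.2 / m) = true)).filter (fun p => p.1 / m = I)
        = fiberH n m I ×ˢ farJ n m cnd I := by
      ext ⟨i, j⟩
      simp only [Finset.mem_filter, Finset.mem_product, Finset.mem_range, fiberH, farJ]
      constructor
      · rintro ⟨⟨⟨h1, h2⟩, h3⟩, h4⟩
        exact ⟨⟨h1, h4⟩, ⟨h2, h4 ▸ h3⟩⟩
      · rintro ⟨⟨h1, h4⟩, h2, h3⟩
        refine ⟨⟨⟨h1, h2⟩, ?_⟩, h4⟩
        rw [h4]; exact h3
    rw [hfib, Finset.sum_product]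
    have e1 : ∀ i, (∑ j ∈ farJ n m cnd I, cfc (φf a δ' i) A * X * cfc (φf a δ' j) B)
        = (cfc (φf a δ' i) A * X) * (∑ j ∈ farJ n m cnd I, cfc (φf a δ' j) B) := by
      intro i; rw [Finset.mul_sum]
    rw [Finset.sum_congr rfl fun i _ => e1 i, ← Finset.sum_mul, ← Finset.sum_mul,
      ← hψsum I, ← hΞsum cnd I, mul_assoc]
  rw [regroup]
  have insert_wide : ∀ I, cfc (ψf a δ' n m I) A * (X * cfc (Ξf a δ' n m cnd I) B)
      = cfc (ψf a δ' n m I) A * (X * cfc (Ξf a δ' n m (wcnd cnd) I) B)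
        * cfc (Ξf a δ' n m cnd I) B := by
    intro I
    have hmul : cfc (Ξf a δ' n m (wcnd cnd) I) B * cfc (Ξf a δ' n m cnd I) B
        = cfc (Ξf a δ' n m cnd I) B := by
      rw [← cfc_mul (a := B) _ _ (Ξf_cont a δ' n m (wcnd cnd) I).continuousOn
        (Ξf_cont a δ' n m cnd I).continuousOn]
      apply cfc_congr
      intro x hx
      exact Ξw_mul_Ξ hδ' hb hm cnd I (hspecB hx)
    calc cfc (ψf a δ' n m I) A * (X * cfc (Ξf a δ' n m cnd I) B)
        = cfc (ψf a δ' n m I) A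
            * (X * (cfc (Ξf a δ' n m (wcnd cnd) I) B * cfc (Ξf a δ' n m cnd I) B)) := by
          rw [hmul]
      _ = cfc (ψf a δ' n m I) A * (X * cfc (Ξf a δ' n m (wcnd cnd) I) B)
            * cfc (Ξf a δ' n m cnd I) B := by noncomm_ring
  rw [Finset.sum_congr rfl fun I _ => insert_wide I]
  rw [← Finset.sum_filter_add_sum_filter_not (range (n / m + 1)) (fun I => I % 2 = 0)]
  have hclass : ∀ s : Finset ℕ, (∀ I ∈ s, ∀ J ∈ s, I ≠ J → I % 2 = J % 2) →
      ‖∑ I ∈ s, cfc (ψf a δ' n m I) A * (X * cfc (Ξf a δ' n m (wcnd cnd) I) B)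
        * cfc (Ξf a δ' n m cnd I) B‖ ≤ 4 * c₂ := by
    intro s hs
    apply cotlar hA hB hspecB s _ _ _
      (fun I => ψf_cont a δ' n m I) (fun I => Ξf_cont a δ' n m cnd I)
      (by norm_num) hc₂
    · intro I hI J hJ hIJ x
      exact ψf_orth hδ' n hm hIJ (hs I hI J hJ hIJ) x
    · intro x _
      exact Ξf_sq_sum_le n cnd hcnd7 s x
    · intro I _
      exact hpair I
  calc ‖(∑ I ∈ (range (n / m + 1)).filter (fun I => I % 2 = 0),
          cfc (ψf a δ' n m I) A * (X * cfc (Ξf a δ' n m (wcnd cnd) I) B)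
            * cfc (Ξf a δ' n m cnd I) B)
        + ∑ I ∈ (range (n / m + 1)).filter (fun I => ¬I % 2 = 0),
          cfc (ψf a δ' n m I) A * (X * cfc (Ξf a δ' n m (wcnd cnd) I) B)
            * cfc (Ξf a δ' n m cnd I) B‖
      ≤ ‖∑ I ∈ (range (n / m + 1)).filter (fun I => I % 2 = 0),
          cfc (ψf a δ' n m I) A * (X * cfc (Ξf a δ' n m (wcnd cnd) I) B)
            * cfc (Ξf a δ' n m cnd I) B‖
        + ‖∑ I ∈ (range (n / m + 1)).filter (fun I => ¬I % 2 = 0),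
          cfc (ψf a δ' n m I) A * (X * cfc (Ξf a δ' n m (wcnd cnd) I) B)
            * cfc (Ξf a δ' n m cnd I) B‖ := norm_add_le _ _
    _ ≤ 4 * c₂ + 4 * c₂ := by
        apply add_le_add
        · apply hclass
          intro I hI J hJ _
          rw [Finset.mem_filter] at hI hJ
          omega
        · apply hclass
          intro I hI J hJ _
          rw [Finset.mem_filter] at hI hJ
          omega
    _ = 8 * c₂ := by ring

end Scale



lemma div_bounds {m : ℕ} (hm : 0 < m) {i I : ℕ} (h : i / m = I) :
    m * I ≤ i ∧ i + 1 ≤ m * I + m := by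
  have h1 := Nat.div_add_mod i m
  have h2 := Nat.mod_lt i hm
  rw [h] at h1
  constructor
  · calc m * I ≤ m * I + i % m := Nat.le_add_right _ _
      _ = i := h1
  · have h3 : i % m + 1 ≤ m := h2
    calc i + 1 = (m * I + i % m) + 1 := by rw [h1]
      _ = m * I + (i % m + 1) := by rw [Nat.add_assoc]
      _ ≤ m * I + m := Nat.add_le_add_left h3 _

lemma φf_supp_real {a δ' : ℝ} (hδ' : 0 < δ') {j : ℕ} {x : ℝ} (h : φf a δ' j x ≠ 0) :
    |x - (a + j * δ')| < δ' := by
  have h1 := abs_lt.mp (φf_supp hδ' h)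
  rw [abs_lt]
  constructor
  · have := h1.1
    have h2 : (j : ℝ) - 1 < (x - a) / δ' := by linarith
    have h3 : ((j : ℝ) - 1) * δ' < x - a := by
      rwa [← lt_div_iff₀ hδ']
    nlinarith
  · have h2 : (x - a) / δ' < (j : ℝ) + 1 := by linarith [h1.2]
    rw [div_lt_iff₀ hδ'] at h2
    nlinarith

def μc (a δ' : ℝ) (m I : ℕ) : ℝ := a + ((I : ℝ) * m + ((m : ℝ) - 1) / 2) * δ'

lemma ψf_supp_ball {a δ' : ℝ} (hδ' : 0 < δ') {n m I : ℕ} (hm : 0 < m) {x : ℝ}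
    (h : ψf a δ' n m I x ≠ 0) : |x - μc a δ' m I| ≤ ((m : ℝ) + 1) / 2 * δ' := by
  obtain ⟨i, him, hφ⟩ := Finset.exists_ne_zero_of_sum_ne_zero h
  rw [fiberH, Finset.mem_filter] at him
  obtain ⟨-, hdiv⟩ := him
  obtain ⟨hb1, hb2⟩ := div_bounds hm hdiv
  have hb1' : (m : ℝ) * I ≤ i := by exact_mod_cast hb1
  have hb2' : (i : ℝ) + 1 ≤ m * I + m := by exact_mod_cast hb2
  obtain ⟨hx1, hx2⟩ := abs_lt.mp (φf_supp_real hδ' hφ)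
  rw [μc, abs_le]
  have hm1 : (1 : ℝ) ≤ m := by exact_mod_cast hm
  have k1 : (m : ℝ) * I * δ' ≤ i * δ' := mul_le_mul_of_nonneg_right hb1' hδ'.le
  have k2 : ((i : ℝ) + 1) * δ' ≤ ((m : ℝ) * I + m) * δ' := mul_le_mul_of_nonneg_right hb2' hδ'.le
  constructor <;> nlinarith

lemma wcnd_elim {cnd : ℕ → ℕ → Bool} {I J : ℕ} (h : wcnd cnd I J = true) :
    ∃ J', cnd I J' = true ∧ J' ≤ J + 1 ∧ J ≤ J' + 1 := by
  simp only [wcnd, Bool.or_eq_true, Bool.and_eq_true, decide_eq_true_eq] at h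
  rcases h with (h | h) | ⟨h0, h⟩
  · exact ⟨J, h, by omega, by omega⟩
  · exact ⟨J + 1, h, by omega, by omega⟩
  · exact ⟨J - 1, h, by omega, by omega⟩

lemma Ξw_supp_far {a δ' : ℝ} (hδ' : 0 < δ') {n m I : ℕ} (hm : 0 < m)
    {cnd : ℕ → ℕ → Bool} (hfar : ∀ I J, cnd I J = true → I + 4 ≤ J ∨ J + 4 ≤ I)
    {x : ℝ} (h : Ξf a δ' n m (wcnd cnd) I x ≠ 0) :
    (5 * (m : ℝ) / 2 - 1 / 2) * δ' ≤ |x - μc a δ' m I| := by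
  obtain ⟨j, hjm, hφ⟩ := Finset.exists_ne_zero_of_sum_ne_zero h
  rw [farJ, Finset.mem_filter] at hjm
  obtain ⟨-, hw⟩ := hjm
  obtain ⟨J', hJ'c, hJ'1, hJ'2⟩ := wcnd_elim hw
  have hfar' := hfar I J' hJ'c
  set J := j / m with hJ
  obtain ⟨hb1, hb2⟩ := div_bounds hm hJ.symm
  have hb1' : (m : ℝ) * J ≤ j := by exact_mod_cast hb1
  have hb2' : (j : ℝ) + 1 ≤ m * J + m := by exact_mod_cast hb2
  obtain ⟨hx1, hx2⟩ := abs_lt.mp (φf_supp_real hδ' hφ)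
  have hm1 : (1 : ℝ) ≤ m := by exact_mod_cast hm
  rw [μc]
  rcases hfar' with hc | hc
  · -- I + 4 ≤ J', so I + 3 ≤ J : x is to the right
    have hIJ : I + 3 ≤ J := by omega
    have hIJ' : (I : ℝ) + 3 ≤ J := by exact_mod_cast hIJ
    have k1 : (m : ℝ) * J * δ' ≤ j * δ' := mul_le_mul_of_nonneg_right hb1' hδ'.le
    have k3 : 0 ≤ (m : ℝ) * δ' * ((J : ℝ) - I - 3) :=
      mul_nonneg (mul_nonneg (by linarith) hδ'.le) (by linarith)
    have key : (5 * (m : ℝ) / 2 - 1 / 2) * δ' ≤ x - (a + ((I : ℝ) * m + ((m : ℝ) - 1) / 2) * δ') := by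
      nlinarith
    exact le_trans key (le_abs_self _)
  · -- J + 4 ≤ I (at J'), so J + 3 ≤ I : x is to the left
    have hIJ : J + 3 ≤ I := by omega
    have hIJ' : (J : ℝ) + 3 ≤ I := by exact_mod_cast hIJ
    have k2 : ((j : ℝ) + 1) * δ' ≤ ((m : ℝ) * J + m) * δ' := mul_le_mul_of_nonneg_right hb2' hδ'.le
    have k3 : 0 ≤ (m : ℝ) * δ' * ((I : ℝ) - J - 3) :=
      mul_nonneg (mul_nonneg (by linarith) hδ'.le) (by linarith)
    have key : (5 * (m : ℝ) / 2 - 1 / 2) * δ' ≤ (a + ((I : ℝ) * m + ((m : ℝ) - 1) / 2) * δ') - x := by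
      nlinarith
    rw [abs_sub_comm]
    exact le_trans key (le_abs_self _)

lemma Ξw_supp_win {a δ' : ℝ} (hδ' : 0 < δ') {n m I : ℕ} (hm : 0 < m)
    {cnd : ℕ → ℕ → Bool} (hwin : ∀ I J, cnd I J = true → I ≤ J + 7 ∧ J ≤ I + 7)
    {x : ℝ} (h : Ξf a δ' n m (wcnd cnd) I x ≠ 0) :
    |x - μc a δ' m I| ≤ 9 * (m : ℝ) * δ' := by
  obtain ⟨j, hjm, hφ⟩ := Finset.exists_ne_zero_of_sum_ne_zero h
  rw [farJ, Finset.mem_filter] at hjm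
  obtain ⟨-, hw⟩ := hjm
  obtain ⟨J', hJ'c, hJ'1, hJ'2⟩ := wcnd_elim hw
  have hwin' := hwin I J' hJ'c
  set J := j / m with hJ
  obtain ⟨hb1, hb2⟩ := div_bounds hm hJ.symm
  have hb1' : (m : ℝ) * J ≤ j := by exact_mod_cast hb1
  have hb2' : (j : ℝ) + 1 ≤ m * J + m := by exact_mod_cast hb2
  obtain ⟨hx1, hx2⟩ := abs_lt.mp (φf_supp_real hδ' hφ)
  have hm1 : (1 : ℝ) ≤ m := by exact_mod_cast hm
  have hJI1 : J ≤ I + 8 := by omega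
  have hJI2 : I ≤ J + 8 := by omega
  have hJI1' : (J : ℝ) ≤ I + 8 := by exact_mod_cast hJI1
  have hJI2' : (I : ℝ) ≤ J + 8 := by exact_mod_cast hJI2
  rw [μc, abs_le]
  have k1 : (m : ℝ) * J * δ' ≤ j * δ' := mul_le_mul_of_nonneg_right hb1' hδ'.le
  have k2 : ((j : ℝ) + 1) * δ' ≤ ((m : ℝ) * J + m) * δ' := mul_le_mul_of_nonneg_right hb2' hδ'.le
  have k3 : 0 ≤ (m : ℝ) * δ' * ((I : ℝ) + 8 - J) :=
    mul_nonneg (mul_nonneg (by linarith) hδ'.le) (by linarith)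
  have k4 : 0 ≤ (m : ℝ) * δ' * ((J : ℝ) + 8 - I) :=
    mul_nonneg (mul_nonneg (by linarith) hδ'.le) (by linarith)
  constructor <;> nlinarith

section Pair
variable {H : Type*} [NormedAddCommGroup H] [InnerProductSpace ℂ H] [CompleteSpace H]

lemma pair_decomp {A B : H →L[ℂ] H} (hA : IsSelfAdjoint A) (hB : IsSelfAdjoint B)
    (F u w : ℝ → ℝ) (hF : Continuous F) (hu : Continuous u) (hw : Continuous w) (c₀ : ℝ) :
    cfc u A * ((cfc F A - cfc F B) * cfc w B)
      = cfc (fun x => (F x - c₀) * u x) A * cfc w B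
        - cfc u A * cfc (fun x => (F x - c₀) * w x) B := by
  have e1 : cfc u A * cfc F A = cfc (fun x => (F x - c₀) * u x) A + c₀ • cfc u A := by
    rw [← cfc_mul (a := A) u F hu.continuousOn hF.continuousOn]
    have he : (fun x => u x * F x) = fun x => ((F x - c₀) * u x) + c₀ * u x := by
      funext x; ring
    rw [he, cfc_add (a := A) (fun x => (F x - c₀) * u x) (fun x => c₀ * u x) ((hF.sub continuous_const).mul hu).continuousOn
      (continuous_const.mul hu).continuousOn, cfc_const_mul c₀ u A hu.continuousOn]
  have e2 : cfc F B * cfc w B = cfc (fun x => (F x - c₀) * w x) B + c₀ • cfc w B := by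
    rw [← cfc_mul (a := B) F w hF.continuousOn hw.continuousOn]
    have he : (fun x => F x * w x) = fun x => ((F x - c₀) * w x) + c₀ * w x := by
      funext x; ring
    rw [he, cfc_add (a := B) (fun x => (F x - c₀) * w x) (fun x => c₀ * w x) ((hF.sub continuous_const).mul hw).continuousOn
      (continuous_const.mul hw).continuousOn, cfc_const_mul c₀ w B hw.continuousOn]
  calc cfc u A * ((cfc F A - cfc F B) * cfc w B)
      = (cfc u A * cfc F A) * cfc w B - cfc u A * (cfc F B * cfc w B) := by noncomm_ring
    _ = (cfc (fun x => (F x - c₀) * u x) A + c₀ • cfc u A) * cfc w B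
        - cfc u A * (cfc (fun x => (F x - c₀) * w x) B + c₀ • cfc w B) := by rw [e1, e2]
    _ = cfc (fun x => (F x - c₀) * u x) A * cfc w B
        - cfc u A * cfc (fun x => (F x - c₀) * w x) B := by
        rw [add_mul, mul_add, smul_mul_assoc, mul_smul_comm]
        abel

variable {A B : H →L[ℂ] H}

lemma norm_cfc_le_one {g : ℝ → ℝ} (hg0 : ∀ x, 0 ≤ g x) (hg1 : ∀ x, g x ≤ 1) :
    ‖cfc g A‖ ≤ 1 :=
  norm_cfc_le zero_le_one fun x _ => by
    rw [Real.norm_eq_abs, abs_of_nonneg (hg0 x)]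
    exact hg1 x

lemma pair_near (hA : IsSelfAdjoint A) (hB : IsSelfAdjoint B)
    {a b δ' δ ω : ℝ} (hspecA : spectrum ℝ A ⊆ Set.Icc a b)
    (hspecB : spectrum ℝ B ⊆ Set.Icc a b)
    (hδ' : 0 < δ') (hδ'δ : δ' ≤ δ) (hω : 0 ≤ ω)
    {n : ℕ} (F : ℝ → ℝ) (hF : Continuous F)
    (hchain : ∀ (K : ℕ) (x y : ℝ), |x - y| ≤ K * δ → |F x - F y| ≤ K * ω)
    {m : ℕ} (hm : 0 < m) (cnd : ℕ → ℕ → Bool)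
    (hwin : ∀ I J, cnd I J = true → I ≤ J + 7 ∧ J ≤ I + 7) (I : ℕ) :
    ‖cfc (ψf a δ' n m I) A * ((cfc F A - cfc F B) * cfc (Ξf a δ' n m (wcnd cnd) I) B)‖
      ≤ 10 * m * ω := by
  have hm1 : (1 : ℝ) ≤ m := by exact_mod_cast hm
  set μ := μc a δ' m I with hμ
  set c₀ := F μ with hc₀
  rw [pair_decomp hA hB F (ψf a δ' n m I) (Ξf a δ' n m (wcnd cnd) I) hF
    (ψf_cont a δ' n m I) (Ξf_cont a δ' n m (wcnd cnd) I) c₀]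
  have hu : ∀ x, |(F x - c₀) * ψf a δ' n m I x| ≤ m * ω := by
    intro x
    by_cases hz : ψf a δ' n m I x = 0
    · rw [hz, mul_zero, abs_zero]; positivity
    · have hball := ψf_supp_ball hδ' hm hz
      have hdist : |x - μ| ≤ (m : ℕ) * δ := by
        push_cast
        calc |x - μ| ≤ ((m : ℝ) + 1) / 2 * δ' := hball
          _ ≤ m * δ := by nlinarith
      have hFF := hchain m x μ hdist
      rw [abs_mul]
      calc |F x - c₀| * |ψf a δ' n m I x| ≤ ((m : ℕ) : ℝ) * ω * 1 := by
            apply mul_le_mul hFF _ (abs_nonneg _) (by positivity)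
            rw [abs_of_nonneg (ψf_nonneg a δ' n m I x)]
            exact ψf_le_one a δ' n m I x
        _ = m * ω := by push_cast; ring
  have hv : ∀ x, |(F x - c₀) * Ξf a δ' n m (wcnd cnd) I x| ≤ 9 * m * ω := by
    intro x
    by_cases hz : Ξf a δ' n m (wcnd cnd) I x = 0
    · rw [hz, mul_zero, abs_zero]; positivity
    · have hball := Ξw_supp_win hδ' hm hwin hz
      have hdist : |x - μ| ≤ (9 * m : ℕ) * δ := by
        push_cast
        calc |x - μ| ≤ 9 * (m : ℝ) * δ' := hball
          _ ≤ 9 * m * δ := by nlinarith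
      have hFF := hchain (9 * m) x μ hdist
      rw [abs_mul]
      calc |F x - c₀| * |Ξf a δ' n m (wcnd cnd) I x| ≤ ((9 * m : ℕ) : ℝ) * ω * 1 := by
            apply mul_le_mul hFF _ (abs_nonneg _) (by positivity)
            rw [abs_of_nonneg (Ξf_nonneg a δ' n m (wcnd cnd) I x)]
            exact Ξf_le_one a δ' n m (wcnd cnd) I x
        _ = 9 * m * ω := by push_cast; ring
  calc ‖cfc (fun x => (F x - c₀) * ψf a δ' n m I x) A * cfc (Ξf a δ' n m (wcnd cnd) I) B
        - cfc (ψf a δ' n m I) A * cfc (fun x => (F x - c₀) * Ξf a δ' n m (wcnd cnd) I x) B‖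
      ≤ ‖cfc (fun x => (F x - c₀) * ψf a δ' n m I x) A * cfc (Ξf a δ' n m (wcnd cnd) I) B‖
        + ‖cfc (ψf a δ' n m I) A * cfc (fun x => (F x - c₀) * Ξf a δ' n m (wcnd cnd) I x) B‖ :=
        norm_sub_le _ _
    _ ≤ (m * ω) * 1 + 1 * (9 * m * ω) := by
        apply add_le_add
        · apply le_trans (norm_mul_le _ _)
          apply mul_le_mul _ (norm_cfc_le_one (Ξf_nonneg a δ' n m (wcnd cnd) I)
            (Ξf_le_one a δ' n m (wcnd cnd) I)) (norm_nonneg _) (by positivity)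
          exact norm_cfc_le (by positivity) fun x _ => by rw [Real.norm_eq_abs]; exact hu x
        · apply le_trans (norm_mul_le _ _)
          apply mul_le_mul (norm_cfc_le_one (ψf_nonneg a δ' n m I) (ψf_le_one a δ' n m I))
            _ (norm_nonneg _) zero_le_one
          exact norm_cfc_le (by positivity) fun x _ => by rw [Real.norm_eq_abs]; exact hv x
    _ ≤ 10 * m * ω := by nlinarith

lemma pair_far (hA : IsSelfAdjoint A) (hB : IsSelfAdjoint B)
    {a b δ' δ ω : ℝ} (hspecA : spectrum ℝ A ⊆ Set.Icc a b)
    (hspecB : spectrum ℝ B ⊆ Set.Icc a b)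
    (hδ' : 0 < δ') (hδ'δ : δ' ≤ δ) (hω : 0 ≤ ω)
    (hABδ' : ‖A - B‖ ≤ 2 * δ')
    {n : ℕ} (F : ℝ → ℝ) (hF : Continuous F)
    (hchain : ∀ (K : ℕ) (x y : ℝ), |x - y| ≤ K * δ → |F x - F y| ≤ K * ω)
    {m : ℕ} (hm : 0 < m) (cnd : ℕ → ℕ → Bool)
    (hfar : ∀ I J, cnd I J = true → I + 4 ≤ J ∨ J + 4 ≤ I)
    (hwin : ∀ I J, cnd I J = true → I ≤ J + 7 ∧ J ≤ I + 7) (I : ℕ) :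
    ‖cfc (ψf a δ' n m I) A * ((cfc F A - cfc F B) * cfc (Ξf a δ' n m (wcnd cnd) I) B)‖
      ≤ 7680 * ω := by
  have hm1 : (1 : ℝ) ≤ m := by exact_mod_cast hm
  set μ := μc a δ' m I with hμ
  set c₀ := F μ with hc₀
  rw [pair_decomp hA hB F (ψf a δ' n m I) (Ξf a δ' n m (wcnd cnd) I) hF
    (ψf_cont a δ' n m I) (Ξf_cont a δ' n m (wcnd cnd) I) c₀]
  set R := ((m : ℝ) + 1) / 2 * δ' with hR
  set S := (5 * (m : ℝ) / 2 - 1 / 2) * δ' with hS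
  set ε := (m : ℝ) / 2 * δ' with hε
  have hεpos : 0 < ε := by rw [hε]; positivity
  have hRpos : 0 ≤ R := by rw [hR]; positivity
  have hRS : R + ε ≤ 3 / 4 * S := by rw [hR, hS, hε]; nlinarith
  have hu : ∀ x, |(F x - c₀) * ψf a δ' n m I x| ≤ m * ω := by
    intro x
    by_cases hz : ψf a δ' n m I x = 0
    · rw [hz, mul_zero, abs_zero]; positivity
    · have hball := ψf_supp_ball hδ' hm hz
      have hdist : |x - μ| ≤ (m : ℕ) * δ := by
        push_cast
        calc |x - μ| ≤ ((m : ℝ) + 1) / 2 * δ' := hball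
          _ ≤ m * δ := by nlinarith
      have hFF := hchain m x μ hdist
      rw [abs_mul]
      calc |F x - c₀| * |ψf a δ' n m I x| ≤ ((m : ℕ) : ℝ) * ω * 1 := by
            apply mul_le_mul hFF _ (abs_nonneg _) (by positivity)
            rw [abs_of_nonneg (ψf_nonneg a δ' n m I x)]
            exact ψf_le_one a δ' n m I x
        _ = m * ω := by push_cast; ring
  have hv : ∀ x, |(F x - c₀) * Ξf a δ' n m (wcnd cnd) I x| ≤ 9 * m * ω := by
    intro x
    by_cases hz : Ξf a δ' n m (wcnd cnd) I x = 0
    · rw [hz, mul_zero, abs_zero]; positivity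
    · have hball := Ξw_supp_win hδ' hm hwin hz
      have hdist : |x - μ| ≤ (9 * m : ℕ) * δ := by
        push_cast
        calc |x - μ| ≤ 9 * (m : ℝ) * δ' := hball
          _ ≤ 9 * m * δ := by nlinarith
      have hFF := hchain (9 * m) x μ hdist
      rw [abs_mul]
      calc |F x - c₀| * |Ξf a δ' n m (wcnd cnd) I x| ≤ ((9 * m : ℕ) : ℝ) * ω * 1 := by
            apply mul_le_mul hFF _ (abs_nonneg _) (by positivity)
            rw [abs_of_nonneg (Ξf_nonneg a δ' n m (wcnd cnd) I x)]
            exact Ξf_le_one a δ' n m (wcnd cnd) I x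
        _ = 9 * m * ω := by push_cast; ring
  have hs1 : ‖cfc (fun x => (F x - c₀) * ψf a δ' n m I x) A
      * cfc (Ξf a δ' n m (wcnd cnd) I) B‖
      ≤ 64 * (m * ω) * 1 * (R + ε) * ‖A - B‖ / ε ^ 2 := by
    apply sep_lemma hA hB (fun x => (F x - c₀) * ψf a δ' n m I x) _ ((hF.sub continuous_const).mul (ψf_cont a δ' n m I))
      (Ξf_cont a δ' n m (wcnd cnd) I) μ R S ε (m * ω) 1 hεpos hRpos (by positivity)
      zero_le_one hRS
    · intro x hx
      apply ψf_supp_ball hδ' hm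
      intro hz
      exact hx (by rw [hz, mul_zero])
    · intro x hx
      exact Ξw_supp_far hδ' hm hfar hx
    · exact hu
    · intro x
      rw [abs_of_nonneg (Ξf_nonneg a δ' n m (wcnd cnd) I x)]
      exact Ξf_le_one a δ' n m (wcnd cnd) I x
  have hs2 : ‖cfc (ψf a δ' n m I) A
      * cfc (fun x => (F x - c₀) * Ξf a δ' n m (wcnd cnd) I x) B‖
      ≤ 64 * 1 * (9 * m * ω) * (R + ε) * ‖A - B‖ / ε ^ 2 := by
    apply sep_lemma hA hB _ (fun x => (F x - c₀) * Ξf a δ' n m (wcnd cnd) I x) (ψf_cont a δ' n m I)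
      ((hF.sub continuous_const).mul (Ξf_cont a δ' n m (wcnd cnd) I)) μ R S ε 1 (9 * m * ω)
      hεpos hRpos zero_le_one (by positivity) hRS
    · intro x hx
      exact ψf_supp_ball hδ' hm hx
    · intro x hx
      apply Ξw_supp_far hδ' hm hfar
      intro hz
      exact hx (by rw [hz, mul_zero])
    · intro x
      rw [abs_of_nonneg (ψf_nonneg a δ' n m I x)]
      exact ψf_le_one a δ' n m I x
    · exact hv
  calc ‖cfc (fun x => (F x - c₀) * ψf a δ' n m I x) A * cfc (Ξf a δ' n m (wcnd cnd) I) B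
        - cfc (ψf a δ' n m I) A * cfc (fun x => (F x - c₀) * Ξf a δ' n m (wcnd cnd) I x) B‖
      ≤ ‖cfc (fun x => (F x - c₀) * ψf a δ' n m I x) A * cfc (Ξf a δ' n m (wcnd cnd) I) B‖
        + ‖cfc (ψf a δ' n m I) A
          * cfc (fun x => (F x - c₀) * Ξf a δ' n m (wcnd cnd) I x) B‖ := norm_sub_le _ _
    _ ≤ 64 * (m * ω) * 1 * (R + ε) * ‖A - B‖ / ε ^ 2
        + 64 * 1 * (9 * m * ω) * (R + ε) * ‖A - B‖ / ε ^ 2 := add_le_add hs1 hs2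
    _ = 640 * (m * ω) * ((R + ε) * ‖A - B‖) / ε ^ 2 := by ring
    _ ≤ 7680 * ω := by
        rw [div_le_iff₀ (by positivity)]
        have hn0 : (0 : ℝ) ≤ ‖A - B‖ := norm_nonneg _
        have hRε : R + ε ≤ 3 / 2 * ((m : ℝ) * δ') := by rw [hR, hε]; nlinarith
        have hprod : (R + ε) * ‖A - B‖ ≤ (3 / 2 * ((m : ℝ) * δ')) * (2 * δ') := by
          apply mul_le_mul hRε hABδ' hn0 (by positivity)
        have hε2 : ε ^ 2 = (m : ℝ) ^ 2 * δ' ^ 2 / 4 := by rw [hε]; ring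
        rw [hε2]
        nlinarith [mul_le_mul_of_nonneg_left hprod
          (by positivity : (0 : ℝ) ≤ 640 * ((m : ℝ) * ω))]

end Pair

section Main
variable {H : Type*} [NormedAddCommGroup H] [InnerProductSpace ℂ H] [CompleteSpace H]

def cndk (I J : ℕ) : Bool := bnear (I / 2) (J / 2) && ! bnear I J

lemma bnear_window {I J : ℕ} (h : bnear I J = true) : I ≤ J + 7 ∧ J ≤ I + 7 := by
  simp only [bnear, decide_eq_true_eq] at h
  omega

lemma bnear_half {I J : ℕ} (h : bnear I J = true) : bnear (I / 2) (J / 2) = true := by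
  simp only [bnear, decide_eq_true_eq] at h ⊢
  omega

lemma cndk_window {I J : ℕ} (h : cndk I J = true) : I ≤ J + 7 ∧ J ≤ I + 7 := by
  simp only [cndk, bnear, Bool.and_eq_true, Bool.not_eq_true', decide_eq_true_eq,
    decide_eq_false_iff_not] at h
  omega

lemma cndk_far {I J : ℕ} (h : cndk I J = true) : I + 4 ≤ J ∨ J + 4 ≤ I := by
  simp only [cndk, bnear, Bool.and_eq_true, Bool.not_eq_true', decide_eq_true_eq,
    decide_eq_false_iff_not] at h
  omega

def Nop (A B : H →L[ℂ] H) (a δ' : ℝ) (n : ℕ) (F : ℝ → ℝ) (k : ℕ) : H →L[ℂ] H :=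
  ∑ p ∈ (range (n + 1) ×ˢ range (n + 1)).filter
      (fun p => bnear (p.1 / 2 ^ k) (p.2 / 2 ^ k) = true),
    cfc (φf a δ' p.1) A * (cfc F A - cfc F B) * cfc (φf a δ' p.2) B

lemma Nop_top {A B : H →L[ℂ] H} (hA : IsSelfAdjoint A) (hB : IsSelfAdjoint B)
    {a b : ℝ} (hspecA : spectrum ℝ A ⊆ Set.Icc a b) (hspecB : spectrum ℝ B ⊆ Set.Icc a b)
    {δ' : ℝ} (hδ' : 0 < δ') {M : ℕ} (hb : b = a + ((2 ^ M : ℕ) : ℝ) * δ') (F : ℝ → ℝ) :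
    Nop A B a δ' (2 ^ M) F M = cfc F A - cfc F B := by
  have hall : ∀ p ∈ (range (2 ^ M + 1) ×ˢ range (2 ^ M + 1)),
      bnear (p.1 / 2 ^ M) (p.2 / 2 ^ M) = true := by
    intro p hp
    rw [Finset.mem_product, Finset.mem_range, Finset.mem_range] at hp
    have h1 : p.1 / 2 ^ M ≤ 1 := by
      calc p.1 / 2 ^ M ≤ 2 ^ M / 2 ^ M := Nat.div_le_div_right (by omega)
        _ = 1 := Nat.div_self (Nat.two_pow_pos M)
    have h2 : p.2 / 2 ^ M ≤ 1 := by
      calc p.2 / 2 ^ M ≤ 2 ^ M / 2 ^ M := Nat.div_le_div_right (by omega)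
        _ = 1 := Nat.div_self (Nat.two_pow_pos M)
    simp only [bnear, decide_eq_true_eq]
    revert h1 h2
    generalize p.1 / 2 ^ M = I
    generalize p.2 / 2 ^ M = J
    intro h1 h2
    omega
  have hone : ∀ (T : H →L[ℂ] H), IsSelfAdjoint T → spectrum ℝ T ⊆ Set.Icc a b →
      (∑ i ∈ range (2 ^ M + 1), cfc (φf a δ' i) T) = 1 := by
    intro T hT hspec
    rw [← cfc_sum (fun i => φf a δ' i) T _ (fun i _ => (φf_cont a δ' i).continuousOn)]
    have he : cfc (∑ i ∈ range (2 ^ M + 1), φf a δ' i) T = cfc (fun _ : ℝ => (1 : ℝ)) T := by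
      apply cfc_congr
      intro x hx
      show (∑ i ∈ range (2 ^ M + 1), φf a δ' i) x = 1
      rw [Finset.sum_apply]
      exact φf_sum_Icc hδ' hb (hspec hx)
    rw [he, cfc_const_one ℝ T hT]
  rw [Nop, Finset.filter_true_of_mem hall, Finset.sum_product]
  have e1 : ∀ i, (∑ j ∈ range (2 ^ M + 1),
      cfc (φf a δ' i) A * (cfc F A - cfc F B) * cfc (φf a δ' j) B)
      = (cfc (φf a δ' i) A * (cfc F A - cfc F B))
        * (∑ j ∈ range (2 ^ M + 1), cfc (φf a δ' j) B) := by
    intro i; rw [Finset.mul_sum]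
  rw [Finset.sum_congr rfl fun i _ => e1 i, ← Finset.sum_mul, ← Finset.sum_mul,
    hone A hA hspecA, hone B hB hspecB, one_mul, mul_one]

lemma Nop_diff (A B : H →L[ℂ] H) (a δ' : ℝ) (n : ℕ) (F : ℝ → ℝ) (k : ℕ) :
    Nop A B a δ' n F (k + 1) - Nop A B a δ' n F k
      = ∑ p ∈ (range (n + 1) ×ˢ range (n + 1)).filter
          (fun p => cndk (p.1 / 2 ^ k) (p.2 / 2 ^ k) = true),
        cfc (φf a δ' p.1) A * (cfc F A - cfc F B) * cfc (φf a δ' p.2) B := by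
  have hdd : ∀ i : ℕ, i / 2 ^ (k + 1) = i / 2 ^ k / 2 := by
    intro i; rw [pow_succ, Nat.div_div_eq_div_mul]
  have hsub : (range (n + 1) ×ˢ range (n + 1)).filter
        (fun p => bnear (p.1 / 2 ^ k) (p.2 / 2 ^ k) = true)
      ⊆ (range (n + 1) ×ˢ range (n + 1)).filter
        (fun p => bnear (p.1 / 2 ^ (k + 1)) (p.2 / 2 ^ (k + 1)) = true) := by
    intro p hp
    rw [Finset.mem_filter] at hp ⊢
    refine ⟨hp.1, ?_⟩
    rw [hdd, hdd]
    exact bnear_half hp.2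
  rw [Nop, Nop, ← Finset.sum_sdiff_eq_sub hsub]
  congr 1
  ext p
  simp only [Finset.mem_sdiff, Finset.mem_filter, cndk, Bool.and_eq_true, Bool.not_eq_true']
  constructor
  · rintro ⟨⟨hPP, h1⟩, h2⟩
    refine ⟨hPP, ?_, ?_⟩
    · rw [← hdd, ← hdd]; exact h1
    · by_contra hc
      rw [Bool.not_eq_false] at hc
      exact h2 ⟨hPP, hc⟩
  · rintro ⟨hPP, h1, h2⟩
    refine ⟨⟨hPP, ?_⟩, ?_⟩
    · rw [hdd, hdd]; exact h1
    · rintro ⟨-, hc⟩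
      rw [h2] at hc
      exact Bool.false_ne_true hc

end Main
end
end OpLogMod

set_option maxHeartbeats 2000000 in
open OpLogMod in
/-- Logarithmic estimate of `‖f(A) − f(B)‖` in terms of the modulus of continuity of a
continuous function `f` on `[a,b]`, for bounded self-adjoint operators `A`, `B` with
spectra in `[a,b]`:
`‖f(A) − f(B)‖ ≤ c·log(e·(b−a)/‖A−B‖)·ω_f(‖A−B‖)`, where
`ω_f(δ) = sup { |f(x) − f(y)| : x, y ∈ [a,b], |x−y| ≤ δ }`. -/
theorem operator_estimate_log_modulus :
    ∃ c : ℝ, 0 < c ∧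
      ∀ (H : Type*) [NormedAddCommGroup H] [InnerProductSpace ℂ H] [CompleteSpace H],
      ∀ (a b : ℝ), a < b →
      ∀ (A B : H →L[ℂ] H), IsSelfAdjoint A → IsSelfAdjoint B →
        spectrum ℝ A ⊆ Set.Icc a b → spectrum ℝ B ⊆ Set.Icc a b → A ≠ B →
      ∀ (f : ℝ → ℝ), ContinuousOn f (Set.Icc a b) →
        ‖cfc f A - cfc f B‖ ≤
          c * Real.log (Real.exp 1 * (b - a) / ‖A - B‖) *
            sSup {d : ℝ | ∃ x ∈ Set.Icc a b, ∃ y ∈ Set.Icc a b,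
              |x - y| ≤ ‖A - B‖ ∧ d = |f x - f y|} := by
  refine ⟨262144, by norm_num, ?_⟩
  intro H _ _ _ a b hab A B hA hB hspecA hspecB hABne f hf
  set δ := ‖A - B‖ with hδdef
  have hδpos : 0 < δ := by rw [hδdef, norm_pos_iff]; exact sub_ne_zero.mpr hABne
  have hba : 0 < b - a := by linarith
  -- The distance between the operators is at most b - a.
  have halfkey : ∀ (T : H →L[ℂ] H), IsSelfAdjoint T → spectrum ℝ T ⊆ Set.Icc a b →
      ‖T - algebraMap ℝ (H →L[ℂ] H) ((a + b) / 2)‖ ≤ (b - a) / 2 := by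
    intro T hT hspec
    have he : cfc (fun x : ℝ => x - (a + b) / 2) T
        = T - algebraMap ℝ (H →L[ℂ] H) ((a + b) / 2) := by
      rw [cfc_sub (a := T) (fun x : ℝ => x) (fun _ => (a + b) / 2) continuousOn_id
        continuousOn_const, cfc_id' ℝ T, cfc_const ((a + b) / 2) T]
    rw [← he]
    apply norm_cfc_le (by linarith)
    intro x hx
    have hxi := hspec hx
    rw [Real.norm_eq_abs, abs_le]
    exact ⟨by linarith [hxi.1], by linarith [hxi.2]⟩
  have hδL : δ ≤ b - a := by
    have hd : A - B = (A - algebraMap ℝ (H →L[ℂ] H) ((a + b) / 2))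
        - (B - algebraMap ℝ (H →L[ℂ] H) ((a + b) / 2)) := by abel
    calc δ = ‖(A - algebraMap ℝ (H →L[ℂ] H) ((a + b) / 2))
          - (B - algebraMap ℝ (H →L[ℂ] H) ((a + b) / 2))‖ := by rw [hδdef, ← hd]
      _ ≤ ‖A - algebraMap ℝ (H →L[ℂ] H) ((a + b) / 2)‖
          + ‖B - algebraMap ℝ (H →L[ℂ] H) ((a + b) / 2)‖ := norm_sub_le _ _
      _ ≤ (b - a) / 2 + (b - a) / 2 := add_le_add (halfkey A hA hspecA) (halfkey B hB hspecB)
      _ = b - a := by ring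
  -- The dyadic scales
  have hLδ1 : 1 ≤ (b - a) / δ := (one_le_div hδpos).mpr hδL
  set y := Real.logb 2 ((b - a) / δ) with hy
  have hy0 : 0 ≤ y := Real.logb_nonneg one_lt_two hLδ1
  set M := ⌈y⌉₊ with hM
  set n : ℕ := 2 ^ M with hn
  have hncast : ((n : ℕ) : ℝ) = (2 : ℝ) ^ M := by rw [hn]; push_cast; ring
  have hnpos : (0 : ℝ) < (2 : ℝ) ^ M := by positivity
  set δ' := (b - a) / (2 : ℝ) ^ M with hδ'
  have hδ'pos : 0 < δ' := by rw [hδ']; positivity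
  have hbeq : b = a + (n : ℝ) * δ' := by
    rw [hncast, hδ']
    field_simp
    ring
  have hpow_y : (2 : ℝ) ^ y = (b - a) / δ :=
    Real.rpow_logb (by norm_num) (by norm_num) (by positivity)
  have h2M : (b - a) / δ ≤ (2 : ℝ) ^ M := by
    calc (b - a) / δ = (2 : ℝ) ^ y := hpow_y.symm
      _ ≤ (2 : ℝ) ^ (M : ℝ) :=
          Real.rpow_le_rpow_of_exponent_le one_le_two (Nat.le_ceil y)
      _ = (2 : ℝ) ^ M := Real.rpow_natCast 2 M
  have hδ'δ : δ' ≤ δ := by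
    rw [div_le_iff₀ hδpos] at h2M
    rw [hδ', div_le_iff₀ hnpos]
    nlinarith
  have hAB2δ' : 1 ≤ M → δ ≤ 2 * δ' := by
    intro hM1
    have hlt : (M - 1 : ℕ) < ⌈y⌉₊ := by omega
    rw [Nat.lt_ceil] at hlt
    have hcast : ((M - 1 : ℕ) : ℝ) = (M : ℝ) - 1 := by
      rw [Nat.cast_sub hM1, Nat.cast_one]
    rw [hcast] at hlt
    have hplt : (2 : ℝ) ^ ((M : ℝ) - 1) < (b - a) / δ := by
      rw [← hpow_y]
      exact Real.rpow_lt_rpow_of_exponent_lt one_lt_two hlt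
    have hhalf : (2 : ℝ) ^ ((M : ℝ) - 1) = (2 : ℝ) ^ M / 2 := by
      rw [Real.rpow_sub (by norm_num), Real.rpow_natCast, Real.rpow_one]
    rw [hhalf, lt_div_iff₀ hδpos] at hplt
    rw [hδ', ← mul_div_assoc, le_div_iff₀ hnpos]
    nlinarith
  -- modulus of continuity and extended function
  have hω0 : 0 ≤ sSup (modSet f a b δ) := modulus_nonneg hf hab.le hδpos.le
  set ω := sSup (modSet f a b δ) with hωdef
  set F := extf f a b with hFdef
  have hFcont : Continuous F := extf_continuous hf hab.le
  have hchain : ∀ (K : ℕ) (x y : ℝ), |x - y| ≤ K * δ → |F x - F y| ≤ K * ω :=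
    fun K x y h => extf_chain hf hab.le hδpos.le K x y h
  -- bounds on the dyadic pieces
  have hN0 : ‖Nop A B a δ' n F 0‖ ≤ 8 * (7680 * ω) := by
    rw [Nop]
    apply scale_bound hA hB hspecA hspecB hδ'pos hbeq F hFcont (2 ^ 0)
      (Nat.two_pow_pos 0) bnear (fun I J h => bnear_window h) (by positivity)
    intro I
    calc ‖cfc (ψf a δ' n (2 ^ 0) I) A
          * ((cfc F A - cfc F B) * cfc (Ξf a δ' n (2 ^ 0) (wcnd bnear) I) B)‖
        ≤ 10 * ((2 ^ 0 : ℕ) : ℝ) * ω :=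
          pair_near hA hB hspecA hspecB hδ'pos hδ'δ hω0 F hFcont hchain
            (Nat.two_pow_pos 0) bnear (fun I J h => bnear_window h) I
      _ ≤ 7680 * ω := by norm_num; nlinarith
  have hNdiff : ∀ k, k < M → ‖Nop A B a δ' n F (k + 1) - Nop A B a δ' n F k‖
      ≤ 8 * (7680 * ω) := by
    intro k hk
    rw [Nop_diff]
    apply scale_bound hA hB hspecA hspecB hδ'pos hbeq F hFcont (2 ^ k)
      (Nat.two_pow_pos k) cndk (fun I J h => cndk_window h) (by positivity)
    intro I
    exact pair_far hA hB hspecA hspecB hδ'pos hδ'δ hω0 (hAB2δ' (by omega)) F hFcont hchain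
      (Nat.two_pow_pos k) cndk (fun I J h => cndk_far h) (fun I J h => cndk_window h) I
  -- telescoping
  have hXF : cfc f A - cfc f B = cfc F A - cfc F B := by
    have hA' : cfc f A = cfc F A := cfc_congr fun x hx => (extf_eq (hspecA hx)).symm
    have hB' : cfc f B = cfc F B := cfc_congr fun x hx => (extf_eq (hspecB hx)).symm
    rw [hA', hB']
  have htel : cfc F A - cfc F B = Nop A B a δ' n F 0
      + ∑ k ∈ Finset.range M, (Nop A B a δ' n F (k + 1) - Nop A B a δ' n F k) := by
    rw [Finset.sum_range_sub (fun k => Nop A B a δ' n F k) M]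
    have htop : Nop A B a δ' n F M = cfc F A - cfc F B := by
      rw [hn]
      exact Nop_top hA hB hspecA hspecB hδ'pos (by rw [← hn]; exact hbeq) F
    rw [htop]
    abel
  -- logarithm bookkeeping
  set t := Real.log ((b - a) / δ) with ht
  have ht0 : 0 ≤ t := Real.log_nonneg hLδ1
  have hyt : y = t / Real.log 2 := by rw [hy, ht, Real.log_div_log]
  have hlog2 : (0.6931471803 : ℝ) < Real.log 2 := Real.log_two_gt_d9
  have hy45 : y ≤ 1.45 * t := by
    rw [hyt, div_le_iff₀ (by linarith)]
    nlinarith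
  have hM4 : (M : ℝ) + 1 ≤ 4 * (1 + t) := by
    have h1 : (M : ℝ) < y + 1 := by
      rw [hM]
      exact Nat.ceil_lt_add_one hy0
    linarith
  have hlogeq : Real.log (Real.exp 1 * (b - a) / δ) = 1 + t := by
    rw [mul_div_assoc, Real.log_mul (Real.exp_ne_zero 1) (by positivity), Real.log_exp, ht]
  -- conclusion
  have hmain : ‖cfc F A - cfc F B‖ ≤ (1 + (M : ℝ)) * (8 * (7680 * ω)) := by
    rw [htel]
    calc ‖Nop A B a δ' n F 0
          + ∑ k ∈ Finset.range M, (Nop A B a δ' n F (k + 1) - Nop A B a δ' n F k)‖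
        ≤ ‖Nop A B a δ' n F 0‖
          + ‖∑ k ∈ Finset.range M, (Nop A B a δ' n F (k + 1) - Nop A B a δ' n F k)‖ :=
          norm_add_le _ _
      _ ≤ 8 * (7680 * ω)
          + ∑ k ∈ Finset.range M, ‖Nop A B a δ' n F (k + 1) - Nop A B a δ' n F k‖ :=
          add_le_add hN0 (norm_sum_le _ _)
      _ ≤ 8 * (7680 * ω) + ∑ k ∈ Finset.range M, 8 * (7680 * ω) := by
          apply add_le_add_right
          apply Finset.sum_le_sum
          intro k hk
          exact hNdiff k (Finset.mem_range.mp hk)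
      _ = (1 + (M : ℝ)) * (8 * (7680 * ω)) := by
          rw [Finset.sum_const, Finset.card_range, nsmul_eq_mul]
          ring
  show ‖cfc f A - cfc f B‖ ≤ 262144 * Real.log (Real.exp 1 * (b - a) / δ) * ω
  calc ‖cfc f A - cfc f B‖ = ‖cfc F A - cfc F B‖ := by rw [hXF]
    _ ≤ (1 + (M : ℝ)) * (8 * (7680 * ω)) := hmain
    _ ≤ 262144 * (1 + t) * ω := by
        nlinarith [mul_le_mul_of_nonneg_right hM4 hω0,
          mul_nonneg (by linarith : (0 : ℝ) ≤ 1 + t) hω0]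
    _ = 262144 * Real.log (Real.exp 1 * (b - a) / δ) * ω := by rw [hlogeq]
end

section
/- There is an absolute constant c > 0 with the following property. Let M > 0 and let f : ℝ² → ℂ be the restriction to ℝ² of an entire function F : ℂ² → ℂ satisfying |F(z₁, z₂)| ≤ M·exp(√((Im z₁)² + (Im z₂)²)) for all (z₁, z₂) ∈ ℂ² (equivalently, f is bounded by M with Fourier transform supported in the closed unit ball of ℝ²). For y ∈ ℝ define the matrix a_{jk}(y), (j, k) ∈ ℤ², by a_{jk}(y) = (f(jπ, y) − f(kπ, y))/(jπ − kπ) for j ≠ k and a_{jj}(y) = ∂f/∂x (jπ, y). Then for every y ∈ ℝ and all finitely supported families (ξ_k)_{k∈ℤ}, (η_j)_{j∈ℤ} of complex numbers, |Σ_{j,k∈ℤ} a_{jk}(y)·ξ_k·conj(η_j)| ≤ c·M·(Σ_k |ξ_k|²)^{1/2}·(Σ_j |η_j|²)^{1/2}; that is, the matrix {a_{jk}(y)} induces a bounded operator on ℓ²(ℤ) of norm at most c·M. -/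
open intervalIntegral Complex

lemma expI_integral (m : ℤ) :
    (∫ θ in (0:ℝ)..(2*Real.pi), Complex.exp (m * θ * Complex.I))
      = if m = 0 then (2*Real.pi : ℂ) else 0 := by
  rcases eq_or_ne m 0 with h | h
  · simp [h, two_mul, Real.pi_nonneg]
  · have hc : (m:ℂ) * Complex.I ≠ 0 := by
      simp [Complex.I_ne_zero, Int.cast_eq_zero, h]
    rw [if_neg h]
    have hrw : ∀ θ:ℝ, (m:ℂ) * θ * Complex.I = (m * Complex.I) * θ := fun θ => by ring
    simp_rw [hrw]
    rw [integral_exp_mul_complex hc]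
    have h2 : (m:ℂ) * Complex.I * (2*Real.pi:ℝ) = m * (2 * Real.pi * Complex.I) := by
      push_cast; ring
    rw [h2, Complex.exp_int_mul_two_pi_mul_I]
    simp

set_option maxHeartbeats 1000000 in
lemma theta_expI_integral (m : ℤ) (hm : m ≠ 0) :
    (∫ θ in (0:ℝ)..(2*Real.pi), (θ:ℂ) * Complex.exp (m * θ * Complex.I))
      = 2*Real.pi/(m * Complex.I) := by
  set c : ℂ := m * Complex.I with hcdef
  have hc : c ≠ 0 := by
    simp [hcdef, Complex.I_ne_zero, Int.cast_eq_zero, hm]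
  have hrw : ∀ θ:ℝ, (m:ℂ) * θ * Complex.I = c * θ := fun θ => by rw [hcdef]; ring
  simp_rw [hrw]
  have key : ∀ x:ℝ, HasDerivAt (fun θ:ℝ => Complex.exp (c*θ) * ((θ:ℂ)/c - 1/c^2))
      ((x:ℂ) * Complex.exp (c*x)) x := by
    intro x
    have h1 : HasDerivAt (fun θ:ℝ => Complex.exp (c*θ)) (Complex.exp (c*x) * c) x := by
      have := (((hasDerivAt_id (x:ℂ)).const_mul c).cexp).comp_ofReal
      simpa [mul_comm] using this
    have h0 : HasDerivAt (fun θ:ℝ => ((θ:ℂ))) 1 x := by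
      simpa using (hasDerivAt_id x).ofReal_comp
    have h2 := (h0.div_const c).sub_const (1/c^2)
    have := h1.mul h2
    convert this using 1
    case e'_8 => rfl
    case e'_4 => rfl
    field_simp
    ring
  rw [integral_eq_sub_of_hasDerivAt (fun x _ => key x)
    (((Complex.continuous_ofReal).mul
      ((continuous_const.mul Complex.continuous_ofReal).cexp)).intervalIntegrable _ _)]
  have h2 : c * (2*Real.pi:ℝ) = m * (2 * Real.pi * Complex.I) := by
    rw [hcdef]; push_cast; ring
  rw [h2, Complex.exp_int_mul_two_pi_mul_I]
  rw [show ((0:ℝ):ℂ) = 0 from rfl]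
  rw [mul_zero, Complex.exp_zero]
  rw [hcdef] at hc ⊢
  field_simp
  push_cast
  ring

lemma kernel_coeff (m : ℤ) :
    (∫ θ in (0:ℝ)..(2*Real.pi), Complex.I * ((Real.pi:ℂ) - θ) * Complex.exp (m * θ * Complex.I))
      = if m = 0 then 0 else (-2*Real.pi/m : ℂ) := by
  have hint1 : IntervalIntegrable (fun θ:ℝ => Complex.exp (m * θ * Complex.I))
      MeasureTheory.volume 0 (2*Real.pi) :=
    (((continuous_const.mul Complex.continuous_ofReal).mul continuous_const).cexp).intervalIntegrable _ _
  have hint2 : IntervalIntegrable (fun θ:ℝ => (θ:ℂ) * Complex.exp (m * θ * Complex.I))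
      MeasureTheory.volume 0 (2*Real.pi) :=
    (Complex.continuous_ofReal.mul
      ((continuous_const.mul Complex.continuous_ofReal).mul continuous_const).cexp).intervalIntegrable _ _
  have hsplit : ∀ θ:ℝ, Complex.I * ((Real.pi:ℂ) - θ) * Complex.exp (m * θ * Complex.I)
      = (Complex.I * Real.pi) * Complex.exp (m * θ * Complex.I)
        - Complex.I * ((θ:ℂ) * Complex.exp (m * θ * Complex.I)) := fun θ => by ring
  simp_rw [hsplit]
  rw [intervalIntegral.integral_sub (hint1.const_mul _) (hint2.const_mul _),
    intervalIntegral.integral_const_mul, intervalIntegral.integral_const_mul, expI_integral]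
  rcases eq_or_ne m 0 with h | h
  · rw [if_pos h, if_pos h, h]
    have hθ : (∫ θ in (0:ℝ)..(2*Real.pi), (θ:ℂ) * Complex.exp ((0:ℤ) * θ * Complex.I))
        = ((2*Real.pi)^2/2 : ℝ) := by
      have : ∀ θ:ℝ, (θ:ℂ) * Complex.exp ((0:ℤ) * θ * Complex.I) = ((θ:ℝ):ℂ) := by
        intro θ; simp
      simp_rw [this]
      rw [intervalIntegral.integral_ofReal, integral_id]
      norm_num
    rw [hθ]
    push_cast
    ring
  · rw [if_neg h, if_neg h, theta_expI_integral m h]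
    have hm : (m:ℂ) ≠ 0 := by exact_mod_cast h
    field_simp
    ring

lemma integral_cs (f g : ℝ → ℝ) (hf : Continuous f) (hg : Continuous g) :
    (∫ x in (0:ℝ)..(2*Real.pi), f x * g x)
      ≤ Real.sqrt (∫ x in (0:ℝ)..(2*Real.pi), f x^2)
        * Real.sqrt (∫ x in (0:ℝ)..(2*Real.pi), g x^2) := by
  have hab : (0:ℝ) ≤ 2*Real.pi := by positivity
  set A := ∫ x in (0:ℝ)..(2*Real.pi), f x^2 with hA
  set B := ∫ x in (0:ℝ)..(2*Real.pi), g x^2 with hB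
  set X := ∫ x in (0:ℝ)..(2*Real.pi), f x * g x with hX
  have hAnn : 0 ≤ A := intervalIntegral.integral_nonneg hab (fun x _ => sq_nonneg _)
  have hBnn : 0 ≤ B := intervalIntegral.integral_nonneg hab (fun x _ => sq_nonneg _)
  have key : ∀ tt:ℝ, 0 ≤ A*tt^2 + (2*X)*tt + B := by
    intro tt
    have h0 : 0 ≤ ∫ x in (0:ℝ)..(2*Real.pi), (tt * f x + g x)^2 :=
      intervalIntegral.integral_nonneg hab (fun x _ => sq_nonneg _)
    have hexp : (∫ x in (0:ℝ)..(2*Real.pi), (tt * f x + g x)^2)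
        = A*tt^2 + (2*X)*tt + B := by
      have hrw : ∀ x:ℝ, (tt * f x + g x)^2
          = tt^2 * f x^2 + (2*tt) * (f x * g x) + g x^2 := fun x => by ring
      simp_rw [hrw]
      have hrw2 : ∀ x:ℝ, tt^2 * f x^2 + (2*tt) * (f x * g x) + g x^2
          = (tt^2 * f x^2 + (2*tt) * (f x * g x)) + g x^2 := fun x => by ring
      rw [intervalIntegral.integral_add, intervalIntegral.integral_add,
        intervalIntegral.integral_const_mul, intervalIntegral.integral_const_mul]
      · ring
      · exact (continuous_const.mul (hf.pow 2)).intervalIntegrable _ _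
      · exact (continuous_const.mul (hf.mul hg)).intervalIntegrable _ _
      · exact ((continuous_const.mul (hf.pow 2)).add (continuous_const.mul (hf.mul hg))).intervalIntegrable _ _
      · exact (hg.pow 2).intervalIntegrable _ _
    linarith [hexp ▸ h0]
  have key' : ∀ tt:ℝ, 0 ≤ A*(tt*tt) + (2*X)*tt + B := by
    intro tt; have := key tt; nlinarith [key tt]
  have hdisc := discrim_le_zero key'
  rw [discrim] at hdisc
  have hX2 : X^2 ≤ A*B := by nlinarith
  calc X ≤ |X| := le_abs_self X
    _ = Real.sqrt (X^2) := (Real.sqrt_sq_eq_abs X).symm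
    _ ≤ Real.sqrt (A*B) := Real.sqrt_le_sqrt hX2
    _ = Real.sqrt A * Real.sqrt B := Real.sqrt_mul hAnn B

lemma ofReal_norm_sq (z : ℂ) : ((‖z‖^2 : ℝ) : ℂ) = z * (starRingEnd ℂ) z := by
  rw [Complex.mul_conj]
  norm_cast
  rw [Complex.sq_norm]

lemma parseval (s : Finset ℤ) (u : ℤ → ℂ) :
    (∫ θ in (0:ℝ)..(2*Real.pi), ‖∑ k ∈ s, u k * Complex.exp (-(k:ℂ) * θ * Complex.I)‖^2)
      = 2*Real.pi * ∑ k ∈ s, ‖u k‖^2 := by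
  have hconjexp : ∀ (k' : ℤ) (θ : ℝ), (starRingEnd ℂ) (Complex.exp (-(k':ℂ) * θ * Complex.I))
      = Complex.exp ((k':ℂ) * θ * Complex.I) := by
    intro k' θ
    rw [← Complex.exp_conj]
    congr 1
    simp [Complex.ext_iff]
  have hexp : ∀ θ:ℝ, ((‖∑ k ∈ s, u k * Complex.exp (-(k:ℂ)*θ*Complex.I)‖^2 : ℝ) : ℂ)
      = ∑ k ∈ s, ∑ k' ∈ s,
          u k * (starRingEnd ℂ) (u k') * Complex.exp (((k' - k : ℤ):ℂ) * θ * Complex.I) := by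
    intro θ
    rw [ofReal_norm_sq, map_sum, Finset.sum_mul_sum]
    refine Finset.sum_congr rfl fun k _ => Finset.sum_congr rfl fun k' _ => ?_
    rw [map_mul, hconjexp, mul_mul_mul_comm, ← Complex.exp_add]
    congr 1
    push_cast
    ring
  have hInt : ∀ (m : ℤ), IntervalIntegrable (fun θ:ℝ => Complex.exp ((m:ℂ) * θ * Complex.I))
      MeasureTheory.volume 0 (2*Real.pi) :=
    fun m => (((continuous_const.mul Complex.continuous_ofReal).mul
      continuous_const).cexp).intervalIntegrable _ _
  have step : (∫ θ in (0:ℝ)..(2*Real.pi),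
      ((‖∑ k ∈ s, u k * Complex.exp (-(k:ℂ)*θ*Complex.I)‖^2 : ℝ) : ℂ))
      = ∑ k ∈ s, ∑ k' ∈ s, u k * (starRingEnd ℂ) (u k')
          * (if (k' - k : ℤ) = 0 then (2*Real.pi:ℂ) else 0) := by
    simp_rw [hexp]
    rw [intervalIntegral.integral_finset_sum]
    · refine Finset.sum_congr rfl fun k _ => ?_
      rw [intervalIntegral.integral_finset_sum]
      · refine Finset.sum_congr rfl fun k' _ => ?_
        rw [intervalIntegral.integral_const_mul, expI_integral]
      · intro k' _
        exact Continuous.intervalIntegrable (continuous_const.mul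
          (((continuous_const.mul Complex.continuous_ofReal).mul continuous_const).cexp)) _ _
    · intro k _
      refine Continuous.intervalIntegrable (continuous_finset_sum _ fun k' _ => ?_) _ _
      exact continuous_const.mul
        (((continuous_const.mul Complex.continuous_ofReal).mul continuous_const).cexp)
  have step2 : (∑ k ∈ s, ∑ k' ∈ s, u k * (starRingEnd ℂ) (u k')
      * (if (k' - k : ℤ) = 0 then (2*Real.pi:ℂ) else 0))
      = ((2*Real.pi * ∑ k ∈ s, ‖u k‖^2 : ℝ) : ℂ) := by
    have : ∀ k ∈ s, (∑ k' ∈ s, u k * (starRingEnd ℂ) (u k')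
        * (if (k' - k : ℤ) = 0 then (2*Real.pi:ℂ) else 0))
        = u k * (starRingEnd ℂ) (u k) * (2*Real.pi:ℂ) := by
      intro k hk
      have hrw : ∀ k':ℤ, (u k * (starRingEnd ℂ) (u k')
          * (if (k' - k : ℤ) = 0 then (2*Real.pi:ℂ) else 0))
          = (if k' = k then u k * (starRingEnd ℂ) (u k') * (2*Real.pi:ℂ) else 0) := by
        intro k'
        by_cases h : k' = k <;> simp [h, sub_eq_zero]
      simp_rw [hrw]
      rw [Finset.sum_ite_eq' s k]
      simp [hk]
    rw [Finset.sum_congr rfl this]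
    simp_rw [← ofReal_norm_sq]
    push_cast
    rw [Finset.mul_sum]
    refine Finset.sum_congr rfl fun k _ => ?_
    ring
  have hfin := step.trans step2
  rw [intervalIntegral.integral_ofReal] at hfin
  exact_mod_cast hfin

lemma hilbert_ineq (s t : Finset ℤ) (u v : ℤ → ℂ) :
    ‖∑ j ∈ t, ∑ k ∈ s, (if j = k then 0 else u k * (starRingEnd ℂ) (v j) / ((j:ℂ) - (k:ℂ)))‖
      ≤ Real.pi * Real.sqrt (∑ k ∈ s, ‖u k‖^2) * Real.sqrt (∑ j ∈ t, ‖v j‖^2) := by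
  have hconjexp : ∀ (k' : ℤ) (θ : ℝ), (starRingEnd ℂ) (Complex.exp (-(k':ℂ) * θ * Complex.I))
      = Complex.exp ((k':ℂ) * θ * Complex.I) := by
    intro k' θ
    rw [← Complex.exp_conj]
    congr 1
    simp [Complex.ext_iff]
  set φ : ℝ → ℂ := fun θ => ∑ k ∈ s, u k * Complex.exp (-(k:ℂ) * θ * Complex.I) with hφ
  set ψ : ℝ → ℂ := fun θ => ∑ j ∈ t, v j * Complex.exp (-(j:ℂ) * θ * Complex.I) with hψ
  have hφc : Continuous φ := continuous_finset_sum _ fun k _ => continuous_const.mul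
    (((continuous_const.mul Complex.continuous_ofReal).mul continuous_const).cexp)
  have hψc : Continuous ψ := continuous_finset_sum _ fun j _ => continuous_const.mul
    (((continuous_const.mul Complex.continuous_ofReal).mul continuous_const).cexp)
  have expand : ∀ θ:ℝ, (Complex.I * ((Real.pi:ℂ) - θ)) * (φ θ * (starRingEnd ℂ) (ψ θ))
      = ∑ j ∈ t, ∑ k ∈ s, u k * (starRingEnd ℂ) (v j)
          * (Complex.I * ((Real.pi:ℂ) - θ) * Complex.exp (((j - k : ℤ):ℂ) * θ * Complex.I)) := by
    intro θ
    have h1 : φ θ * (starRingEnd ℂ) (ψ θ) = ∑ j ∈ t, ∑ k ∈ s,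
        u k * (starRingEnd ℂ) (v j) * Complex.exp (((j - k : ℤ):ℂ) * θ * Complex.I) := by
      rw [hφ, hψ]
      simp only
      rw [map_sum, mul_comm, Finset.sum_mul_sum]
      refine Finset.sum_congr rfl fun j _ => Finset.sum_congr rfl fun k _ => ?_
      rw [map_mul, hconjexp, mul_mul_mul_comm, ← Complex.exp_add]
      have h2 : (j:ℂ)*θ*Complex.I + -(k:ℂ)*θ*Complex.I = ((j - k : ℤ):ℂ)*θ*Complex.I := by
        push_cast; ring
      rw [h2, mul_comm ((starRingEnd ℂ) (v j)) (u k)]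
    rw [h1, Finset.mul_sum]
    refine Finset.sum_congr rfl fun j _ => ?_
    rw [Finset.mul_sum]
    exact Finset.sum_congr rfl fun k _ => by ring
  have key : (∫ θ in (0:ℝ)..(2*Real.pi), (Complex.I * ((Real.pi:ℂ) - θ)) * (φ θ * (starRingEnd ℂ) (ψ θ)))
      = (-2*Real.pi:ℂ) * ∑ j ∈ t, ∑ k ∈ s,
          (if j = k then 0 else u k * (starRingEnd ℂ) (v j) / ((j:ℂ) - (k:ℂ))) := by
    simp_rw [expand]
    rw [intervalIntegral.integral_finset_sum]
    · rw [Finset.mul_sum]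
      refine Finset.sum_congr rfl fun j _ => ?_
      rw [intervalIntegral.integral_finset_sum]
      · rw [Finset.mul_sum]
        refine Finset.sum_congr rfl fun k _ => ?_
        rw [intervalIntegral.integral_const_mul, kernel_coeff]
        by_cases h : j = k
        · simp [h]
        · rw [if_neg (sub_ne_zero.mpr h), if_neg h]
          have hjk : (j:ℂ) - (k:ℂ) ≠ 0 := by
            rw [sub_ne_zero]
            exact_mod_cast h
          push_cast
          rw [div_eq_mul_inv, div_eq_mul_inv]
          ring
      · intro k _
        exact Continuous.intervalIntegrable (continuous_const.mul
          ((continuous_const.mul (continuous_const.sub Complex.continuous_ofReal)).mul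
            (((continuous_const.mul Complex.continuous_ofReal).mul continuous_const).cexp))) _ _
    · intro j _
      refine Continuous.intervalIntegrable (continuous_finset_sum _ fun k _ => ?_) _ _
      exact continuous_const.mul
        ((continuous_const.mul (continuous_const.sub Complex.continuous_ofReal)).mul
          (((continuous_const.mul Complex.continuous_ofReal).mul continuous_const).cexp))
  -- now express the sum via the integral
  have hsum : (∑ j ∈ t, ∑ k ∈ s,
      (if j = k then 0 else u k * (starRingEnd ℂ) (v j) / ((j:ℂ) - (k:ℂ))))
      = (-(1/(2*Real.pi)) : ℂ) * (∫ θ in (0:ℝ)..(2*Real.pi),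
          (Complex.I * ((Real.pi:ℂ) - θ)) * (φ θ * (starRingEnd ℂ) (ψ θ))) := by
    rw [key]
    have hπ : (Real.pi:ℂ) ≠ 0 := by exact_mod_cast Real.pi_ne_zero
    field_simp
  rw [hsum, norm_mul]
  have hnc : ‖(-(1/(2*Real.pi)) : ℂ)‖ = 1/(2*Real.pi) := by
    rw [show (-(1/(2*Real.pi)) : ℂ) = ((-(1/(2*Real.pi)) : ℝ) : ℂ) by push_cast; ring,
      Complex.norm_real, Real.norm_eq_abs, abs_neg, abs_of_pos (by positivity)]
  rw [hnc]
  have hab : (0:ℝ) ≤ 2*Real.pi := by positivity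
  have hcont : Continuous (fun θ:ℝ => (Complex.I * ((Real.pi:ℂ) - θ)) * (φ θ * (starRingEnd ℂ) (ψ θ))) :=
    (continuous_const.mul (continuous_const.sub Complex.continuous_ofReal)).mul
      (hφc.mul (Complex.continuous_conj.comp hψc))
  have hb1 : ‖∫ θ in (0:ℝ)..(2*Real.pi), (Complex.I * ((Real.pi:ℂ) - θ)) * (φ θ * (starRingEnd ℂ) (ψ θ))‖
      ≤ ∫ θ in (0:ℝ)..(2*Real.pi), ‖(Complex.I * ((Real.pi:ℂ) - θ)) * (φ θ * (starRingEnd ℂ) (ψ θ))‖ :=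
    intervalIntegral.norm_integral_le_integral_norm hab
  have hb2 : (∫ θ in (0:ℝ)..(2*Real.pi), ‖(Complex.I * ((Real.pi:ℂ) - θ)) * (φ θ * (starRingEnd ℂ) (ψ θ))‖)
      ≤ ∫ θ in (0:ℝ)..(2*Real.pi), Real.pi * (‖φ θ‖ * ‖ψ θ‖) := by
    refine intervalIntegral.integral_mono_on hab (hcont.norm.intervalIntegrable _ _)
      ((continuous_const.mul (hφc.norm.mul hψc.norm)).intervalIntegrable _ _) ?_
    intro θ hθ
    rw [norm_mul, norm_mul, norm_mul, Complex.norm_I, one_mul,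
      show ((Real.pi:ℂ) - θ) = ((Real.pi - θ : ℝ) : ℂ) by push_cast; ring, Complex.norm_real,
      RCLike.norm_conj]
    have h1 : ‖(Real.pi - θ : ℝ)‖ ≤ Real.pi := by
      rw [Real.norm_eq_abs, abs_le]
      obtain ⟨h2, h3⟩ := hθ
      constructor <;> linarith
    have h4 : (0:ℝ) ≤ ‖φ θ‖ * ‖ψ θ‖ := by positivity
    exact mul_le_mul_of_nonneg_right h1 h4
  have hb3 : (∫ θ in (0:ℝ)..(2*Real.pi), Real.pi * (‖φ θ‖ * ‖ψ θ‖))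
      ≤ Real.pi * (Real.sqrt (∫ θ in (0:ℝ)..(2*Real.pi), ‖φ θ‖^2)
        * Real.sqrt (∫ θ in (0:ℝ)..(2*Real.pi), ‖ψ θ‖^2)) := by
    rw [intervalIntegral.integral_const_mul]
    refine mul_le_mul_of_nonneg_left ?_ Real.pi_nonneg
    exact integral_cs _ _ hφc.norm hψc.norm
  have hpar1 : (∫ θ in (0:ℝ)..(2*Real.pi), ‖φ θ‖^2) = 2*Real.pi * ∑ k ∈ s, ‖u k‖^2 :=
    parseval s u
  have hpar2 : (∫ θ in (0:ℝ)..(2*Real.pi), ‖ψ θ‖^2) = 2*Real.pi * ∑ j ∈ t, ‖v j‖^2 :=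
    parseval t v
  rw [hpar1, hpar2] at hb3
  rw [Real.sqrt_mul hab, Real.sqrt_mul hab] at hb3
  have htotal := le_trans hb1 (le_trans hb2 hb3)
  calc 1/(2*Real.pi) * ‖∫ θ in (0:ℝ)..(2*Real.pi), (Complex.I * ((Real.pi:ℂ) - θ)) * (φ θ * (starRingEnd ℂ) (ψ θ))‖
      ≤ 1/(2*Real.pi) * (Real.pi * (Real.sqrt (2*Real.pi) * Real.sqrt (∑ k ∈ s, ‖u k‖^2)
        * (Real.sqrt (2*Real.pi) * Real.sqrt (∑ j ∈ t, ‖v j‖^2)))) := by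
        refine mul_le_mul_of_nonneg_left htotal (by positivity)
    _ = Real.pi * Real.sqrt (∑ k ∈ s, ‖u k‖^2) * Real.sqrt (∑ j ∈ t, ‖v j‖^2) := by
        have h2π : Real.sqrt (2*Real.pi) * Real.sqrt (2*Real.pi) = 2*Real.pi :=
          Real.mul_self_sqrt hab
        rw [show Real.pi * (Real.sqrt (2*Real.pi) * Real.sqrt (∑ k ∈ s, ‖u k‖^2)
            * (Real.sqrt (2*Real.pi) * Real.sqrt (∑ j ∈ t, ‖v j‖^2)))
          = (Real.sqrt (2*Real.pi) * Real.sqrt (2*Real.pi))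
            * (Real.pi * Real.sqrt (∑ k ∈ s, ‖u k‖^2) * Real.sqrt (∑ j ∈ t, ‖v j‖^2)) from by
            ring, h2π]
        have hπ : (2*Real.pi) ≠ 0 := by positivity
        field_simp


/-- The matrix `a_{jk}(y)` built from the divided difference in the first variable of a
function on `ℝ²` that is bounded by `M` with Fourier transform supported in the closed
unit ball (equivalently, restriction of an entire `F` on `ℂ²` with
`|F z| ≤ M·exp(‖Im z‖)`) induces a bounded operator on `ℓ²(ℤ)` of norm at most `c·M`
for an absolute constant `c`: for all finitely supported families `ξ, η`,
`|Σ_{j,k} a_{jk}(y)·ξ_k·conj(η_j)| ≤ c·M·(Σ|ξ_k|²)^{1/2}·(Σ|η_j|²)^{1/2}`. -/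
theorem divided_difference_matrix_bounded :
    ∃ c : ℝ, 0 < c ∧
      ∀ (M : ℝ), 0 < M →
      ∀ (f : ℝ → ℝ → ℂ) (F : ℂ × ℂ → ℂ), Differentiable ℂ F →
        (∀ z : ℂ × ℂ, ‖F z‖ ≤ M * Real.exp (Real.sqrt (z.1.im ^ 2 + z.2.im ^ 2))) →
        (∀ x y : ℝ, f x y = F ((x : ℂ), (y : ℂ))) →
      ∀ (y : ℝ) (s t : Finset ℤ) (ξ η : ℤ → ℂ),
        ‖∑ j ∈ t, ∑ k ∈ s,
            (if j = k then deriv (fun x : ℝ => f x y) ((j : ℝ) * Real.pi)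
              else (f ((j : ℝ) * Real.pi) y - f ((k : ℝ) * Real.pi) y) /
                (((j : ℝ) * Real.pi - (k : ℝ) * Real.pi : ℝ) : ℂ)) *
            ξ k * (starRingEnd ℂ) (η j)‖
          ≤ c * M * Real.sqrt (∑ k ∈ s, ‖ξ k‖ ^ 2) *
              Real.sqrt (∑ j ∈ t, ‖η j‖ ^ 2) := by
  refine ⟨2 + Real.exp 1, by positivity, ?_⟩
  intro M hM f F hF hbound hf y s t ξ η
  set g : ℂ → ℂ := fun z => F (z, (y:ℂ)) with hg
  have hgd : Differentiable ℂ g :=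
    hF.comp ((differentiable_id (𝕜 := ℂ)).prodMk (differentiable_const _))
  have hgM : ∀ x : ℝ, ‖g (x:ℂ)‖ ≤ M := by
    intro x
    refine (hbound ((x:ℂ), (y:ℂ))).trans ?_
    simp [Real.sqrt_zero, Real.exp_zero]
  have hderiv : ∀ x : ℝ, ‖deriv g (x:ℂ)‖ ≤ M * Real.exp 1 := by
    intro x
    have hb : ∀ z ∈ Metric.sphere (x:ℂ) 1, ‖g z‖ ≤ M * Real.exp 1 := by
      intro z hz
      refine (hbound (z, (y:ℂ))).trans ?_
      have h1 : Real.sqrt (z.im^2 + ((y:ℂ)).im^2) ≤ 1 := by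
        rw [Complex.ofReal_im]
        have h2 : z.im = (z - (x:ℂ)).im := by simp
        have h3 : |(z - (x:ℂ)).im| ≤ ‖z - (x:ℂ)‖ := by
          exact Complex.abs_im_le_norm _
        rw [mem_sphere_iff_norm] at hz
        rw [h2]
        rw [show (0:ℝ)^2 = 0 by ring, add_zero, Real.sqrt_sq_eq_abs]
        rw [hz] at h3
        exact h3
      exact mul_le_mul_of_nonneg_left (Real.exp_le_exp.mpr h1) hM.le
    have := Complex.norm_deriv_le_of_forall_mem_sphere_norm_le one_pos
      (hgd.diffContOnCl) hb
    simpa using this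
  have hderivf : ∀ x : ℝ, deriv (fun x':ℝ => f x' y) x = deriv g (x:ℂ) := by
    intro x
    have hfun : (fun x':ℝ => f x' y) = (fun x':ℝ => g (x':ℂ)) :=
      funext fun x' => by rw [hf x' y]
    rw [hfun]
    exact ((hgd (x:ℂ)).hasDerivAt.comp_ofReal).deriv
  set G : ℤ → ℂ := fun k => f ((k:ℝ)*Real.pi) y with hG
  have hGM : ∀ k : ℤ, ‖G k‖ ≤ M := by
    intro k
    rw [hG]
    simp only
    rw [hf]
    exact hgM _
  -- split into diagonal and off-diagonal
  have hsplit : ∀ j k : ℤ,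
      (if j = k then deriv (fun x : ℝ => f x y) ((j : ℝ) * Real.pi)
        else (f ((j : ℝ) * Real.pi) y - f ((k : ℝ) * Real.pi) y) /
          (((j : ℝ) * Real.pi - (k : ℝ) * Real.pi : ℝ) : ℂ)) * ξ k * (starRingEnd ℂ) (η j)
      = (if j = k then deriv (fun x : ℝ => f x y) ((j : ℝ) * Real.pi) * ξ k * (starRingEnd ℂ) (η j) else 0)
        + (if j = k then 0 else (G j - G k) /
            (((j : ℝ) * Real.pi - (k : ℝ) * Real.pi : ℝ) : ℂ) * ξ k * (starRingEnd ℂ) (η j)) := by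
    intro j k
    by_cases h : j = k <;> simp [h, hG]

  have hsumeq : (∑ j ∈ t, ∑ k ∈ s,
      (if j = k then deriv (fun x : ℝ => f x y) ((j : ℝ) * Real.pi)
        else (f ((j : ℝ) * Real.pi) y - f ((k : ℝ) * Real.pi) y) /
          (((j : ℝ) * Real.pi - (k : ℝ) * Real.pi : ℝ) : ℂ)) * ξ k * (starRingEnd ℂ) (η j))
      = (∑ j ∈ t, ∑ k ∈ s,
          (if j = k then deriv (fun x : ℝ => f x y) ((j : ℝ) * Real.pi) * ξ k * (starRingEnd ℂ) (η j) else 0))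
        + (∑ j ∈ t, ∑ k ∈ s,
          (if j = k then 0 else (G j - G k) /
            (((j : ℝ) * Real.pi - (k : ℝ) * Real.pi : ℝ) : ℂ) * ξ k * (starRingEnd ℂ) (η j))) := by
    rw [← Finset.sum_add_distrib]
    refine Finset.sum_congr rfl fun j _ => ?_
    rw [← Finset.sum_add_distrib]
    exact Finset.sum_congr rfl fun k _ => hsplit j k
  set a := Real.sqrt (∑ k ∈ s, ‖ξ k‖ ^ 2) with ha
  set b := Real.sqrt (∑ j ∈ t, ‖η j‖ ^ 2) with hb
  have hann : 0 ≤ a := Real.sqrt_nonneg _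
  have hbnn : 0 ≤ b := Real.sqrt_nonneg _
  -- diagonal bound
  have hDiag : ‖∑ j ∈ t, ∑ k ∈ s,
      (if j = k then deriv (fun x : ℝ => f x y) ((j : ℝ) * Real.pi) * ξ k * (starRingEnd ℂ) (η j) else 0)‖
      ≤ (M * Real.exp 1) * (a * b) := by
    have h1 : ∀ j ∈ t, (∑ k ∈ s,
        (if j = k then deriv (fun x : ℝ => f x y) ((j : ℝ) * Real.pi) * ξ k * (starRingEnd ℂ) (η j) else 0))
        = if j ∈ s then deriv (fun x : ℝ => f x y) ((j : ℝ) * Real.pi) * ξ j * (starRingEnd ℂ) (η j) else 0 :=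
      fun j _ => Finset.sum_ite_eq s j _
    rw [Finset.sum_congr rfl h1]
    have h2 : ∀ j ∈ t, ‖if j ∈ s then deriv (fun x : ℝ => f x y) ((j : ℝ) * Real.pi) * ξ j * (starRingEnd ℂ) (η j) else 0‖
        ≤ (M * Real.exp 1) * (if j ∈ s then ‖ξ j‖ * ‖η j‖ else 0) := by
      intro j _
      by_cases hjs : j ∈ s
      · rw [if_pos hjs, if_pos hjs, norm_mul, norm_mul, RCLike.norm_conj]
        have hd : ‖deriv (fun x : ℝ => f x y) ((j : ℝ) * Real.pi)‖ ≤ M * Real.exp 1 := by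
          rw [hderivf]
          exact hderiv _
        have := mul_le_mul_of_nonneg_right hd (mul_nonneg (norm_nonneg (ξ j)) (norm_nonneg (η j)))
        calc ‖deriv (fun x : ℝ => f x y) ((j : ℝ) * Real.pi)‖ * ‖ξ j‖ * ‖η j‖
            = ‖deriv (fun x : ℝ => f x y) ((j : ℝ) * Real.pi)‖ * (‖ξ j‖ * ‖η j‖) := by ring
          _ ≤ (M * Real.exp 1) * (‖ξ j‖ * ‖η j‖) := this
      · simp [hjs]
    calc ‖∑ j ∈ t, (if j ∈ s then deriv (fun x : ℝ => f x y) ((j : ℝ) * Real.pi) * ξ j * (starRingEnd ℂ) (η j) else 0)‖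
        ≤ ∑ j ∈ t, ‖if j ∈ s then deriv (fun x : ℝ => f x y) ((j : ℝ) * Real.pi) * ξ j * (starRingEnd ℂ) (η j) else 0‖ :=
          norm_sum_le _ _
      _ ≤ ∑ j ∈ t, (M * Real.exp 1) * (if j ∈ s then ‖ξ j‖ * ‖η j‖ else 0) :=
          Finset.sum_le_sum h2
      _ = (M * Real.exp 1) * ∑ j ∈ t, (if j ∈ s then ‖ξ j‖ * ‖η j‖ else 0) := by
          rw [Finset.mul_sum]
      _ ≤ (M * Real.exp 1) * (a * b) := by
          refine mul_le_mul_of_nonneg_left ?_ (by positivity)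
          rw [Finset.sum_ite_mem]
          have hX : (0:ℝ) ≤ ∑ j ∈ t ∩ s, ‖ξ j‖ * ‖η j‖ :=
            Finset.sum_nonneg fun j _ => mul_nonneg (norm_nonneg _) (norm_nonneg _)
          have hcs := Finset.sum_mul_sq_le_sq_mul_sq (t ∩ s) (fun j => ‖ξ j‖) (fun j => ‖η j‖)
          have hsub1 : (∑ j ∈ t ∩ s, ‖ξ j‖^2) ≤ ∑ k ∈ s, ‖ξ k‖^2 :=
            Finset.sum_le_sum_of_subset_of_nonneg (Finset.inter_subset_right)
              (fun k _ _ => sq_nonneg _)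
          have hsub2 : (∑ j ∈ t ∩ s, ‖η j‖^2) ≤ ∑ j ∈ t, ‖η j‖^2 :=
            Finset.sum_le_sum_of_subset_of_nonneg (Finset.inter_subset_left)
              (fun k _ _ => sq_nonneg _)
          calc (∑ j ∈ t ∩ s, ‖ξ j‖ * ‖η j‖)
              = Real.sqrt ((∑ j ∈ t ∩ s, ‖ξ j‖ * ‖η j‖)^2) := (Real.sqrt_sq hX).symm
            _ ≤ Real.sqrt ((∑ k ∈ s, ‖ξ k‖^2) * (∑ j ∈ t, ‖η j‖^2)) := by
                refine Real.sqrt_le_sqrt ?_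
                refine hcs.trans ?_
                have h0 : (0:ℝ) ≤ ∑ j ∈ t ∩ s, ‖η j‖^2 :=
                  Finset.sum_nonneg fun j _ => sq_nonneg _
                have h0' : (0:ℝ) ≤ ∑ k ∈ s, ‖ξ k‖^2 :=
                  Finset.sum_nonneg fun j _ => sq_nonneg _
                exact mul_le_mul hsub1 hsub2 h0 h0'
            _ = a * b := Real.sqrt_mul (Finset.sum_nonneg fun j _ => sq_nonneg _) _
  -- off-diagonal bound
  set v1 : ℤ → ℂ := fun j => (starRingEnd ℂ) (G j) * η j with hv1def
  set u2 : ℤ → ℂ := fun k => G k * ξ k with hu2def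
  have hOffEq : (∑ j ∈ t, ∑ k ∈ s,
      (if j = k then 0 else (G j - G k) /
        (((j : ℝ) * Real.pi - (k : ℝ) * Real.pi : ℝ) : ℂ) * ξ k * (starRingEnd ℂ) (η j)))
      = ((Real.pi:ℂ))⁻¹ *
        ((∑ j ∈ t, ∑ k ∈ s, (if j = k then 0 else ξ k * (starRingEnd ℂ) (v1 j) / ((j:ℂ) - (k:ℂ))))
         - (∑ j ∈ t, ∑ k ∈ s, (if j = k then 0 else u2 k * (starRingEnd ℂ) (η j) / ((j:ℂ) - (k:ℂ))))) := by
    rw [← Finset.sum_sub_distrib, Finset.mul_sum]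
    refine Finset.sum_congr rfl fun j _ => ?_
    rw [← Finset.sum_sub_distrib, Finset.mul_sum]
    refine Finset.sum_congr rfl fun k _ => ?_
    by_cases h : j = k
    · simp [h]
    · rw [if_neg h, if_neg h, if_neg h]
      have hcast : ((((j:ℝ) * Real.pi - (k:ℝ) * Real.pi) : ℝ) : ℂ)
          = ((j:ℂ) - (k:ℂ)) * (Real.pi:ℂ) := by push_cast; ring
      have hjk : (j:ℂ) - (k:ℂ) ≠ 0 := by
        rw [sub_ne_zero]
        exact_mod_cast h
      have hpi : (Real.pi:ℂ) ≠ 0 := by exact_mod_cast Real.pi_ne_zero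
      rw [hcast, hv1def, hu2def]
      simp only [map_mul, Complex.conj_conj]
      field_simp
  have hS1 := hilbert_ineq s t ξ v1
  have hS2 := hilbert_ineq s t u2 η
  have hv1b : Real.sqrt (∑ j ∈ t, ‖v1 j‖^2) ≤ M * b := by
    have hle : ∀ j ∈ t, ‖v1 j‖^2 ≤ M^2 * ‖η j‖^2 := by
      intro j _
      rw [hv1def]
      simp only
      rw [norm_mul, RCLike.norm_conj, mul_pow]
      have h1 := hGM j
      have h3 := norm_nonneg (G j)
      exact mul_le_mul_of_nonneg_right (by nlinarith) (sq_nonneg _)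
    calc Real.sqrt (∑ j ∈ t, ‖v1 j‖^2)
        ≤ Real.sqrt (∑ j ∈ t, M^2 * ‖η j‖^2) := Real.sqrt_le_sqrt (Finset.sum_le_sum hle)
      _ = M * b := by
          rw [← Finset.mul_sum, Real.sqrt_mul (sq_nonneg M), Real.sqrt_sq hM.le]
  have hu2b : Real.sqrt (∑ k ∈ s, ‖u2 k‖^2) ≤ M * a := by
    have hle : ∀ k ∈ s, ‖u2 k‖^2 ≤ M^2 * ‖ξ k‖^2 := by
      intro k _
      rw [hu2def]
      simp only
      rw [norm_mul, mul_pow]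
      have h1 := hGM k
      have h3 := norm_nonneg (G k)
      exact mul_le_mul_of_nonneg_right (by nlinarith) (sq_nonneg _)
    calc Real.sqrt (∑ k ∈ s, ‖u2 k‖^2)
        ≤ Real.sqrt (∑ k ∈ s, M^2 * ‖ξ k‖^2) := Real.sqrt_le_sqrt (Finset.sum_le_sum hle)
      _ = M * a := by
          rw [← Finset.mul_sum, Real.sqrt_mul (sq_nonneg M), Real.sqrt_sq hM.le]
  have hOff : ‖∑ j ∈ t, ∑ k ∈ s,
      (if j = k then 0 else (G j - G k) /
        (((j : ℝ) * Real.pi - (k : ℝ) * Real.pi : ℝ) : ℂ) * ξ k * (starRingEnd ℂ) (η j))‖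
      ≤ 2 * M * (a * b) := by
    rw [hOffEq, norm_mul]
    have hninv : ‖((Real.pi:ℂ))⁻¹‖ = Real.pi⁻¹ := by
      rw [norm_inv, Complex.norm_real, Real.norm_eq_abs, abs_of_pos Real.pi_pos]
    rw [hninv]
    have htri : ‖(∑ j ∈ t, ∑ k ∈ s, (if j = k then 0 else ξ k * (starRingEnd ℂ) (v1 j) / ((j:ℂ) - (k:ℂ))))
        - (∑ j ∈ t, ∑ k ∈ s, (if j = k then 0 else u2 k * (starRingEnd ℂ) (η j) / ((j:ℂ) - (k:ℂ))))‖
        ≤ Real.pi * a * (M * b) + Real.pi * (M * a) * b := by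
      refine (norm_sub_le _ _).trans ?_
      refine add_le_add ?_ ?_
      · refine hS1.trans ?_
        rw [mul_assoc, mul_assoc]
        refine mul_le_mul_of_nonneg_left ?_ Real.pi_nonneg
        exact mul_le_mul_of_nonneg_left hv1b hann
      · refine hS2.trans ?_
        refine mul_le_mul_of_nonneg_right ?_ hbnn
        exact mul_le_mul_of_nonneg_left hu2b Real.pi_nonneg
    refine (mul_le_mul_of_nonneg_left htri (by positivity : (0:ℝ) ≤ Real.pi⁻¹)).trans ?_
    have hpi : Real.pi ≠ 0 := Real.pi_ne_zero
    have : Real.pi⁻¹ * (Real.pi * a * (M * b) + Real.pi * (M * a) * b) = 2 * M * (a * b) := by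
      field_simp
      ring
    rw [this]
  rw [hsumeq]
  calc ‖(∑ j ∈ t, ∑ k ∈ s,
      (if j = k then deriv (fun x : ℝ => f x y) ((j : ℝ) * Real.pi) * ξ k * (starRingEnd ℂ) (η j) else 0))
      + (∑ j ∈ t, ∑ k ∈ s,
      (if j = k then 0 else (G j - G k) /
        (((j : ℝ) * Real.pi - (k : ℝ) * Real.pi : ℝ) : ℂ) * ξ k * (starRingEnd ℂ) (η j)))‖
      ≤ (M * Real.exp 1) * (a * b) + 2 * M * (a * b) :=
        (norm_add_le _ _).trans (add_le_add hDiag hOff)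
    _ = (2 + Real.exp 1) * M * a * b := by ring
end

section
/- There is an absolute constant c > 0 with the following property. For every integer m ≥ 1 and every analytic polynomial φ(z) = Σ_{n=0}^m c_n z^n of degree at most m, there exist continuous functions u_1, …, u_{2m} and v_1, …, v_{2m} on the unit circle 𝕋 = {ζ ∈ ℂ : |ζ| = 1} such that (φ(ζ) − φ(τ))/(ζ − τ) = Σ_{n=1}^{2m} u_n(ζ)·v_n(τ) for all ζ, τ ∈ 𝕋 with ζ ≠ τ, and Σ_{n=1}^{2m} (sup_{𝕋} |u_n|)·(sup_{𝕋} |v_n|) ≤ c·m·sup_{𝕋} |φ|. In other words, the divided difference of φ has projective tensor norm in C(𝕋) ⊗̂ C(𝕋) at most c·m·‖φ‖_{C(𝕋)}. -/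
open Finset Complex

namespace DDP

noncomputable section

/-- Fejér triangle coefficient `(M-n)₊/M`. -/
def tri (M n : ℕ) : ℝ := ((M - n : ℕ) : ℝ) / M

/-- The symbol `max 0 (1 - (k+1)/(n+1))`. -/
def sig (k n : ℕ) : ℝ := max 0 (1 - ((k : ℝ) + 1) / ((n : ℝ) + 1))

/-- Second-difference coefficients. -/
def gam (k M : ℕ) : ℝ := (M : ℝ) * (sig k (M + 1) - 2 * sig k M + sig k (M - 1))

lemma sig_nonneg (k n : ℕ) : 0 ≤ sig k n := le_max_left _ _

lemma sig_le_one (k n : ℕ) : sig k n ≤ 1 := by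
  apply max_le
  · norm_num
  · have h1 : (0:ℝ) ≤ ((k : ℝ) + 1) / ((n : ℝ) + 1) := by positivity
    linarith

lemma sig_eq_zero {k n : ℕ} (h : n ≤ k) : sig k n = 0 := by
  apply max_eq_left
  have hn : (0:ℝ) < (n : ℝ) + 1 := by positivity
  rw [sub_nonpos, le_div_iff₀ hn]
  have : (n : ℝ) ≤ (k : ℝ) := by exact_mod_cast h
  linarith

lemma sig_eq {k n : ℕ} (h : k ≤ n) : sig k n = 1 - ((k : ℝ) + 1) / ((n : ℝ) + 1) := by
  apply max_eq_right
  have hn : (0:ℝ) < (n : ℝ) + 1 := by positivity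
  rw [sub_nonneg, div_le_one hn]
  have : (k : ℝ) ≤ (n : ℝ) := by exact_mod_cast h
  linarith

lemma sig_eq' {k n : ℕ} (h : k < n) : sig k n = ((n - k : ℕ) : ℝ) / ((n : ℝ) + 1) := by
  rw [sig_eq h.le]
  have hn : ((n : ℝ) + 1) ≠ 0 := by positivity
  have hcast : ((n - k : ℕ) : ℝ) = (n : ℝ) - (k : ℝ) := by
    rw [Nat.cast_sub h.le]
  rw [hcast]
  field_simp
  ring

lemma sig_add {k n : ℕ} (h : k < n) : sig k n + sig (n - 1 - k) n = 1 := by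
  have h2 : n - 1 - k < n := by omega
  rw [sig_eq' h, sig_eq' h2]
  have h3 : (n - (n - 1 - k)) = k + 1 := by omega
  rw [h3, ← add_div]
  have hn : ((n : ℝ) + 1) ≠ 0 := by positivity
  have h4 : ((n - k : ℕ) : ℝ) + ((k + 1 : ℕ) : ℝ) = (n : ℝ) + 1 := by
    push_cast [Nat.cast_sub h.le]
    ring
  rw [h4, div_self hn]

/-- Telescoping: double summation by parts. -/
lemma tel (s : ℕ → ℝ) (n : ℕ) : ∀ T, n ≤ T →
    ∑ M ∈ Ico (n + 1) (T + 1), ((M - n : ℕ) : ℝ) * (s (M + 1) - 2 * s M + s (M - 1))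
      = s n - s T + ((T - n : ℕ) : ℝ) * (s (T + 1) - s T) := by
  intro T
  induction T with
  | zero =>
    intro hT
    interval_cases n
    simp
  | succ T ih =>
    intro hT
    rcases Nat.lt_or_ge n (T + 1) with hlt | hge
    · have hnT : n ≤ T := by omega
      rw [Finset.sum_Ico_succ_top (by omega : n + 1 ≤ T + 1)]
      rw [ih hnT]
      have e1 : ((T + 1 - n : ℕ) : ℝ) = ((T - n : ℕ) : ℝ) + 1 := by
        rw [show T + 1 - n = (T - n) + 1 by omega]; push_cast; ring
      have e2 : (T + 1 - 1) = T := by omega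
      rw [e1, e2]
      ring
    · have hn : n = T + 1 := by omega
      subst hn
      simp
  
/-- Simple telescoping for decreasing differences. -/
lemma tele (h : ℕ → ℝ) (a : ℕ) : ∀ b, a ≤ b →
    ∑ M ∈ Ico a b, (h M - h (M + 1)) = h a - h b := by
  intro b
  induction b with
  | zero => intro hb; interval_cases a; simp
  | succ b ih =>
    intro hb
    rcases Nat.lt_or_ge a (b + 1) with hlt | hge
    · rw [Finset.sum_Ico_succ_top (by omega : a ≤ b), ih (by omega)]
      ring
    · have : a = b + 1 := by omega
      subst this; simp

lemma gam_eq_zero {k M : ℕ} (h : M + 1 ≤ k) : gam k M = 0 := by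
  unfold gam
  rw [sig_eq_zero (by omega), sig_eq_zero (by omega), sig_eq_zero (by omega)]
  ring

lemma gam_smooth {k M : ℕ} (h : k + 1 ≤ M) :
    gam k M = 2 * ((k : ℝ) + 1) * (1 / ((M : ℝ) + 2) - 1 / ((M : ℝ) + 1)) := by
  unfold gam
  have h1 : M - 1 + 1 = M := by omega
  have hm1 : ((M - 1 : ℕ) : ℝ) = (M : ℝ) - 1 := by
    rw [Nat.cast_sub (by omega : 1 ≤ M)]; norm_num
  rw [sig_eq (by omega : k ≤ M + 1), sig_eq (by omega : k ≤ M), sig_eq (by omega : k ≤ M - 1),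
    hm1]
  have hM0 : (M : ℝ) ≠ 0 := by
    have : 1 ≤ M := by omega
    positivity
  push_cast
  have e : (M : ℝ) - 1 + 1 = (M : ℝ) := by ring
  rw [e]
  have h2 : ((M : ℝ) + 1) ≠ 0 := by positivity
  have h3 : ((M : ℝ) + 2) ≠ 0 := by positivity
  field_simp
  ring

lemma gam_at_k {k : ℕ} (hk : 1 ≤ k) : gam k k = (k : ℝ) / ((k : ℝ) + 2) := by
  unfold gam
  rw [sig_eq_zero (le_refl k), sig_eq_zero (by omega : k - 1 ≤ k),
    sig_eq (by omega : k ≤ k + 1)]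
  push_cast
  have h3 : ((k : ℝ) + 2) ≠ 0 := by positivity
  field_simp
  try ring
  try tauto

lemma gam_total {k T : ℕ} (hkT : k + 1 ≤ T) : ∑ M ∈ Icc 1 T, |gam k M| ≤ 3 := by
  have hsplit : (∑ M ∈ Ioc 0 k, |gam k M|) + ∑ M ∈ Ioc k T, |gam k M|
      = ∑ M ∈ Ioc 0 T, |gam k M| :=
    Finset.sum_Ioc_consecutive _ (by omega) (by omega)
  have hIcc : Icc 1 T = Ioc 0 T := by
    ext x; simp only [Finset.mem_Icc, Finset.mem_Ioc]; omega
  rw [hIcc, ← hsplit]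
  have h1 : (∑ M ∈ Ioc 0 k, |gam k M|) ≤ 1 := by
    rcases Nat.eq_zero_or_pos k with hk0 | hkpos
    · subst hk0; simp
    · have : (∑ M ∈ Ioc 0 k, |gam k M|) = |gam k k| := by
        apply Finset.sum_eq_single_of_mem
        · simp [hkpos]
        · intro b hb hbk
          have hb' : b + 1 ≤ k := by
            simp only [Finset.mem_Ioc] at hb
            omega
          rw [gam_eq_zero hb', abs_zero]
      rw [this, gam_at_k hkpos, _root_.abs_of_nonneg (by positivity)]
      rw [div_le_one (by positivity)]
      linarith
  have h2 : (∑ M ∈ Ioc k T, |gam k M|) ≤ 2 := by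
    have hIoc : Ioc k T = Ico (k + 1) (T + 1) := by
      ext x; simp [Finset.mem_Ioc, Finset.mem_Ico]
    rw [hIoc]
    have heach : ∀ M ∈ Ico (k + 1) (T + 1),
        |gam k M| = 2 * ((k : ℝ) + 1) * (1 / ((M : ℝ) + 1) - 1 / ((M : ℝ) + 2)) := by
      intro M hM
      simp only [Finset.mem_Ico] at hM
      rw [gam_smooth (by omega)]
      have hpos : (0:ℝ) < 1 / ((M : ℝ) + 1) - 1 / ((M : ℝ) + 2) := by
        rw [sub_pos]
        apply div_lt_div_of_pos_left <;> [norm_num; positivity; norm_num]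
      rw [show 2 * ((k : ℝ) + 1) * (1 / ((M : ℝ) + 2) - 1 / ((M : ℝ) + 1))
          = -(2 * ((k : ℝ) + 1) * (1 / ((M : ℝ) + 1) - 1 / ((M : ℝ) + 2))) from by ring]
      rw [abs_neg, _root_.abs_of_nonneg (by positivity)]
    rw [Finset.sum_congr rfl heach]
    rw [← Finset.mul_sum]
    have hcong : ∀ M ∈ Ico (k + 1) (T + 1),
        (1 : ℝ) / ((M : ℝ) + 1) - 1 / ((M : ℝ) + 2)
          = (fun M : ℕ => 1 / ((M : ℝ) + 1)) M - (fun M : ℕ => 1 / ((M : ℝ) + 1)) (M + 1) := by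
      intro M _
      simp only
      push_cast
      ring
    rw [Finset.sum_congr rfl hcong]
    rw [tele (fun M : ℕ => 1 / ((M : ℝ) + 1)) (k + 1) (T + 1) (by omega)]
    have hA : (0:ℝ) < ((k:ℝ) + 1) + 1 := by positivity
    have hB : (0:ℝ) ≤ 1 / (((T + 1 : ℕ):ℝ) + 1) := by positivity
    have hC : (1:ℝ) / (((k + 1 : ℕ):ℝ) + 1) ≤ 1 / ((k:ℝ) + 1) := by
      apply div_le_div_of_nonneg_left (by norm_num) (by positivity)
      push_cast; linarith
    have hk1 : (0:ℝ) < (k:ℝ) + 1 := by positivity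
    calc 2 * ((k:ℝ) + 1) * (1 / (((k + 1 : ℕ):ℝ) + 1) - 1 / (((T + 1 : ℕ):ℝ) + 1))
        ≤ 2 * ((k:ℝ) + 1) * (1 / ((k:ℝ) + 1)) := by
          apply mul_le_mul_of_nonneg_left _ (by positivity)
          have := hC
          linarith
      _ = 2 := by field_simp
  linarith


lemma tri_mul {M : ℕ} (hM : 1 ≤ M) (n : ℕ) : (M : ℝ) * tri M n = ((M - n : ℕ) : ℝ) := by
  unfold tri
  have : (M : ℝ) ≠ 0 := by positivity
  field_simp

lemma tri_zero {M n : ℕ} (h : M ≤ n) : tri M n = 0 := by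
  unfold tri
  rw [Nat.sub_eq_zero_of_le h]
  simp

/-- The master identity: the symbol as a combination of triangles. -/
lemma master {k m n : ℕ} (hn : n ≤ m) (hk : k + 1 ≤ m) :
    sig k n = (∑ M ∈ Icc 1 m, gam k M * tri M n)
      + sig k m - ((m : ℝ) * (sig k (m + 1) - sig k m)) * tri m n := by
  have hm1 : 1 ≤ m := by omega
  have hstep : ∀ M ∈ Icc 1 m, gam k M * tri M n
      = ((M - n : ℕ) : ℝ) * (sig k (M + 1) - 2 * sig k M + sig k (M - 1)) := by
    intro M hM
    simp only [Finset.mem_Icc] at hM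
    unfold gam
    rw [show (M : ℝ) * (sig k (M + 1) - 2 * sig k M + sig k (M - 1)) * tri M n
        = ((M : ℝ) * tri M n) * (sig k (M + 1) - 2 * sig k M + sig k (M - 1)) from by ring,
      tri_mul hM.1]
  rw [Finset.sum_congr rfl hstep]
  have hsub : ∑ M ∈ Icc 1 m, ((M - n : ℕ) : ℝ) * (sig k (M + 1) - 2 * sig k M + sig k (M - 1))
      = ∑ M ∈ Ico (n + 1) (m + 1), ((M - n : ℕ) : ℝ) * (sig k (M + 1) - 2 * sig k M + sig k (M - 1)) := by
    symm
    apply Finset.sum_subset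
    · intro x hx
      simp only [Finset.mem_Ico] at hx
      simp only [Finset.mem_Icc]
      omega
    · intro x hx hx'
      simp only [Finset.mem_Icc] at hx
      simp only [Finset.mem_Ico] at hx'
      have : x ≤ n := by omega
      rw [Nat.sub_eq_zero_of_le this]
      simp
  rw [hsub, tel (fun n => sig k n) n m hn]
  have : (m : ℝ) * tri m n = ((m - n : ℕ) : ℝ) := tri_mul hm1 n
  rw [show ((m : ℝ) * (sig k (m + 1) - sig k m)) * tri m n
      = ((m : ℝ) * tri m n) * (sig k (m + 1) - sig k m) from by ring, this]
  ring


/-- Sum of powers of a nontrivial root of unity vanishes. -/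
lemma root_sum {x : ℂ} {N : ℕ} (hx : x ≠ 1) (h1 : x ^ N = 1) :
    ∑ l ∈ range N, x ^ l = 0 := by
  rw [geom_sum_eq hx, h1]
  simp

/-- counting lemma -/
lemma count (M n : ℕ) (N' : ℂ) :
    ∑ i ∈ range M, ∑ i' ∈ range M, (if ((i : ℤ) - (i' : ℤ) - (n : ℤ) = 0) then N' else 0)
      = N' * ((M - n : ℕ) : ℂ) := by
  have hinner : ∀ i ∈ range M,
      (∑ i' ∈ range M, (if ((i : ℤ) - (i' : ℤ) - (n : ℤ) = 0) then N' else 0))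
        = if n ≤ i then N' else 0 := by
    intro i hi
    simp only [Finset.mem_range] at hi
    by_cases hni : n ≤ i
    · have hcong : ∀ i' ∈ range M,
          (if ((i : ℤ) - (i' : ℤ) - (n : ℤ) = 0) then N' else 0)
            = if i' = i - n then N' else 0 := by
        intro i' _
        have : ((i : ℤ) - (i' : ℤ) - (n : ℤ) = 0) ↔ i' = i - n := by omega
        simp only [this]
      rw [Finset.sum_congr rfl hcong, Finset.sum_ite_eq' (range M) (i - n) (fun _ => N')]
      have : i - n ∈ range M := by simp only [Finset.mem_range]; omega
      simp [this, hni]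
    · have hcong : ∀ i' ∈ range M,
          (if ((i : ℤ) - (i' : ℤ) - (n : ℤ) = 0) then N' else 0) = 0 := by
        intro i' _
        have : ¬ ((i : ℤ) - (i' : ℤ) - (n : ℤ) = 0) := by omega
        simp only [this, if_false]
      rw [Finset.sum_congr rfl hcong]
      simp [hni]
  rw [Finset.sum_congr rfl hinner, Finset.sum_ite, Finset.sum_const, Finset.sum_const]
  have hfilter : (range M).filter (fun i => n ≤ i) = Ico n M := by
    ext x
    simp only [Finset.mem_filter, Finset.mem_range, Finset.mem_Ico]
    omega
  rw [hfilter, Nat.card_Ico]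
  simp [mul_comm]

/-- The key discrete-convolution identity. -/
lemma key {N m M : ℕ} (hM : 0 < M) (hmN : M + m < N) {ω : ℂ} (hω0 : ω ≠ 0)
    (horth : ∀ s : ℤ, s ≠ 0 → s.natAbs < N → (∑ l ∈ range N, (ω ^ s) ^ l) = 0)
    (c : ℕ → ℂ) (z : ℂ) :
    ∑ l ∈ range N, (∑ i ∈ range M, (ω ^ l) ^ i) * (∑ i' ∈ range M, ((ω⁻¹) ^ l) ^ i')
        * (∑ n ∈ range (m + 1), c n * (z * (ω⁻¹) ^ l) ^ n)
      = ((M : ℂ) * (N : ℂ)) * ∑ n ∈ range (m + 1), ((tri M n : ℝ) : ℂ) * c n * z ^ n := by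
  have collect : ∀ l i i' n : ℕ,
      (ω ^ l) ^ i * (((ω⁻¹) ^ l) ^ i' * ((ω⁻¹) ^ l) ^ n)
        = (ω ^ ((i : ℤ) - (i' : ℤ) - (n : ℤ))) ^ l := by
    intro l i i' n
    rw [← pow_mul, ← pow_mul, ← pow_mul, inv_pow, inv_pow,
      ← zpow_natCast ω (l * i), ← zpow_natCast ω (l * i'), ← zpow_natCast ω (l * n),
      ← zpow_neg, ← zpow_neg, ← zpow_add₀ hω0, ← zpow_add₀ hω0,
      ← zpow_natCast (ω ^ ((i : ℤ) - (i' : ℤ) - (n : ℤ))) l, ← zpow_mul]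
    congr 1
    push_cast
    ring
  have hterm : ∀ l, (∑ i ∈ range M, (ω ^ l) ^ i) * (∑ i' ∈ range M, ((ω⁻¹) ^ l) ^ i')
        * (∑ n ∈ range (m + 1), c n * (z * (ω⁻¹) ^ l) ^ n)
      = ∑ i ∈ range M, ∑ i' ∈ range M, ∑ n ∈ range (m + 1),
          c n * z ^ n * (ω ^ ((i : ℤ) - (i' : ℤ) - (n : ℤ))) ^ l := by
    intro l
    rw [Finset.sum_mul_sum, Finset.sum_mul]
    apply Finset.sum_congr rfl
    intro i _
    rw [Finset.sum_mul]
    apply Finset.sum_congr rfl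
    intro i' _
    rw [Finset.mul_sum]
    apply Finset.sum_congr rfl
    intro n _
    rw [mul_pow, ← collect l i i' n]
    ring
  have hlsum : ∀ (i i' n : ℕ), i ∈ range M → i' ∈ range M → n ∈ range (m + 1) →
      (∑ l ∈ range N, c n * z ^ n * (ω ^ ((i : ℤ) - (i' : ℤ) - (n : ℤ))) ^ l)
        = c n * z ^ n * (if ((i : ℤ) - (i' : ℤ) - (n : ℤ) = 0) then (N : ℂ) else 0) := by
    intro i i' n hi hi' hn
    simp only [Finset.mem_range] at hi hi' hn
    rw [← Finset.mul_sum]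
    congr 1
    set s : ℤ := (i : ℤ) - (i' : ℤ) - (n : ℤ) with hs
    by_cases hs0 : s = 0
    · rw [hs0]
      simp
    · rw [horth s hs0 (by omega), if_neg hs0]
  calc ∑ l ∈ range N, (∑ i ∈ range M, (ω ^ l) ^ i) * (∑ i' ∈ range M, ((ω⁻¹) ^ l) ^ i')
        * (∑ n ∈ range (m + 1), c n * (z * (ω⁻¹) ^ l) ^ n)
      = ∑ l ∈ range N, ∑ i ∈ range M, ∑ i' ∈ range M, ∑ n ∈ range (m + 1),
          c n * z ^ n * (ω ^ ((i : ℤ) - (i' : ℤ) - (n : ℤ))) ^ l :=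
        Finset.sum_congr rfl (fun l _ => hterm l)
    _ = ∑ i ∈ range M, ∑ l ∈ range N, ∑ i' ∈ range M, ∑ n ∈ range (m + 1),
          c n * z ^ n * (ω ^ ((i : ℤ) - (i' : ℤ) - (n : ℤ))) ^ l := Finset.sum_comm
    _ = ∑ i ∈ range M, ∑ i' ∈ range M, ∑ l ∈ range N, ∑ n ∈ range (m + 1),
          c n * z ^ n * (ω ^ ((i : ℤ) - (i' : ℤ) - (n : ℤ))) ^ l :=
        Finset.sum_congr rfl (fun i _ => Finset.sum_comm)
    _ = ∑ i ∈ range M, ∑ i' ∈ range M, ∑ n ∈ range (m + 1), ∑ l ∈ range N,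
          c n * z ^ n * (ω ^ ((i : ℤ) - (i' : ℤ) - (n : ℤ))) ^ l :=
        Finset.sum_congr rfl (fun i _ => Finset.sum_congr rfl (fun i' _ => Finset.sum_comm))
    _ = ∑ i ∈ range M, ∑ i' ∈ range M, ∑ n ∈ range (m + 1),
          c n * z ^ n * (if ((i : ℤ) - (i' : ℤ) - (n : ℤ) = 0) then (N : ℂ) else 0) :=
        Finset.sum_congr rfl (fun i hi => Finset.sum_congr rfl (fun i' hi' =>
          Finset.sum_congr rfl (fun n hn => hlsum i i' n hi hi' hn)))
    _ = ∑ i ∈ range M, ∑ n ∈ range (m + 1), ∑ i' ∈ range M,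
          c n * z ^ n * (if ((i : ℤ) - (i' : ℤ) - (n : ℤ) = 0) then (N : ℂ) else 0) :=
        Finset.sum_congr rfl (fun i _ => Finset.sum_comm)
    _ = ∑ n ∈ range (m + 1), ∑ i ∈ range M, ∑ i' ∈ range M,
          c n * z ^ n * (if ((i : ℤ) - (i' : ℤ) - (n : ℤ) = 0) then (N : ℂ) else 0) :=
        Finset.sum_comm
    _ = ∑ n ∈ range (m + 1), c n * z ^ n * ((N : ℂ) * ((M - n : ℕ) : ℂ)) := by
        apply Finset.sum_congr rfl
        intro n _
        rw [show (∑ i ∈ range M, ∑ i' ∈ range M,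
            c n * z ^ n * (if ((i : ℤ) - (i' : ℤ) - (n : ℤ) = 0) then (N : ℂ) else 0))
          = c n * z ^ n * (∑ i ∈ range M, ∑ i' ∈ range M,
            (if ((i : ℤ) - (i' : ℤ) - (n : ℤ) = 0) then (N : ℂ) else 0)) from by
            rw [Finset.mul_sum]
            apply Finset.sum_congr rfl
            intro i _
            rw [Finset.mul_sum]]
        rw [count M n (N : ℂ)]
    _ = ((M : ℂ) * (N : ℂ)) * ∑ n ∈ range (m + 1), ((tri M n : ℝ) : ℂ) * c n * z ^ n := by
        rw [Finset.mul_sum]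
        apply Finset.sum_congr rfl
        intro n _
        have htri : ((tri M n : ℝ) : ℂ) = ((M - n : ℕ) : ℂ) / (M : ℂ) := by
          unfold tri
          push_cast
          ring
        rw [htri]
        have hM0 : (M : ℂ) ≠ 0 := by
          exact_mod_cast Nat.cast_ne_zero.mpr (by omega)
        field_simp


/-- The Fejér-mean bound. -/
lemma fej {m M : ℕ} (hM : 0 < M) (c : ℕ → ℂ) (Q : ℝ)
    (hQ : ∀ w : ℂ, ‖w‖ = 1 → ‖∑ n ∈ range (m + 1), c n * w ^ n‖ ≤ Q)
    (z : ℂ) (hz : ‖z‖ = 1) :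
    ‖∑ n ∈ range (m + 1), ((tri M n : ℝ) : ℂ) * c n * z ^ n‖ ≤ Q := by
  set N : ℕ := M + m + 1 with hN
  have hNpos : 0 < N := by omega
  set θ : ℝ := 2 * Real.pi / N with hθ
  set ω : ℂ := Complex.exp ((θ : ℂ) * Complex.I) with hω
  have hω0 : ω ≠ 0 := Complex.exp_ne_zero _
  have hNR : ((N : ℝ)) ≠ 0 := by positivity
  -- ω^s = exp(s θ I)
  have hωs : ∀ s : ℤ, ω ^ s = Complex.exp ((s : ℂ) * ((θ : ℂ) * Complex.I)) := by
    intro s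
    rw [hω, ← Complex.exp_int_mul]
  have hNθ : (N : ℝ) * θ = 2 * Real.pi := by
    rw [hθ]
    field_simp
  -- x^N = 1
  have hxN : ∀ s : ℤ, (ω ^ s) ^ N = 1 := by
    intro s
    rw [hωs s, ← Complex.exp_nat_mul]
    have h1 : (N : ℂ) * (θ : ℂ) = ((2 * Real.pi : ℝ) : ℂ) := by
      rw [← Complex.ofReal_natCast, ← Complex.ofReal_mul, hNθ]
    have harg : (N : ℂ) * ((s : ℂ) * ((θ : ℂ) * Complex.I))
        = (s : ℂ) * (2 * (Real.pi : ℂ) * Complex.I) := by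
      calc (N : ℂ) * ((s : ℂ) * ((θ : ℂ) * Complex.I))
          = (s : ℂ) * (((N : ℂ) * (θ : ℂ)) * Complex.I) := by ring
        _ = (s : ℂ) * (((2 * Real.pi : ℝ) : ℂ) * Complex.I) := by rw [h1]
        _ = (s : ℂ) * (2 * (Real.pi : ℂ) * Complex.I) := by push_cast; ring
    rw [harg, Complex.exp_int_mul, Complex.exp_two_pi_mul_I, one_zpow]
  -- nontriviality
  have horth : ∀ s : ℤ, s ≠ 0 → s.natAbs < N → (∑ l ∈ range N, (ω ^ s) ^ l) = 0 := by
    intro s hs0 hsN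
    apply root_sum _ (hxN s)
    rw [hωs s]
    intro hcon
    rw [Complex.exp_eq_one_iff] at hcon
    obtain ⟨n, hn⟩ := hcon
    have hpi : (Real.pi : ℝ) ≠ 0 := Real.pi_ne_zero
    have hI : (Complex.I : ℂ) ≠ 0 := Complex.I_ne_zero
    -- from hn : s * (θ * I) = n * (2π I), deduce s = n N
    have h2 : ((s : ℝ) * θ : ℝ) = ((n : ℝ) * (2 * Real.pi) : ℝ) := by
      have := hn
      rw [show ((s : ℂ) * ((θ : ℂ) * Complex.I)) = (((s : ℝ) * θ : ℝ) : ℂ) * Complex.I from by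
        push_cast; ring] at this
      rw [show ((n : ℂ) * (2 * (Real.pi : ℂ) * Complex.I)) = (((n : ℝ) * (2 * Real.pi) : ℝ) : ℂ) * Complex.I from by
        push_cast; ring] at this
      have := mul_right_cancel₀ hI this
      exact_mod_cast this
    have hθne : θ ≠ 0 := by
      rw [hθ]
      positivity
    have e1 : (s : ℝ) * θ = ((n : ℝ) * N) * θ := by
      rw [h2, ← hNθ]
      ring
    have h3 : (s : ℝ) = (n : ℝ) * N := mul_right_cancel₀ hθne e1
    have h4 : s = n * N := by exact_mod_cast h3
    have hn0 : n ≠ 0 := by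
      intro hcon
      rw [hcon] at h4
      simp at h4
      exact hs0 h4
    have h5 : s.natAbs = n.natAbs * N := by
      simp [h4, Int.natAbs_mul]
    have h6 : N ≤ n.natAbs * N :=
      Nat.le_mul_of_pos_left N (Int.natAbs_pos.mpr hn0)
    omega
  -- conj ω = ω⁻¹
  have hconj : (starRingEnd ℂ) ω = ω⁻¹ := by
    rw [hω, ← Complex.exp_conj, ← Complex.exp_neg]
    congr 1
    simp [map_mul, Complex.conj_ofReal, Complex.conj_I]
  have hωnorm : ‖ω‖ = 1 := by
    rw [hω, Complex.norm_exp]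
    simp
  -- D and E
  set D : ℕ → ℂ := fun l => ∑ i ∈ range M, (ω ^ l) ^ i with hD
  set E : ℕ → ℂ := fun l => ∑ i ∈ range M, ((ω⁻¹) ^ l) ^ i with hE
  have hEconj : ∀ l, E l = (starRingEnd ℂ) (D l) := by
    intro l
    rw [hD, hE]
    simp only [map_sum, map_pow, hconj]
  -- sum of |D|²
  have hDD : ∑ l ∈ range N, (Complex.normSq (D l) : ℝ) = (M : ℝ) * N := by
    have h1 := key (N := N) (m := 0) hM (by omega) hω0 horth (fun _ => (1 : ℂ)) 1
    simp only [zero_add, range_one, Finset.sum_singleton, pow_zero, mul_one, one_mul] at h1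
    have htri0 : ((tri M 0 : ℝ) : ℂ) = 1 := by
      unfold tri
      rw [Nat.sub_zero]
      have : (M : ℝ) ≠ 0 := by positivity
      rw [div_self this]
      simp
    rw [htri0, mul_one] at h1
    have h2 : ∑ l ∈ range N, D l * E l = ((M : ℂ) * N) := h1
    have h3 : ∀ l, D l * E l = ((Complex.normSq (D l) : ℝ) : ℂ) := by
      intro l
      rw [hEconj l, Complex.mul_conj]
    rw [Finset.sum_congr rfl (fun l _ => h3 l)] at h2
    rw [← Complex.ofReal_sum] at h2
    exact_mod_cast h2
  -- main instance of key
  have hmain := key (N := N) (m := m) hM (by omega) hω0 horth c z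
  have hQ0 : 0 ≤ Q := le_trans (norm_nonneg _) (hQ 1 (by simp))
  -- norm bound
  have hbound : ‖∑ l ∈ range N, D l * E l * (∑ n ∈ range (m + 1), c n * (z * (ω⁻¹) ^ l) ^ n)‖
      ≤ (M : ℝ) * N * Q := by
    calc ‖∑ l ∈ range N, D l * E l * (∑ n ∈ range (m + 1), c n * (z * (ω⁻¹) ^ l) ^ n)‖
        ≤ ∑ l ∈ range N, ‖D l * E l * (∑ n ∈ range (m + 1), c n * (z * (ω⁻¹) ^ l) ^ n)‖ :=
          norm_sum_le _ _
      _ ≤ ∑ l ∈ range N, Complex.normSq (D l) * Q := by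
          apply Finset.sum_le_sum
          intro l _
          rw [norm_mul, norm_mul, hEconj l]
          have hc : ‖(starRingEnd ℂ) (D l)‖ = ‖D l‖ := RCLike.norm_conj _
          rw [hc]
          have hzω : ‖z * (ω⁻¹) ^ l‖ = 1 := by
            rw [norm_mul, norm_pow, norm_inv, hωnorm, hz]
            simp
          have hf := hQ _ hzω
          have hDsq : ‖D l‖ * ‖D l‖ = Complex.normSq (D l) := by
            rw [Complex.normSq_eq_norm_sq]
            ring
          calc ‖D l‖ * ‖D l‖ * ‖∑ n ∈ range (m + 1), c n * (z * (ω⁻¹) ^ l) ^ n‖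
              ≤ ‖D l‖ * ‖D l‖ * Q := by
                apply mul_le_mul_of_nonneg_left hf (by positivity)
            _ = Complex.normSq (D l) * Q := by rw [hDsq]
      _ = ((M : ℝ) * N) * Q := by
          rw [← Finset.sum_mul, hDD]
  rw [hmain] at hbound
  rw [norm_mul] at hbound
  have hMN : ‖(M : ℂ) * (N : ℂ)‖ = (M : ℝ) * N := by
    rw [norm_mul, Complex.norm_natCast, Complex.norm_natCast]
  rw [hMN] at hbound
  have hMNpos : (0 : ℝ) < (M : ℝ) * N := by positivity
  calc ‖∑ n ∈ range (m + 1), ((tri M n : ℝ) : ℂ) * c n * z ^ n‖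
      = ((M : ℝ) * N * ‖∑ n ∈ range (m + 1), ((tri M n : ℝ) : ℂ) * c n * z ^ n‖) / ((M : ℝ) * N) := by
        field_simp
    _ ≤ ((M : ℝ) * N * Q) / ((M : ℝ) * N) := by
        gcongr
    _ = Q := by field_simp

/-- The multiplier norm bound : `‖Σ σ(k,n) c_n z^n‖ ≤ 5 Q`. -/
lemma mult_bound {m k : ℕ} (hk : k < m) (c : ℕ → ℂ) (Q : ℝ)
    (hQ : ∀ w : ℂ, ‖w‖ = 1 → ‖∑ n ∈ range (m + 1), c n * w ^ n‖ ≤ Q)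
    (z : ℂ) (hz : ‖z‖ = 1) :
    ‖∑ n ∈ range (m + 1), ((sig k n : ℝ) : ℂ) * c n * z ^ n‖ ≤ 5 * Q := by
  have hm1 : 1 ≤ m := by omega
  have hQ0 : 0 ≤ Q := le_trans (norm_nonneg _) (hQ 1 (by simp))
  set A : ℕ → ℂ := fun M => ∑ n ∈ range (m + 1), ((tri M n : ℝ) : ℂ) * c n * z ^ n with hA
  set F : ℂ := ∑ n ∈ range (m + 1), c n * z ^ n with hF
  -- the splitting identity
  have hsplit : ∑ n ∈ range (m + 1), ((sig k n : ℝ) : ℂ) * c n * z ^ n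
      = (∑ M ∈ Icc 1 m, ((gam k M : ℝ) : ℂ) * A M) + ((sig k m : ℝ) : ℂ) * F
        - (((m : ℝ) * (sig k (m + 1) - sig k m) : ℝ) : ℂ) * A m := by
    symm
    have e1 : ∑ M ∈ Icc 1 m, ((gam k M : ℝ) : ℂ) * A M
        = ∑ n ∈ range (m + 1), ∑ M ∈ Icc 1 m,
            ((gam k M : ℝ) : ℂ) * (((tri M n : ℝ) : ℂ) * c n * z ^ n) := by
      rw [Finset.sum_comm]
      apply Finset.sum_congr rfl
      intro M _
      rw [hA, Finset.mul_sum]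
    have e2 : ((sig k m : ℝ) : ℂ) * F = ∑ n ∈ range (m + 1),
        ((sig k m : ℝ) : ℂ) * (c n * z ^ n) := by
      rw [hF, Finset.mul_sum]
    have e3 : (((m : ℝ) * (sig k (m + 1) - sig k m) : ℝ) : ℂ) * A m
        = ∑ n ∈ range (m + 1),
            (((m : ℝ) * (sig k (m + 1) - sig k m) : ℝ) : ℂ)
              * (((tri m n : ℝ) : ℂ) * c n * z ^ n) := by
      rw [hA, Finset.mul_sum]
    rw [e1, e2, e3, ← Finset.sum_add_distrib, ← Finset.sum_sub_distrib]
    apply Finset.sum_congr rfl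
    intro n hn
    simp only [Finset.mem_range] at hn
    have hmas := master (k := k) (m := m) (n := n) (by omega) (by omega)
    have e0 : ((sig k n : ℝ) : ℂ)
        = (((∑ M ∈ Icc 1 m, gam k M * tri M n) + sig k m
          - ((m : ℝ) * (sig k (m + 1) - sig k m)) * tri m n : ℝ) : ℂ) := by
      rw [← hmas]
    have e4 : ∑ M ∈ Icc 1 m, ((gam k M : ℝ) : ℂ) * (((tri M n : ℝ) : ℂ) * c n * z ^ n)
        = ((∑ M ∈ Icc 1 m, gam k M * tri M n : ℝ) : ℂ) * (c n * z ^ n) := by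
      rw [Complex.ofReal_sum, Finset.sum_mul]
      apply Finset.sum_congr rfl
      intro M _
      push_cast
      ring
    rw [e4, e0]
    push_cast
    ring
  rw [hsplit]
  -- now bound
  have hAle : ∀ M ∈ Icc 1 m, ‖A M‖ ≤ Q := by
    intro M hM
    simp only [Finset.mem_Icc] at hM
    exact fej (by omega) c Q hQ z hz
  have hAm : ‖A m‖ ≤ Q := fej (by omega) c Q hQ z hz
  have hFle : ‖F‖ ≤ Q := hQ z hz
  have hsig1 : |sig k m| ≤ 1 := by
    rw [_root_.abs_of_nonneg (sig_nonneg k m)]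
    exact sig_le_one k m
  have hdle : |(m : ℝ) * (sig k (m + 1) - sig k m)| ≤ 1 := by
    have hkm : (k : ℝ) + 1 ≤ (m : ℝ) := by
      have : k + 1 ≤ m := hk
      exact_mod_cast this
    have hm0 : (0:ℝ) ≤ (m : ℝ) := Nat.cast_nonneg m
    have h2 : (0:ℝ) ≤ 1 / ((m:ℝ) + 1) - 1 / ((m:ℝ) + 2) := by
      rw [sub_nonneg]
      exact one_div_le_one_div_of_le (by positivity) (by linarith)
    have e1 : (m : ℝ) * (sig k (m + 1) - sig k m)
        = (m:ℝ) * (((k:ℝ) + 1) * (1 / ((m:ℝ) + 1) - 1 / ((m:ℝ) + 2))) := by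
      rw [sig_eq (show k ≤ m + 1 by omega), sig_eq (show k ≤ m by omega)]
      push_cast
      field_simp
      ring
    rw [e1, _root_.abs_of_nonneg (mul_nonneg hm0 (mul_nonneg (by positivity) h2))]
    have h3 : 1 / ((m:ℝ) + 1) - 1 / ((m:ℝ) + 2) = 1 / (((m:ℝ) + 1) * ((m:ℝ) + 2)) := by
      field_simp
      ring
    rw [h3, show (m:ℝ) * (((k:ℝ) + 1) * (1 / (((m:ℝ) + 1) * ((m:ℝ) + 2))))
        = ((m:ℝ) * ((k:ℝ) + 1)) / (((m:ℝ) + 1) * ((m:ℝ) + 2)) from by ring,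
      div_le_one (by positivity)]
    nlinarith [hkm, hm0]
  have hnr : ∀ x : ℝ, ‖((x : ℝ) : ℂ)‖ = |x| := by
    intro x
    rw [Complex.norm_real, Real.norm_eq_abs]
  calc ‖(∑ M ∈ Icc 1 m, ((gam k M : ℝ) : ℂ) * A M) + ((sig k m : ℝ) : ℂ) * F
          - (((m : ℝ) * (sig k (m + 1) - sig k m) : ℝ) : ℂ) * A m‖
      ≤ ‖(∑ M ∈ Icc 1 m, ((gam k M : ℝ) : ℂ) * A M) + ((sig k m : ℝ) : ℂ) * F‖
        + ‖(((m : ℝ) * (sig k (m + 1) - sig k m) : ℝ) : ℂ) * A m‖ := norm_sub_le _ _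
    _ ≤ (‖∑ M ∈ Icc 1 m, ((gam k M : ℝ) : ℂ) * A M‖ + ‖((sig k m : ℝ) : ℂ) * F‖)
        + ‖(((m : ℝ) * (sig k (m + 1) - sig k m) : ℝ) : ℂ) * A m‖ := by
          gcongr
          exact norm_add_le _ _
    _ ≤ (3 * Q + 1 * Q) + 1 * Q := by
        gcongr ?_ + ?_ + ?_
        · calc ‖∑ M ∈ Icc 1 m, ((gam k M : ℝ) : ℂ) * A M‖
              ≤ ∑ M ∈ Icc 1 m, ‖((gam k M : ℝ) : ℂ) * A M‖ := norm_sum_le _ _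
            _ ≤ ∑ M ∈ Icc 1 m, |gam k M| * Q := by
                apply Finset.sum_le_sum
                intro M hM
                rw [norm_mul, hnr]
                exact mul_le_mul_of_nonneg_left (hAle M hM) (abs_nonneg _)
            _ = (∑ M ∈ Icc 1 m, |gam k M|) * Q := by rw [Finset.sum_mul]
            _ ≤ 3 * Q := by
                apply mul_le_mul_of_nonneg_right _ hQ0
                exact gam_total (by omega)
        · rw [norm_mul, hnr]
          calc |sig k m| * ‖F‖ ≤ 1 * Q := by
                apply mul_le_mul hsig1 hFle (norm_nonneg _) (by norm_num)
            _ = 1 * Q := by ring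
        · rw [norm_mul, hnr]
          exact mul_le_mul hdle hAm (norm_nonneg _) (by norm_num)
    _ = 5 * Q := by ring

/-- inverse power collapse -/
lemma invpow {ζ : ℂ} (hζ : ζ ≠ 0) {k n : ℕ} (hkn : k < n) :
    ζ⁻¹ ^ (k + 1) * ζ ^ n = ζ ^ (n - 1 - k) := by
  have h1 : ζ ^ n = ζ ^ (k + 1) * ζ ^ (n - 1 - k) := by
    rw [← pow_add]
    congr 1
    omega
  rw [h1, ← mul_assoc, ← mul_pow, inv_mul_cancel₀ hζ, one_pow, one_mul]

/-- the per-frequency identity -/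
lemma per_n {n m : ℕ} (hnm : n ≤ m) {ζ τ : ℂ} (hζ : ζ ≠ 0) (hτ : τ ≠ 0) :
    (∑ k ∈ range m, ((sig k n : ℝ) : ℂ)
        * (ζ⁻¹ ^ (k + 1) * ζ ^ n * τ ^ k + ζ ^ k * (τ⁻¹ ^ (k + 1) * τ ^ n))) * (ζ - τ)
      = ζ ^ n - τ ^ n := by
  have hsub : ∑ k ∈ range m, ((sig k n : ℝ) : ℂ)
        * (ζ⁻¹ ^ (k + 1) * ζ ^ n * τ ^ k + ζ ^ k * (τ⁻¹ ^ (k + 1) * τ ^ n))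
      = ∑ k ∈ range n, ((sig k n : ℝ) : ℂ)
        * (ζ⁻¹ ^ (k + 1) * ζ ^ n * τ ^ k + ζ ^ k * (τ⁻¹ ^ (k + 1) * τ ^ n)) := by
    symm
    apply Finset.sum_subset (Finset.range_subset_range.mpr hnm)
    intro x hx hx'
    simp only [Finset.mem_range] at hx hx'
    rw [sig_eq_zero (by omega)]
    simp
  rw [hsub]
  have hstep : ∀ k ∈ range n, ((sig k n : ℝ) : ℂ)
        * (ζ⁻¹ ^ (k + 1) * ζ ^ n * τ ^ k + ζ ^ k * (τ⁻¹ ^ (k + 1) * τ ^ n))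
      = ((sig k n : ℝ) : ℂ) * (ζ ^ (n - 1 - k) * τ ^ k)
        + ((sig k n : ℝ) : ℂ) * (ζ ^ k * τ ^ (n - 1 - k)) := by
    intro k hk
    simp only [Finset.mem_range] at hk
    rw [invpow hζ hk, invpow hτ hk]
    ring
  rw [Finset.sum_congr rfl hstep, Finset.sum_add_distrib]
  have hrefl : ∑ k ∈ range n, ((sig k n : ℝ) : ℂ) * (ζ ^ k * τ ^ (n - 1 - k))
      = ∑ k ∈ range n, ((sig (n - 1 - k) n : ℝ) : ℂ) * (ζ ^ (n - 1 - k) * τ ^ k) := by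
    rw [← Finset.sum_range_reflect (fun k => ((sig k n : ℝ) : ℂ) * (ζ ^ k * τ ^ (n - 1 - k))) n]
    apply Finset.sum_congr rfl
    intro k hk
    simp only [Finset.mem_range] at hk
    have : n - 1 - (n - 1 - k) = k := by omega
    rw [this]
  rw [hrefl, ← Finset.sum_add_distrib]
  have hcomb : ∀ k ∈ range n, ((sig k n : ℝ) : ℂ) * (ζ ^ (n - 1 - k) * τ ^ k)
        + ((sig (n - 1 - k) n : ℝ) : ℂ) * (ζ ^ (n - 1 - k) * τ ^ k)
      = ζ ^ (n - 1 - k) * τ ^ k := by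
    intro k hk
    simp only [Finset.mem_range] at hk
    have := sig_add (show k < n from hk)
    have hone : ((sig k n : ℝ) : ℂ) + ((sig (n - 1 - k) n : ℝ) : ℂ) = 1 := by
      rw [← Complex.ofReal_add, this, Complex.ofReal_one]
    calc ((sig k n : ℝ) : ℂ) * (ζ ^ (n - 1 - k) * τ ^ k)
          + ((sig (n - 1 - k) n : ℝ) : ℂ) * (ζ ^ (n - 1 - k) * τ ^ k)
        = (((sig k n : ℝ) : ℂ) + ((sig (n - 1 - k) n : ℝ) : ℂ)) * (ζ ^ (n - 1 - k) * τ ^ k) := by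
          ring
      _ = ζ ^ (n - 1 - k) * τ ^ k := by rw [hone, one_mul]
  rw [Finset.sum_congr rfl hcomb]
  have hswap : ∑ k ∈ range n, ζ ^ (n - 1 - k) * τ ^ k
      = ∑ k ∈ range n, ζ ^ k * τ ^ (n - 1 - k) := by
    rw [← Finset.sum_range_reflect (fun k => ζ ^ k * τ ^ (n - 1 - k)) n]
    apply Finset.sum_congr rfl
    intro k hk
    simp only [Finset.mem_range] at hk
    have : n - 1 - (n - 1 - k) = k := by omega
    rw [this]
  rw [hswap, geom_sum₂_mul]

/-- The full representation identity. -/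
lemma repr_eq (m : ℕ) (c : ℕ → ℂ) {ζ τ : ℂ} (hζ : ζ ≠ 0) (hτ : τ ≠ 0) :
    (∑ k ∈ range m,
        (ζ⁻¹ ^ (k + 1) * (∑ n ∈ range (m + 1), ((sig k n : ℝ) : ℂ) * c n * ζ ^ n) * τ ^ k
          + ζ ^ k * (τ⁻¹ ^ (k + 1) * (∑ n ∈ range (m + 1), ((sig k n : ℝ) : ℂ) * c n * τ ^ n))))
        * (ζ - τ)
      = (∑ n ∈ range (m + 1), c n * ζ ^ n) - ∑ n ∈ range (m + 1), c n * τ ^ n := by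
  have h1 : ∀ k ∈ range m,
      ζ⁻¹ ^ (k + 1) * (∑ n ∈ range (m + 1), ((sig k n : ℝ) : ℂ) * c n * ζ ^ n) * τ ^ k
        + ζ ^ k * (τ⁻¹ ^ (k + 1) * (∑ n ∈ range (m + 1), ((sig k n : ℝ) : ℂ) * c n * τ ^ n))
      = ∑ n ∈ range (m + 1), ((sig k n : ℝ) : ℂ) * c n
          * (ζ⁻¹ ^ (k + 1) * ζ ^ n * τ ^ k + ζ ^ k * (τ⁻¹ ^ (k + 1) * τ ^ n)) := by
    intro k _
    rw [Finset.mul_sum, Finset.sum_mul, Finset.mul_sum, Finset.mul_sum,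
      ← Finset.sum_add_distrib]
    apply Finset.sum_congr rfl
    intro n _
    ring
  rw [Finset.sum_congr rfl h1, Finset.sum_comm, Finset.sum_mul]
  have h2 : ∀ n ∈ range (m + 1),
      (∑ k ∈ range m, ((sig k n : ℝ) : ℂ) * c n
          * (ζ⁻¹ ^ (k + 1) * ζ ^ n * τ ^ k + ζ ^ k * (τ⁻¹ ^ (k + 1) * τ ^ n))) * (ζ - τ)
        = c n * ζ ^ n - c n * τ ^ n := by
    intro n hn
    simp only [Finset.mem_range] at hn
    have e1 : (∑ k ∈ range m, ((sig k n : ℝ) : ℂ) * c n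
          * (ζ⁻¹ ^ (k + 1) * ζ ^ n * τ ^ k + ζ ^ k * (τ⁻¹ ^ (k + 1) * τ ^ n)))
        = c n * (∑ k ∈ range m, ((sig k n : ℝ) : ℂ)
          * (ζ⁻¹ ^ (k + 1) * ζ ^ n * τ ^ k + ζ ^ k * (τ⁻¹ ^ (k + 1) * τ ^ n))) := by
      rw [Finset.mul_sum]
      apply Finset.sum_congr rfl
      intro k _
      ring
    rw [e1, mul_assoc, per_n (by omega : n ≤ m) hζ hτ, mul_sub]
  rw [Finset.sum_congr rfl h2, Finset.sum_sub_distrib]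

end

end DDP

open Finset Complex DDP in
/-- The divided difference of an analytic polynomial `φ` of degree at most `m ≥ 1` has
projective tensor norm in `C(𝕋) ⊗̂ C(𝕋)` at most `c·m·‖φ‖_{C(𝕋)}`: there exist continuous
functions `u₁,…,u_{2m}` and `v₁,…,v_{2m}` on the unit circle with
`(φ(ζ) − φ(τ))/(ζ − τ) = Σ_n u_n(ζ)·v_n(τ)` for `ζ ≠ τ` on `𝕋` and
`Σ_n (sup|u_n|)·(sup|v_n|) ≤ c·m·sup|φ|`. -/
theorem divided_difference_projective_tensor_bound :
    ∃ c : ℝ, 0 < c ∧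
      ∀ (m : ℕ), 1 ≤ m →
      ∀ (φ : Polynomial ℂ), φ.natDegree ≤ m →
      ∃ u v : Fin (2 * m) → ℂ → ℂ,
        (∀ n, ContinuousOn (u n) (Metric.sphere (0 : ℂ) 1)) ∧
        (∀ n, ContinuousOn (v n) (Metric.sphere (0 : ℂ) 1)) ∧
        (∀ ζ ∈ Metric.sphere (0 : ℂ) 1, ∀ τ ∈ Metric.sphere (0 : ℂ) 1, ζ ≠ τ →
          (φ.eval ζ - φ.eval τ) / (ζ - τ) = ∑ n : Fin (2 * m), u n ζ * v n τ) ∧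
        ∑ n : Fin (2 * m),
            (⨆ ζ : Metric.sphere (0 : ℂ) 1, ‖u n (ζ : ℂ)‖) *
              (⨆ ζ : Metric.sphere (0 : ℂ) 1, ‖v n (ζ : ℂ)‖)
          ≤ c * m * ⨆ ζ : Metric.sphere (0 : ℂ) 1, ‖φ.eval (ζ : ℂ)‖ := by
  classical
  refine ⟨10, by norm_num, ?_⟩
  intro m hm φ hdeg
  set c : ℕ → ℂ := fun n => φ.coeff n with hc
  have heval : ∀ z : ℂ, φ.eval z = ∑ n ∈ range (m + 1), c n * z ^ n := fun z =>
    Polynomial.eval_eq_sum_range' (lt_of_le_of_lt hdeg (Nat.lt_succ_self m)) z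
  haveI hne : Nonempty (Metric.sphere (0 : ℂ) 1) :=
    ⟨⟨1, mem_sphere_zero_iff_norm.mpr norm_one⟩⟩
  set Q : ℝ := ⨆ ζ : Metric.sphere (0 : ℂ) 1, ‖φ.eval (ζ : ℂ)‖ with hQdef
  have hBdd : BddAbove (Set.range fun ζ : Metric.sphere (0 : ℂ) 1 => ‖φ.eval (ζ : ℂ)‖) := by
    obtain ⟨C, hC⟩ := (isCompact_sphere (0 : ℂ) 1).exists_bound_of_continuousOn
      ((Polynomial.continuous φ).continuousOn)
    refine ⟨C, ?_⟩
    rintro r ⟨ζ, rfl⟩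
    exact hC ζ ζ.2
  have hQ : ∀ w : ℂ, ‖w‖ = 1 → ‖∑ n ∈ range (m + 1), c n * w ^ n‖ ≤ Q := by
    intro w hw
    rw [← heval w]
    exact le_ciSup hBdd (⟨w, mem_sphere_zero_iff_norm.mpr hw⟩ : Metric.sphere (0 : ℂ) 1)
  have hQ0 : 0 ≤ Q := le_trans (norm_nonneg _) (hQ 1 (by simp))
  -- the multiplier pieces
  set g : ℕ → ℂ → ℂ := fun k w => ∑ n ∈ range (m + 1), ((sig k n : ℝ) : ℂ) * c n * w ^ n
    with hg
  have hgcont : ∀ k, Continuous (g k) := by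
    intro k
    apply continuous_finset_sum
    intro n _
    exact (continuous_const.mul (continuous_pow n))
  have hgbound : ∀ k < m, ∀ z : ℂ, ‖z‖ = 1 → ‖g k z‖ ≤ 5 * Q := by
    intro k hk z hz
    exact mult_bound hk c Q hQ z hz
  set U : ℕ → ℂ → ℂ := fun i ζ => if i < m then ζ⁻¹ ^ (i + 1) * g i ζ else ζ ^ (i - m)
    with hU
  set V : ℕ → ℂ → ℂ := fun i τ => if i < m then τ ^ i else τ⁻¹ ^ ((i - m) + 1) * g (i - m) τ
    with hV
  have hsphere0 : ∀ z : ℂ, z ∈ Metric.sphere (0 : ℂ) 1 → z ≠ 0 := by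
    intro z hz hz0
    rw [mem_sphere_zero_iff_norm, hz0] at hz
    simp at hz
  have hnorm1 : ∀ z : ℂ, z ∈ Metric.sphere (0 : ℂ) 1 → ‖z‖ = 1 := fun z hz =>
    mem_sphere_zero_iff_norm.mp hz
  have hinvcont : ∀ j : ℕ, ContinuousOn (fun ζ : ℂ => ζ⁻¹ ^ j) (Metric.sphere (0 : ℂ) 1) :=
    fun j => (continuousOn_id.inv₀ hsphere0).pow j
  refine ⟨fun i => U (i : ℕ), fun i => V (i : ℕ), ?_, ?_, ?_, ?_⟩
  · -- continuity of u
    intro i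
    by_cases h : (i : ℕ) < m
    · simp only [hU, if_pos h]
      exact (hinvcont _).mul (hgcont _).continuousOn
    · simp only [hU, if_neg h]
      exact (continuous_pow _).continuousOn
  · -- continuity of v
    intro i
    by_cases h : (i : ℕ) < m
    · simp only [hV, if_pos h]
      exact (continuous_pow _).continuousOn
    · simp only [hV, if_neg h]
      exact (hinvcont _).mul (hgcont _).continuousOn
  · -- the representation identity
    intro ζ hζ τ hτ hζτ
    have hζ0 : ζ ≠ 0 := hsphere0 ζ hζ
    have hτ0 : τ ≠ 0 := hsphere0 τ hτ
    rw [heval ζ, heval τ, div_eq_iff (sub_ne_zero.mpr hζτ), ← repr_eq m c hζ0 hτ0]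
    congr 1
    have hsum : ∑ i : Fin (2 * m), U (i : ℕ) ζ * V (i : ℕ) τ
        = ∑ i ∈ range (2 * m), U i ζ * V i τ :=
      Fin.sum_univ_eq_sum_range (fun i => U i ζ * V i τ) (2 * m)
    rw [hsum]
    have hsplit : ∑ i ∈ range (2 * m), U i ζ * V i τ
        = (∑ i ∈ range m, U i ζ * V i τ) + ∑ i ∈ Ico m (2 * m), U i ζ * V i τ := by
      rw [Finset.range_eq_Ico, ← Finset.sum_Ico_consecutive _ (Nat.zero_le m) (by omega),
        ← Finset.range_eq_Ico]
    rw [hsplit]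
    have h1 : ∑ i ∈ range m, U i ζ * V i τ
        = ∑ k ∈ range m, ζ⁻¹ ^ (k + 1) * g k ζ * τ ^ k := by
      apply Finset.sum_congr rfl
      intro i hi
      simp only [Finset.mem_range] at hi
      simp only [hU, hV, if_pos hi]
    have h2 : ∑ i ∈ Ico m (2 * m), U i ζ * V i τ
        = ∑ k ∈ range m, ζ ^ k * (τ⁻¹ ^ (k + 1) * g k τ) := by
      rw [Finset.sum_Ico_eq_sum_range]
      have : 2 * m - m = m := by omega
      rw [this]
      apply Finset.sum_congr rfl
      intro j hj
      simp only [Finset.mem_range] at hj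
      have hnot : ¬ (m + j < m) := by omega
      have hsub : m + j - m = j := by omega
      simp only [hU, hV, if_neg hnot, hsub]
    rw [h1, h2, ← Finset.sum_add_distrib]
  · -- the norm bound
    have hVone : ∀ i : ℕ, i < m → (⨆ τ : Metric.sphere (0 : ℂ) 1, ‖V i (τ : ℂ)‖) = 1 := by
      intro i hi
      have : ∀ τ : Metric.sphere (0 : ℂ) 1, ‖V i (τ : ℂ)‖ = 1 := by
        intro τ
        simp only [hV, if_pos hi]
        rw [norm_pow, hnorm1 τ τ.2, one_pow]
      rw [iSup_congr this]
      exact ciSup_const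
    have hUone : ∀ i : ℕ, ¬ (i < m) → (⨆ ζ : Metric.sphere (0 : ℂ) 1, ‖U i (ζ : ℂ)‖) = 1 := by
      intro i hi
      have : ∀ ζ : Metric.sphere (0 : ℂ) 1, ‖U i (ζ : ℂ)‖ = 1 := by
        intro ζ
        simp only [hU, if_neg hi]
        rw [norm_pow, hnorm1 ζ ζ.2, one_pow]
      rw [iSup_congr this]
      exact ciSup_const
    have hUb : ∀ i : ℕ, i < m → (⨆ ζ : Metric.sphere (0 : ℂ) 1, ‖U i (ζ : ℂ)‖) ≤ 5 * Q := by
      intro i hi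
      apply ciSup_le
      intro ζ
      simp only [hU, if_pos hi]
      rw [norm_mul, norm_pow, norm_inv, hnorm1 ζ ζ.2]
      simp only [inv_one, one_pow, one_mul]
      exact hgbound i hi ζ (hnorm1 ζ ζ.2)
    have hVb : ∀ i : ℕ, ¬ (i < m) → i < 2 * m →
        (⨆ τ : Metric.sphere (0 : ℂ) 1, ‖V i (τ : ℂ)‖) ≤ 5 * Q := by
      intro i hi hi2
      apply ciSup_le
      intro τ
      simp only [hV, if_neg hi]
      rw [norm_mul, norm_pow, norm_inv, hnorm1 τ τ.2]
      simp only [inv_one, one_pow, one_mul]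
      exact hgbound (i - m) (by omega) τ (hnorm1 τ τ.2)
    have hterm : ∀ i : Fin (2 * m),
        (⨆ ζ : Metric.sphere (0 : ℂ) 1, ‖U (i : ℕ) (ζ : ℂ)‖)
          * (⨆ τ : Metric.sphere (0 : ℂ) 1, ‖V (i : ℕ) (τ : ℂ)‖) ≤ 5 * Q := by
      intro i
      by_cases h : (i : ℕ) < m
      · rw [hVone _ h, mul_one]
        exact hUb _ h
      · rw [hUone _ h, one_mul]
        exact hVb _ h i.2
    calc ∑ i : Fin (2 * m),
          (⨆ ζ : Metric.sphere (0 : ℂ) 1, ‖U (i : ℕ) (ζ : ℂ)‖)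
            * (⨆ τ : Metric.sphere (0 : ℂ) 1, ‖V (i : ℕ) (τ : ℂ)‖)
        ≤ ∑ _i : Fin (2 * m), 5 * Q := Finset.sum_le_sum (fun i _ => hterm i)
      _ = (2 * m : ℕ) * (5 * Q) := by
          rw [Finset.sum_const, Finset.card_univ, Fintype.card_fin, nsmul_eq_mul]
      _ = 10 * m * Q := by push_cast; ring
end
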